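/- arXiv:2404.15479 — 10 statements merged into one kernel-verified Lean document; each statement's English description precedes it below -/
import Mathlib

section
/- In the Baumslag–Solitar group BS(1,2) = ⟨a, t ∣ t a t⁻¹ = a²⟩, the elements t and a·t freely generate a free submonoid of rank 2; that is, the monoid homomorphism from the free monoid on two generators sending the generators to t and a·t respectively is injective. -/
/-- The single defining relator of `BS(1,2) = ⟨a, t ∣ t a t⁻¹ = a²⟩`, with
generator `0` playing the role of `a` and generator `1` the role of `t`. -/
def BS12rels : Set (FreeGroup (Fin 2)) :=
  {FreeGroup.of 1 * FreeGroup.of 0 * (FreeGroup.of 1)⁻¹ * ((FreeGroup.of 0) ^ 2)⁻¹}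

/-- The affine map `x ↦ x + 1` as a permutation of `ℚ` (image of `a`). -/
def BSa : Equiv.Perm ℚ :=
  ⟨fun x => x + 1, fun x => x - 1, fun x => by ring, fun x => by ring⟩

/-- The affine map `x ↦ 2 * x` as a permutation of `ℚ` (image of `t`). -/
def BSt : Equiv.Perm ℚ :=
  ⟨fun x => 2 * x, fun x => x / 2, fun x => by dsimp; ring, fun x => by dsimp; ring⟩

def BSF : Fin 2 → Equiv.Perm ℚ := fun i => if i = 0 then BSa else BSt

lemma BS_rel : ∀ r ∈ BS12rels, FreeGroup.lift BSF r = 1 := by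
  intro r hr
  rcases hr with rfl
  simp only [map_mul, map_inv, map_pow, FreeGroup.lift_apply_of]
  have h0 : BSF 0 = BSa := rfl
  have h1 : BSF 1 = BSt := rfl
  rw [h0, h1]
  ext x
  simp [BSa, BSt, Equiv.Perm.mul_apply, sq, mul_inv_rev, Equiv.Perm.inv_def,
    Equiv.symm, Equiv.trans]
  ring

/-- The images of the two monoid generators: `x ↦ 2x` and `x ↦ 2x + 1`. -/
def BSg : Fin 2 → Equiv.Perm ℚ := fun i => if i = 0 then BSt else BSa * BSt

lemma BSg_apply (i : Fin 2) (x : ℚ) : BSg i x = 2 * x + (i : ℕ) := by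
  fin_cases i <;>
    simp [BSg, BSa, BSt, Equiv.Perm.mul_apply, Equiv.trans] <;> ring

lemma BS_natval (l : List (Fin 2)) :
    ∃ m : ℕ, 1 ≤ m ∧ ((l.map BSg).prod : Equiv.Perm ℚ) 1 = (m : ℚ) := by
  induction l with
  | nil => exact ⟨1, le_refl 1, by simp⟩
  | cons i t ih =>
    obtain ⟨m, hm1, hm⟩ := ih
    refine ⟨2 * m + (i : ℕ), by omega, ?_⟩
    rw [List.map_cons, List.prod_cons, Equiv.Perm.mul_apply, hm, BSg_apply]
    push_cast
    ring

lemma BS_list_inj : ∀ l1 l2 : List (Fin 2),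
    (l1.map BSg).prod = (l2.map BSg).prod → l1 = l2 := by
  intro l1
  induction l1 with
  | nil =>
    intro l2 h
    cases l2 with
    | nil => rfl
    | cons j t =>
      exfalso
      obtain ⟨m, hm1, hm⟩ := BS_natval t
      have := congrArg (fun p : Equiv.Perm ℚ => p 1) h
      simp only [List.map_nil, List.prod_nil, Equiv.Perm.one_apply, List.map_cons,
        List.prod_cons, Equiv.Perm.mul_apply, hm, BSg_apply] at this
      have h2 : ((1 : ℕ) : ℚ) = ((2 * m + (j : ℕ) : ℕ) : ℚ) := by push_cast; linarith
      have := Nat.cast_injective h2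
      omega
  | cons i t1 ih =>
    intro l2 h
    cases l2 with
    | nil =>
      exfalso
      obtain ⟨m, hm1, hm⟩ := BS_natval t1
      have := congrArg (fun p : Equiv.Perm ℚ => p 1) h
      simp only [List.map_nil, List.prod_nil, Equiv.Perm.one_apply, List.map_cons,
        List.prod_cons, Equiv.Perm.mul_apply, hm, BSg_apply] at this
      have h2 : ((2 * m + (i : ℕ) : ℕ) : ℚ) = ((1 : ℕ) : ℚ) := by push_cast; linarith
      have := Nat.cast_injective h2
      omega
    | cons j t2 =>
      obtain ⟨m1, hm11, hm1⟩ := BS_natval t1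
      obtain ⟨m2, hm21, hm2⟩ := BS_natval t2
      simp only [List.map_cons, List.prod_cons] at h
      have hval := congrArg (fun p : Equiv.Perm ℚ => p 1) h
      simp only [Equiv.Perm.mul_apply, hm1, hm2, BSg_apply] at hval
      have h2 : ((2 * m1 + (i : ℕ) : ℕ) : ℚ) = ((2 * m2 + (j : ℕ) : ℕ) : ℚ) := by
        push_cast; linarith
      have h3 := Nat.cast_injective h2
      have hi := i.isLt
      have hj := j.isLt
      have hij : i = j := Fin.ext (by omega)
      subst hij
      have ht : (t1.map BSg).prod = (t2.map BSg).prod := mul_left_cancel h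
      rw [ih t2 ht]

/-- In `BS(1,2)`, the elements `t` and `a * t` freely generate a free submonoid of rank 2. -/
theorem bs12_free_submonoid :
    Function.Injective
      (FreeMonoid.lift
        (fun i : Fin 2 =>
          if i = 0 then (PresentedGroup.of 1 : PresentedGroup BS12rels)
          else PresentedGroup.of 0 * PresentedGroup.of 1) :
        FreeMonoid (Fin 2) →* PresentedGroup BS12rels) := by
  intro w1 w2 h
  set φ := PresentedGroup.toGroup BS_rel with hφ
  have key : ∀ w : FreeMonoid (Fin 2),
      φ ((FreeMonoid.lift
        (fun i : Fin 2 =>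
          if i = 0 then (PresentedGroup.of 1 : PresentedGroup BS12rels)
          else PresentedGroup.of 0 * PresentedGroup.of 1)) w)
        = ((FreeMonoid.toList w).map BSg).prod := by
    intro w
    rw [FreeMonoid.lift_apply, ← List.prod_map_hom]
    congr 1
    apply List.map_congr_left
    intro i _
    fin_cases i <;>
      simp [Function.comp, BSg, BSF, PresentedGroup.toGroup.of, hφ]
  have h2 : ((FreeMonoid.toList w1).map BSg).prod = ((FreeMonoid.toList w2).map BSg).prod := by
    rw [← key, ← key, h]
  have := BS_list_inj _ _ h2
  exact FreeMonoid.toList.injective this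
end

section
/- Let A(P₄) = ⟨α, β, γ, δ ∣ αβ = βα, βγ = γβ, γδ = δγ⟩ and let Φ: A(P₄) → ℤ be the homomorphism sending each generator to 1. Then the kernel of Φ is a free group of rank 3, freely generated by α⁻¹β, β⁻¹γ, and γ⁻¹δ. -/
open scoped commutatorElement

/-- The defining relators of the right-angled Artin group `A(P₄)` on the path
`α₀ — α₁ — α₂ — α₃`: the three commutators of consecutive generators. -/
def P4rels : Set (FreeGroup (Fin 4)) :=
  {⁅FreeGroup.of (0 : Fin 4), FreeGroup.of 1⁆, ⁅FreeGroup.of (1 : Fin 4), FreeGroup.of 2⁆,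
    ⁅FreeGroup.of (2 : Fin 4), FreeGroup.of 3⁆}

/-- The right-angled Artin group on the path with 4 vertices. -/
abbrev AP4 : Type := PresentedGroup P4rels

namespace BBtest
open FreeGroup SemidirectProduct Multiplicative

abbrev F3 := FreeGroup (Fin 3)
local notation "g" i => (FreeGroup.of (i : Fin 3) : F3)

def vf : Fin 3 → F3 := ![g 0, (g 0)⁻¹ * (g 1) * (g 0), ((g 1) * (g 0))⁻¹ * (g 2) * ((g 1) * (g 0))]
def vg : Fin 3 → F3 := ![g 0, (g 0) * (g 1) * (g 0)⁻¹, ((g 0) * (g 1)) * (g 2) * ((g 0) * (g 1))⁻¹]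

def θf : F3 →* F3 := FreeGroup.lift vf
def θg : F3 →* F3 := FreeGroup.lift vg

@[simp] lemma θf0 : θf (g 0) = g 0 := by simp [θf, vf]
@[simp] lemma θf1 : θf (g 1) = (g 0)⁻¹ * (g 1) * (g 0) := by simp [θf, vf]
@[simp] lemma θf2 : θf (g 2) = ((g 1) * (g 0))⁻¹ * (g 2) * ((g 1) * (g 0)) := by simp [θf, vf]
@[simp] lemma θg0 : θg (g 0) = g 0 := by simp [θg, vg]
@[simp] lemma θg1 : θg (g 1) = (g 0) * (g 1) * (g 0)⁻¹ := by simp [θg, vg]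
@[simp] lemma θg2 : θg (g 2) = ((g 0) * (g 1)) * (g 2) * ((g 0) * (g 1))⁻¹ := by simp [θg, vg]

lemma hgf : θg.comp θf = MonoidHom.id F3 := by
  apply FreeGroup.ext_hom
  intro i
  fin_cases i <;> · rw [MonoidHom.comp_apply, MonoidHom.id_apply] ; simp <;> group

lemma hfg : θf.comp θg = MonoidHom.id F3 := by
  apply FreeGroup.ext_hom
  intro i
  fin_cases i <;> · rw [MonoidHom.comp_apply, MonoidHom.id_apply] ; simp <;> group

def θ : F3 ≃* F3 := MonoidHom.toMulEquiv θf θg hgf hfg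

def φ : Multiplicative ℤ →* MulAut F3 := zpowersHom _ θ

abbrev G := SemidirectProduct F3 (Multiplicative ℤ) φ

def t : Multiplicative ℤ := ofAdd 1

lemma hφt : φ t = θ := by simp [φ, t, zpowersHom_apply]

lemma hφt' (n : F3) : φ t n = θf n := by rw [hφt]; rfl

lemma hφtinv (n : F3) : φ t⁻¹ n = θg n := by rw [_root_.map_inv, hφt]; rfl

def pfx : Fin 4 → F3 := ![1, g 0, (g 1) * (g 0), (g 2) * (g 1) * (g 0)]

def fG : Fin 4 → G := fun i => inl (pfx i) * inr t

lemma key (a b : F3) : (inl a * inr t : G) * (inl b * inr t) = inl (a * θf b) * inr (t * t) := by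
  have h : (inr t : G) * inl b = inl (φ t b) * inr t := by
    rw [inl_aut]; simp [mul_assoc]
  calc (inl a * inr t : G) * (inl b * inr t) = inl a * (inr t * inl b) * inr t := by group
    _ = inl a * (inl (φ t b) * inr t) * inr t := by rw [h]
    _ = inl (a * θf b) * inr (t * t) := by rw [hφt' b, _root_.map_mul inl, _root_.map_mul inr]; group

lemma key2 (a b : F3) : ((inl a * inr t : G))⁻¹ * (inl b * inr t) = inl (θg (a⁻¹ * b)) := by
  have h : (inr t⁻¹ : G) * inl (a⁻¹ * b) * inr t = inl (φ t⁻¹ (a⁻¹ * b)) := by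
    rw [_root_.map_inv φ t, inl_aut_inv]
  calc ((inl a * inr t : G))⁻¹ * (inl b * inr t)
      = inr t⁻¹ * inl (a⁻¹ * b) * inr t := by rw [_root_.map_mul inl]; simp [mul_assoc, _root_.map_inv]
    _ = inl (φ t⁻¹ (a⁻¹ * b)) := h
    _ = inl (θg (a⁻¹ * b)) := by rw [hφtinv]


def a (i : Fin 4) : AP4 := PresentedGroup.of i

lemma relkey : ∀ r ∈ P4rels, (PresentedGroup.mk P4rels r : AP4) = 1 := fun r hr =>
  (QuotientGroup.eq_one_iff r).2 (Subgroup.subset_normalClosure hr)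

lemma commAP (i j : Fin 4) (h : ⁅FreeGroup.of i, FreeGroup.of j⁆ ∈ P4rels) :
    a i * a j = a j * a i := by
  have := relkey _ h
  rw [map_commutatorElement] at this
  exact commutatorElement_eq_one_iff_mul_comm.1 this

lemma c01 : a 0 * a 1 = a 1 * a 0 := commAP 0 1 (by simp [P4rels])
lemma c12 : a 1 * a 2 = a 2 * a 1 := commAP 1 2 (by simp [P4rels])
lemma c23 : a 2 * a 3 = a 3 * a 2 := commAP 2 3 (by simp [P4rels])


lemma liftfG_of (i : Fin 4) : FreeGroup.lift fG (FreeGroup.of i) = inl (pfx i) * inr t := by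
  simp [fG]

lemma pf01 : pfx 0 * θf (pfx 1) = pfx 1 * θf (pfx 0) := by
  simp [pfx]

lemma pf12 : pfx 1 * θf (pfx 2) = pfx 2 * θf (pfx 1) := by
  simp [pfx, _root_.map_mul]; group

lemma pf23 : pfx 2 * θf (pfx 3) = pfx 3 * θf (pfx 2) := by
  simp [pfx, _root_.map_mul]; group

lemma hrels : ∀ r ∈ P4rels, FreeGroup.lift fG r = 1 := by
  intro r hr
  have key' : ∀ i j : Fin 4, pfx i * θf (pfx j) = pfx j * θf (pfx i) →
      FreeGroup.lift fG ⁅FreeGroup.of i, FreeGroup.of j⁆ = 1 := by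
    intro i j hij
    rw [map_commutatorElement, commutatorElement_eq_one_iff_mul_comm, liftfG_of, liftfG_of,
      key, key, hij]
  rcases hr with h | h | h <;> subst h
  · exact key' 0 1 pf01
  · exact key' 1 2 pf12
  · exact key' 2 3 pf23

def F : AP4 →* G := PresentedGroup.toGroup hrels

lemma F_of (i : Fin 4) : F (a i) = inl (pfx i) * inr t := PresentedGroup.toGroup.of hrels


def Lh : F3 →* AP4 := FreeGroup.lift (fun i : Fin 3 =>
  (PresentedGroup.of (i.castSucc) : AP4)⁻¹ * PresentedGroup.of i.succ)

lemma Lg0 : Lh (g 0) = (a 0)⁻¹ * a 1 := by simp [Lh]; rfl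
lemma Lg1 : Lh (g 1) = (a 1)⁻¹ * a 2 := by simp [Lh]; rfl
lemma Lg2 : Lh (g 2) = (a 2)⁻¹ * a 3 := by simp [Lh]; rfl

lemma hc01 : Commute (a 0) (a 1) := c01
lemma hc12 : Commute (a 1) (a 2) := c12
lemma hc23 : Commute (a 2) (a 3) := c23

/-- reduction: `u⁻¹ * w * u = c * w * c⁻¹` from `Commute (u * c) w`. -/
lemma conj_trick {H : Type*} [Group H] {u w c : H} (h : Commute (u * c) w) :
    u⁻¹ * w * u = c * w * c⁻¹ := by
  calc u⁻¹ * w * u = u⁻¹ * (w * (u * c)) * c⁻¹ := by group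
    _ = u⁻¹ * ((u * c) * w) * c⁻¹ := by rw [h.eq]
    _ = c * w * c⁻¹ := by group

lemma aux1 : (a 0)⁻¹ * a 1 * a 0 = a 1 := by rw [mul_assoc, ← c01]; group

lemma Lθ0 : Lh (θf (g 0)) = a 0 * Lh (g 0) * (a 0)⁻¹ := by
  rw [θf0, Lg0]
  have h : Commute (a 0) ((a 0)⁻¹ * a 1) :=
    ((Commute.refl (a 0)).inv_right).mul_right hc01
  calc (a 0)⁻¹ * a 1 = a 0 * ((a 0)⁻¹ * a 1) * (a 0)⁻¹ := by rw [h.eq]; group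

lemma Lθ1 : Lh (θf (g 1)) = a 0 * Lh (g 1) * (a 0)⁻¹ := by
  rw [θf1, _root_.map_mul, _root_.map_mul, _root_.map_inv, Lg0, Lg1]
  have huc : ((a 0)⁻¹ * a 1) * a 0 = a 1 := aux1
  have h : Commute (((a 0)⁻¹ * a 1) * a 0) ((a 1)⁻¹ * a 2) := by
    rw [huc]; exact ((Commute.refl (a 1)).inv_right).mul_right hc12
  exact conj_trick h

lemma Lθ2 : Lh (θf (g 2)) = a 0 * Lh (g 2) * (a 0)⁻¹ := by
  rw [θf2, _root_.map_mul, _root_.map_mul, _root_.map_inv, _root_.map_mul, Lg0, Lg1, Lg2]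
  have huc : (((a 1)⁻¹ * a 2) * ((a 0)⁻¹ * a 1)) * a 0 = a 2 := by
    rw [mul_assoc, aux1, mul_assoc, ← c12]; group
  have h : Commute ((((a 1)⁻¹ * a 2) * ((a 0)⁻¹ * a 1)) * a 0) ((a 2)⁻¹ * a 3) := by
    rw [huc]; exact ((Commute.refl (a 2)).inv_right).mul_right hc23
  exact conj_trick h

lemma conj_base : ∀ n : F3, Lh (θf n) = a 0 * Lh n * (a 0)⁻¹ := by
  intro n
  have h : Lh.comp θf = (MulAut.conj (a 0)).toMonoidHom.comp Lh := by
    apply FreeGroup.ext_hom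
    intro i
    fin_cases i
    · simpa using Lθ0
    · simpa using Lθ1
    · simpa using Lθ2
  simpa using DFunLike.congr_fun h n


lemma θ_apply (n : F3) : θ n = θf n := rfl
lemma θ_symm_apply (n : F3) : θ.symm n = θg n := rfl

lemma θfθg (n : F3) : θf (θg n) = n := by simpa using DFunLike.congr_fun hfg n
lemma θgθf (n : F3) : θg (θf n) = n := by simpa using DFunLike.congr_fun hgf n

lemma conj_base_inv (n : F3) : Lh (θg n) = (a 0)⁻¹ * Lh n * a 0 := by
  have h := conj_base (θg n)
  rw [θfθg] at h
  rw [h]; group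

def f₂ : Multiplicative ℤ →* AP4 := zpowersHom _ (a 0)

lemma f₂t : f₂ t = a 0 := by simp [f₂, t, zpowersHom_apply]

lemma conj_pow : ∀ (k : ℤ) (n : F3), Lh ((θ ^ k) n) = (a 0) ^ k * Lh n * ((a 0) ^ k)⁻¹ := by
  intro k
  induction k using Int.induction_on with
  | zero => intro n; simp
  | succ i ih =>
      intro n
      have h1 : (θ ^ ((i : ℤ) + 1)) n = (θ ^ (i : ℤ)) (θf n) := by
        rw [zpow_add_one]; rfl
      rw [h1, ih (θf n), conj_base n, zpow_add_one]; group
  | pred i ih =>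
      intro n
      have h1 : (θ ^ (-(i : ℤ) - 1)) n = (θ ^ (-(i : ℤ))) (θg n) := by
        rw [zpow_sub_one]; rfl
      rw [h1, ih (θg n), conj_base_inv n, zpow_sub_one]; group

lemma conj_all (gz : Multiplicative ℤ) (n : F3) :
    Lh (φ gz n) = f₂ gz * Lh n * (f₂ gz)⁻¹ := by
  have h1 : φ gz = θ ^ gz.toAdd := by simp [φ, zpowersHom_apply]
  have h2 : f₂ gz = (a 0) ^ gz.toAdd := by simp [f₂, zpowersHom_apply]
  rw [h1, h2]
  exact conj_pow gz.toAdd n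

lemma hcond : ∀ gz : Multiplicative ℤ,
    Lh.comp (φ gz).toMonoidHom = (MulAut.conj (f₂ gz)).toMonoidHom.comp Lh := by
  intro gz
  apply MonoidHom.ext
  intro n
  simpa [MulAut.conj_apply] using conj_all gz n

def B : G →* AP4 := SemidirectProduct.lift Lh f₂ hcond

lemma B_inl (n : F3) : B (inl n) = Lh n := lift_inl Lh f₂ hcond n
lemma B_inr (gz : Multiplicative ℤ) : B (inr gz) = f₂ gz := lift_inr Lh f₂ hcond gz

lemma aux2 : (a 1)⁻¹ * a 2 * a 1 = a 2 := by rw [mul_assoc, ← c12]; group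
lemma aux3 : (a 2)⁻¹ * a 3 * a 2 = a 3 := by rw [mul_assoc, ← c23]; group

lemma hBF : B.comp F = MonoidHom.id AP4 := by
  apply PresentedGroup.ext
  intro i
  show B (F (a i)) = a i
  rw [F_of, _root_.map_mul, B_inl, B_inr, f₂t]
  fin_cases i
  · show Lh (pfx 0) * a 0 = a 0
    simp [pfx]
  · show Lh (pfx 1) * a 0 = a 1
    have : pfx 1 = (g 0) := by simp [pfx]
    rw [this, Lg0, aux1]
  · show Lh (pfx 2) * a 0 = a 2
    have : pfx 2 = (g 1) * (g 0) := by simp [pfx]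
    rw [this, _root_.map_mul, Lg0, Lg1, mul_assoc, aux1, aux2]
  · show Lh (pfx 3) * a 0 = a 3
    have hp : pfx 3 = (g 2) * (g 1) * (g 0) := by simp [pfx]
    calc Lh (pfx 3) * a 0
        = ((a 2)⁻¹ * a 3) * (((a 1)⁻¹ * a 2) * ((a 0)⁻¹ * a 1 * a 0)) := by
          rw [hp, _root_.map_mul, _root_.map_mul, Lg0, Lg1, Lg2]; group
      _ = ((a 2)⁻¹ * a 3) * ((a 1)⁻¹ * a 2 * a 1) := by rw [aux1]
      _ = (a 2)⁻¹ * a 3 * a 2 := by rw [aux2]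
      _ = a 3 := aux3


lemma hFB : F.comp B = MonoidHom.id G := by
  apply SemidirectProduct.hom_ext
  · apply FreeGroup.ext_hom
    intro i
    show F (B (inl (FreeGroup.of i))) = inl (FreeGroup.of i)
    rw [B_inl]
    fin_cases i
    · show F (Lh (g 0)) = inl (g 0)
      rw [Lg0, _root_.map_mul, _root_.map_inv, F_of, F_of, key2, inl_inj]
      simp [pfx]
    · show F (Lh (g 1)) = inl (g 1)
      rw [Lg1, _root_.map_mul, _root_.map_inv, F_of, F_of, key2, inl_inj]
      simp [pfx, _root_.map_mul, _root_.map_inv]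
    · show F (Lh (g 2)) = inl (g 2)
      rw [Lg2, _root_.map_mul, _root_.map_inv, F_of, F_of, key2, inl_inj]
      simp [pfx, _root_.map_mul, _root_.map_inv]
      group
  · apply MonoidHom.ext_mint
    show F (B (inr (ofAdd 1))) = inr (ofAdd 1)
    rw [B_inr]
    have h1 : f₂ (ofAdd 1) = a 0 := f₂t
    rw [h1, F_of]
    have h2 : pfx 0 = 1 := by simp [pfx]
    rw [h2]
    simp [t]

theorem main (Φ : AP4 →* Multiplicative ℤ)
    (hΦ : ∀ i : Fin 4, Φ (PresentedGroup.of i) = Multiplicative.ofAdd 1) :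
    Function.Injective
      (FreeGroup.lift (fun i : Fin 3 =>
        (PresentedGroup.of (i.castSucc) : AP4)⁻¹ * PresentedGroup.of i.succ)) ∧
    (FreeGroup.lift (fun i : Fin 3 =>
        (PresentedGroup.of (i.castSucc) : AP4)⁻¹ * PresentedGroup.of i.succ)).range = Φ.ker := by
  have hFBfun : ∀ z : G, F (B z) = z := fun z => DFunLike.congr_fun hFB z
  have hBFfun : ∀ y : AP4, B (F y) = y := fun y => DFunLike.congr_fun hBF y
  have hΦF : ∀ y : AP4, Φ y = SemidirectProduct.rightHom (F y) := by
    have h : Φ = SemidirectProduct.rightHom.comp F := by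
      apply PresentedGroup.ext
      intro i
      rw [hΦ i]
      show (Multiplicative.ofAdd 1 : Multiplicative ℤ) = SemidirectProduct.rightHom (F (a i))
      rw [F_of, _root_.map_mul, rightHom_inl, rightHom_inr, one_mul]
      rfl
    intro y; rw [h]; rfl
  constructor
  · intro w w' hww
    have h1 : F (Lh w) = inl w := by
      have h2 := hFBfun (inl w); rwa [B_inl] at h2
    have h1' : F (Lh w') = inl w' := by
      have h2 := hFBfun (inl w'); rwa [B_inl] at h2
    have h3 : (inl w : G) = inl w' := by
      rw [← h1, ← h1']; exact congrArg F hww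
    exact inl_injective h3
  · ext x
    constructor
    · rintro ⟨w, rfl⟩
      show Φ (Lh w) = 1
      rw [hΦF]
      have h1 : F (Lh w) = inl w := by
        have h2 := hFBfun (inl w); rwa [B_inl] at h2
      rw [h1, rightHom_inl]
    · intro hx
      have hx1 : Φ x = 1 := hx
      have h2 : SemidirectProduct.rightHom (F x) = 1 := by rw [← hΦF]; exact hx1
      have h3 : F x ∈ (inl : F3 →* G).range := by
        rw [range_inl_eq_ker_rightHom]; exact h2
      obtain ⟨w, hw⟩ := h3
      refine ⟨w, ?_⟩
      show Lh w = x
      have h4 := congrArg B hw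
      rw [B_inl] at h4
      exact h4.trans (hBFfun x)

end BBtest

/-- If `Φ : A(P₄) → ℤ` sends every standard generator to `1`, then its kernel
(the Bestvina–Brady subgroup) is free of rank 3, freely generated by
`α⁻¹β`, `β⁻¹γ`, `γ⁻¹δ`: the homomorphism from the free group of rank `3`
sending the `i`-th basis element to `(PresentedGroup.of i)⁻¹ * PresentedGroup.of (i+1)`
is injective, and its range is exactly `ker Φ`. -/
theorem bestvinaBrady_AP4_free (Φ : AP4 →* Multiplicative ℤ)
    (hΦ : ∀ i : Fin 4, Φ (PresentedGroup.of i) = Multiplicative.ofAdd 1) :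
    Function.Injective
      (FreeGroup.lift (fun i : Fin 3 =>
        (PresentedGroup.of (i.castSucc) : AP4)⁻¹ * PresentedGroup.of i.succ)) ∧
    (FreeGroup.lift (fun i : Fin 3 =>
        (PresentedGroup.of (i.castSucc) : AP4)⁻¹ * PresentedGroup.of i.succ)).range = Φ.ker := BBtest.main Φ hΦ
end

section
/- Let φ: A(P₄) → G be a group homomorphism from the right-angled Artin group A(P₄) = ⟨α, β, γ, δ ∣ αβ = βα, βγ = γβ, γδ = δγ⟩ to an arbitrary group G. Then φ is injective if and only if φ(α⁻¹β), φ(β⁻¹γ), and φ(γ⁻¹δ) freely generate a free subgroup of rank 3 in G. -/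
open scoped commutatorElement

namespace AP4Aux

open FreeGroup SemidirectProduct

abbrev F3 : Type := FreeGroup (Fin 3)

/-! ### Free group combinatorics -/

section Words

variable {α : Type*} [DecidableEq α]

lemma toWord_single_mul (x : α × Bool) (w : FreeGroup α)
    (h : ∀ p ∈ w.toWord.head?, ¬(x.1 = p.1 ∧ x.2 = !p.2)) :
    (FreeGroup.mk [x] * w).toWord = x :: w.toWord := by
  conv_lhs => rw [← mk_toWord (x := w), mul_mk]
  rw [List.singleton_append, toWord_mk, reduce.cons, reduce_toWord]
  cases hL : w.toWord with
  | nil => rfl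
  | cons hd tl =>
    show (if x.1 = hd.1 ∧ x.2 = !hd.2 then tl else x :: hd :: tl) = x :: hd :: tl
    rw [if_neg]
    exact h hd (by rw [hL]; rfl)

lemma invRev_concat (M : List (α × Bool)) (z : α × Bool) :
    invRev (M ++ [z]) = (z.1, !z.2) :: invRev M := by
  simp [invRev]

lemma invRev_cons (z : α × Bool) (M : List (α × Bool)) :
    invRev (z :: M) = invRev M ++ [(z.1, !z.2)] := by
  simp [invRev]

lemma head_of_commute {w : FreeGroup α} {x : α} (hw : w ≠ 1)
    (h : Commute w (FreeGroup.of x)) : ∃ b tl, w.toWord = (x, b) :: tl := by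
  have hL : w.toWord ≠ [] := fun hnil => hw (toWord_eq_nil_iff.mp hnil)
  cases hcons : w.toWord with
  | nil => exact absurd hcons hL
  | cons hd tl =>
    by_cases hx : hd.1 = x
    · refine ⟨hd.2, tl, ?_⟩
      rw [← hx]
    · exfalso
      -- left side: (of x * w).toWord = (x, true) :: w.toWord
      have hle : (FreeGroup.of x * w).toWord = (x, true) :: w.toWord := by
        have := toWord_single_mul (x, true) w ?_
        · exact this
        · intro p hp hc
          rw [hcons] at hp
          simp only [List.head?_cons, Option.mem_def, Option.some.injEq] at hp
          exact hx (hp ▸ hc.1.symm)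
      obtain ⟨M, z, hM⟩ := (w.toWord).eq_nil_or_concat.resolve_left hL
      rw [List.concat_eq_append] at hM
      by_cases hz : z = (x, false)
      · -- cancellation: w * of x = mk M, so norms give a contradiction
        have hwx : w * FreeGroup.of x = FreeGroup.mk M := by
          have hinv : (FreeGroup.of x)⁻¹ = FreeGroup.mk [(x, false)] := by
            rw [show (FreeGroup.of x) = FreeGroup.mk [(x, true)] from rfl, inv_mk]
            simp [invRev]
          have : w = FreeGroup.mk M * (FreeGroup.of x)⁻¹ := by
            rw [hinv, mul_mk, ← hz, ← hM, mk_toWord]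
          rw [this, inv_mul_cancel_right]
        have hnorm1 : (w * FreeGroup.of x).norm ≤ M.length := by
          rw [hwx]; exact norm_mk_le
        have hnorm2 : (FreeGroup.of x * w).norm = w.toWord.length + 1 := by
          rw [FreeGroup.norm, hle, List.length_cons, hcons]
        have hlen : w.toWord.length = M.length + 1 := by rw [hM]; simp
        rw [h.eq, hnorm2, hlen] at hnorm1
        omega
      · -- no cancellation: (w * of x).toWord = w.toWord ++ [(x, true)]
        have hre : (w * FreeGroup.of x).toWord = w.toWord ++ [(x, true)] := by
          have hwinv : ((w * FreeGroup.of x)⁻¹).toWord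
              = (x, false) :: (w⁻¹).toWord := by
            rw [mul_inv_rev]
            rw [show (FreeGroup.of x)⁻¹ = FreeGroup.mk [(x, false)] by
              rw [show (FreeGroup.of x) = FreeGroup.mk [(x, true)] from rfl, inv_mk]
              simp [invRev]]
            apply toWord_single_mul
            intro p hp hc
            rw [toWord_inv, hM, invRev_concat, List.head?_cons, Option.mem_def,
              Option.some.injEq] at hp
            subst hp
            apply hz
            have hc1 : x = z.1 := hc.1
            have hc2 : false = z.2 := by
              have h2 : false = !(!z.2) := hc.2
              simpa using h2
            rw [hc1, hc2]
          have h1 : (w * FreeGroup.of x).toWord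
              = invRev (((w * FreeGroup.of x)⁻¹).toWord) := by
            rw [toWord_inv, invRev_invRev]
          rw [h1, hwinv, invRev_cons, toWord_inv, invRev_invRev]
          simp
        rw [h.eq, hle] at hre
        rw [hcons] at hre
        simp only [List.cons_append, List.cons.injEq] at hre
        exact hx (congrArg Prod.fst hre.1.symm)

end Words

lemma eq_one_of_commute01 {w : F3} (h0 : Commute w (FreeGroup.of 0))
    (h1 : Commute w (FreeGroup.of 1)) : w = 1 := by
  by_contra hw
  obtain ⟨b0, t0, e0⟩ := head_of_commute hw h0
  obtain ⟨b1, t1, e1⟩ := head_of_commute hw h1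
  rw [e0] at e1
  simp only [List.cons.injEq, Prod.mk.injEq] at e1
  exact absurd e1.1.1 (by decide)

/-- The permutation representation used to show `b^n` doesn't commute with `c`. -/
def rho : F3 →* Equiv.Perm ℤ :=
  FreeGroup.lift (fun i => if i = 1 then Equiv.addRight 1 else
    if i = 2 then Equiv.swap 0 1 else 1)

lemma addRight_one_zpow (n : ℤ) (x : ℤ) : ((Equiv.addRight (1 : ℤ)) ^ n) x = x + n := by
  rw [Equiv.zsmul_addRight]
  simp

lemma zpow_of1_commute {n : ℤ} (h : Commute ((FreeGroup.of 1 : F3) ^ n) (FreeGroup.of 2)) :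
    n = 0 := by
  have hmap := h.map rho
  rw [_root_.map_zpow] at hmap
  have h1 : rho (FreeGroup.of 1) = Equiv.addRight 1 := by simp [rho]
  have h2 : rho (FreeGroup.of 2) = Equiv.swap 0 1 := by simp [rho]
  rw [h1, h2] at hmap
  have := congrArg (fun (e : Equiv.Perm ℤ) => e 0) hmap.eq
  simp only [Equiv.Perm.mul_apply] at this
  rw [addRight_one_zpow, Equiv.swap_apply_left, addRight_one_zpow] at this
  -- this : swap 0 1 (0 + n) = 1 + ... careful; recompute
  rw [Equiv.swap_apply_def] at this
  split_ifs at this <;> omega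

/-! ### The semidirect product model -/

def Sf : F3 →* F3 :=
  FreeGroup.lift (fun i => if i = 2 then
    (FreeGroup.of 1)⁻¹ * FreeGroup.of 2 * FreeGroup.of 1 else FreeGroup.of i)

def Sb : F3 →* F3 :=
  FreeGroup.lift (fun i => if i = 2 then
    FreeGroup.of 1 * FreeGroup.of 2 * (FreeGroup.of 1)⁻¹ else FreeGroup.of i)

def S : MulAut F3 :=
  MonoidHom.toMulEquiv Sf Sb
    (by ext i; fin_cases i <;> simp [Sf, Sb] <;> group)
    (by ext i; fin_cases i <;> simp [Sf, Sb] <;> group)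

lemma S_apply (x : F3) : S x = Sf x := rfl

lemma S0 : S (FreeGroup.of 0) = FreeGroup.of 0 := by simp [S_apply, Sf]
lemma S1 : S (FreeGroup.of 1) = FreeGroup.of 1 := by simp [S_apply, Sf]
lemma S2 : S (FreeGroup.of 2) = (FreeGroup.of 1)⁻¹ * FreeGroup.of 2 * FreeGroup.of 1 := by
  simp [S_apply, Sf]

lemma Sinv_apply (x : F3) : S⁻¹ x = Sb x := rfl

lemma fix_zpow {e : MulAut F3} {x : F3} (hx : e x = x) : ∀ n : ℤ, (e ^ n) x = x := by
  have hinv : e⁻¹ x = x := by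
    conv_lhs => rw [← hx]
    exact e.symm_apply_apply x
  intro n
  induction n using Int.induction_on with
  | zero => rfl
  | succ k ih => rw [zpow_add_one, MulAut.mul_apply, hx, ih]
  | pred k ih => rw [zpow_sub_one, MulAut.mul_apply, hinv, ih]

lemma S_zpow_two : ∀ n : ℤ, (S ^ n) (FreeGroup.of 2)
    = (FreeGroup.of 1 : F3) ^ (-n) * FreeGroup.of 2 * (FreeGroup.of 1) ^ n := by
  intro n
  induction n using Int.induction_on with
  | zero => simp
  | succ k ih =>
    rw [zpow_add_one, MulAut.mul_apply, S2]
    rw [_root_.map_mul, _root_.map_mul, _root_.map_inv, fix_zpow S1, ih]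
    group
  | pred k ih =>
    rw [zpow_sub_one, MulAut.mul_apply]
    have : S⁻¹ (FreeGroup.of 2) = FreeGroup.of 1 * FreeGroup.of 2 * (FreeGroup.of 1)⁻¹ := by
      rw [Sinv_apply]; simp [Sb]
    rw [this, _root_.map_mul, _root_.map_mul, _root_.map_inv, fix_zpow S1, ih]
    group

def theta : Multiplicative ℤ →* MulAut F3 := zpowersHom _ S

abbrev GG : Type := SemidirectProduct F3 (Multiplicative ℤ) theta

def t : Multiplicative ℤ := Multiplicative.ofAdd 1

lemma theta_t : theta t = S := by
  simp [theta, t]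

/-- The images of the four generators of `A(P₄)` in `GG`. -/
def gens : Fin 4 → GG
  | ⟨0, _⟩ => inl ((FreeGroup.of 0)⁻¹) * inr t
  | ⟨1, _⟩ => inr t
  | ⟨2, _⟩ => inl (FreeGroup.of 1) * inr t
  | ⟨3, _⟩ => inl (FreeGroup.of 2 * FreeGroup.of 1) * inr t

lemma inr_t_mul_inl (v : F3) : (inr t : GG) * inl v = inl (S v) * inr t := by
  rw [← theta_t, inl_aut t v, mul_assoc, mul_assoc, ← _root_.map_mul inr,
    inv_mul_cancel, _root_.map_one, mul_one]

lemma key_mul (u v : F3) : (inl u * inr t : GG) * (inl v * inr t)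
    = inl (u * S v) * (inr t * inr t) := by
  rw [mul_assoc, ← mul_assoc (inr t) (inl v), inr_t_mul_inl, _root_.map_mul inl]
  group

lemma key_commute {u v : F3} (h : u * S v = v * S u) :
    Commute (inl u * inr t : GG) (inl v * inr t) := by
  unfold Commute SemiconjBy
  rw [key_mul, key_mul, h]

lemma key_div (u v : F3) : (inl u * inr t : GG)⁻¹ * (inl v * inr t)
    = inl (S⁻¹ (u⁻¹ * v)) := by
  have : (S⁻¹ : MulAut F3) = (theta t)⁻¹ := by rw [theta_t]
  rw [this, inl_aut_inv, _root_.map_mul inl, _root_.map_inv inl, _root_.map_inv inr]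
  group

/-- The inclusion `ψ : F₃ → A(P₄)` of the commutator subgroup generators. -/
def psi : F3 →* AP4 :=
  FreeGroup.lift (fun i : Fin 3 =>
    (PresentedGroup.of (rels := P4rels) (i.castSucc))⁻¹ * PresentedGroup.of i.succ)

lemma psi_of (i : Fin 3) : psi (FreeGroup.of i)
    = (PresentedGroup.of (rels := P4rels) (i.castSucc))⁻¹ * PresentedGroup.of i.succ := by
  simp [psi]

/-- Commutation relations among generators of `A(P₄)`. -/
lemma pg_comm {i j : Fin 4} (h : ⁅FreeGroup.of i, FreeGroup.of j⁆ ∈ P4rels) :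
    Commute (PresentedGroup.of (rels := P4rels) i) (PresentedGroup.of j) := by
  have h1 : (PresentedGroup.mk P4rels ⁅FreeGroup.of i, FreeGroup.of j⁆) = 1 := by
    apply (QuotientGroup.eq_one_iff _).mpr
    exact Subgroup.subset_normalClosure h
  rw [map_commutatorElement] at h1
  exact commutatorElement_eq_one_iff_commute.mp h1

lemma comm01 : Commute (PresentedGroup.of (rels := P4rels) 0) (PresentedGroup.of 1) :=
  pg_comm (Or.inl rfl)

lemma comm12 : Commute (PresentedGroup.of (rels := P4rels) 1) (PresentedGroup.of 2) :=
  pg_comm (Or.inr (Or.inl rfl))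

lemma comm23 : Commute (PresentedGroup.of (rels := P4rels) 2) (PresentedGroup.of 3) :=
  pg_comm (Or.inr (Or.inr rfl))

/-- The map `Φ : A(P₄) → GG`. -/
def Phi : AP4 →* GG :=
  PresentedGroup.toGroup (f := gens) (by
    intro r hr
    simp only [P4rels, Set.mem_insert_iff, Set.mem_singleton_iff] at hr
    rcases hr with rfl | rfl | rfl <;>
      rw [map_commutatorElement] <;>
      simp only [FreeGroup.lift_apply_of] <;>
      rw [commutatorElement_eq_one_iff_commute]
    · rw [show gens 0 = inl ((FreeGroup.of 0)⁻¹ : F3) * inr t from rfl,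
        show gens 1 = inr t from rfl,
        show (inr t : GG) = inl (1 : F3) * inr t by rw [_root_.map_one, one_mul]]
      exact key_commute (by rw [_root_.map_one, _root_.map_inv, S0]; group)
    · rw [show gens 1 = inr t from rfl,
        show gens 2 = inl (FreeGroup.of 1 : F3) * inr t from rfl,
        show (inr t : GG) = inl (1 : F3) * inr t by rw [_root_.map_one, one_mul]]
      exact key_commute (by rw [_root_.map_one, S1]; group)
    · rw [show gens 2 = inl (FreeGroup.of 1 : F3) * inr t from rfl,
        show gens 3 = inl (FreeGroup.of 2 * FreeGroup.of 1 : F3) * inr t from rfl]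
      exact key_commute (by rw [_root_.map_mul, S1, S2]; group))

lemma Phi_of (i : Fin 4) : Phi (PresentedGroup.of i) = gens i :=
  PresentedGroup.toGroup.of _

/-! ### `Ψ : GG → A(P₄)` -/

lemma psi_S_base : ∀ x : F3, psi (S x)
    = PresentedGroup.of (rels := P4rels) 1 * psi x * (PresentedGroup.of 1)⁻¹ := by
  have key : psi.comp (S : MulAut F3).toMonoidHom
      = (MulAut.conj (PresentedGroup.of (rels := P4rels) 1)).toMonoidHom.comp psi := by
    apply FreeGroup.ext_hom
    intro i
    simp only [MonoidHom.comp_apply, MulEquiv.coe_toMonoidHom, MulAut.conj_apply]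
    set B := PresentedGroup.of (rels := P4rels) 1 with hB
    fin_cases i
    · show psi (S (FreeGroup.of 0)) = B * psi (FreeGroup.of 0) * B⁻¹
      rw [show (S (FreeGroup.of 0) : F3) = FreeGroup.of 0 from S0, psi_of]
      show (PresentedGroup.of (rels := P4rels) 0)⁻¹ * B
        = B * ((PresentedGroup.of (rels := P4rels) 0)⁻¹ * B) * B⁻¹
      have h01 : B * (PresentedGroup.of (rels := P4rels) 0)⁻¹
          = (PresentedGroup.of (rels := P4rels) 0)⁻¹ * B := comm01.inv_left.eq.symm
      rw [← mul_assoc, h01]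
      group
    · show psi (S (FreeGroup.of 1)) = B * psi (FreeGroup.of 1) * B⁻¹
      rw [show (S (FreeGroup.of 1) : F3) = FreeGroup.of 1 from S1, psi_of]
      show B⁻¹ * PresentedGroup.of 2 = B * (B⁻¹ * PresentedGroup.of 2) * B⁻¹
      calc B⁻¹ * PresentedGroup.of 2
          = PresentedGroup.of 2 * B⁻¹ := comm12.inv_left.eq
        _ = B * (B⁻¹ * PresentedGroup.of 2) * B⁻¹ := by group
    · show psi (S (FreeGroup.of 2)) = B * psi (FreeGroup.of 2) * B⁻¹
      rw [show (S (FreeGroup.of 2) : F3)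
          = (FreeGroup.of 1)⁻¹ * FreeGroup.of 2 * FreeGroup.of 1 from S2]
      rw [_root_.map_mul, _root_.map_mul, _root_.map_inv, psi_of, psi_of]
      set C := PresentedGroup.of (rels := P4rels) 2 with hC
      set D := PresentedGroup.of (rels := P4rels) 3 with hD
      show (B⁻¹ * C)⁻¹ * (C⁻¹ * D) * (B⁻¹ * C) = B * (C⁻¹ * D) * B⁻¹
      calc (B⁻¹ * C)⁻¹ * (C⁻¹ * D) * (B⁻¹ * C)
          = (C⁻¹ * B) * (C⁻¹ * (D * (B⁻¹ * C))) := by group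
        _ = (B * C⁻¹) * (C⁻¹ * (D * (B⁻¹ * C))) := by rw [← comm12.inv_right.eq]
        _ = (B * C⁻¹) * (C⁻¹ * (D * (C * B⁻¹))) := by rw [comm12.inv_left.eq]
        _ = (B * C⁻¹) * (C⁻¹ * ((D * C) * B⁻¹)) := by group
        _ = (B * C⁻¹) * (C⁻¹ * ((C * D) * B⁻¹)) := by rw [← comm23.eq]
        _ = B * (C⁻¹ * D) * B⁻¹ := by group
  intro x
  have := DFunLike.congr_fun key x
  simpa using this

lemma psi_S_zpow : ∀ (n : ℤ) (x : F3), psi ((S ^ n) x)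
    = (PresentedGroup.of (rels := P4rels) 1) ^ n * psi x
      * ((PresentedGroup.of (rels := P4rels) 1) ^ n)⁻¹ := by
  intro n
  induction n using Int.induction_on with
  | zero => intro x; simp
  | succ k ih =>
    intro x
    rw [zpow_add_one, MulAut.mul_apply, ih, psi_S_base]
    group
  | pred k ih =>
    intro x
    have hbase : psi (S⁻¹ x) = (PresentedGroup.of (rels := P4rels) 1)⁻¹ * psi x
        * PresentedGroup.of 1 := by
      have := psi_S_base (S⁻¹ x)
      rw [MulAut.apply_inv_self] at this
      rw [this]
      group
    rw [zpow_sub_one, MulAut.mul_apply, ih, hbase]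
    group

def Psi : GG →* AP4 :=
  SemidirectProduct.lift psi (zpowersHom _ (PresentedGroup.of (rels := P4rels) 1)) (by
    intro g
    ext x
    simp only [MonoidHom.comp_apply, MulEquiv.coe_toMonoidHom, MulAut.conj_apply,
      zpowersHom_apply, theta]
    exact psi_S_zpow (Multiplicative.toAdd g) (FreeGroup.of x))

lemma Psi_lift_inl (u : F3) : Psi (inl u) = psi u := SemidirectProduct.lift_inl _ _ _ u

lemma Psi_inr_t : Psi (inr t) = PresentedGroup.of (rels := P4rels) 1 := by
  rw [Psi, SemidirectProduct.lift_inr]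
  simp [t]

lemma Psi_Phi : ∀ x : AP4, Psi (Phi x) = x := by
  have key : Psi.comp Phi = MonoidHom.id AP4 := by
    apply PresentedGroup.ext
    intro i
    simp only [MonoidHom.comp_apply, MonoidHom.id_apply, Phi_of]
    fin_cases i
    · show Psi (inl ((FreeGroup.of 0)⁻¹) * inr t) = PresentedGroup.of 0
      rw [_root_.map_mul, Psi_lift_inl, Psi_inr_t, _root_.map_inv, psi_of]
      show ((PresentedGroup.of (rels := P4rels) 0)⁻¹ * PresentedGroup.of 1)⁻¹
          * PresentedGroup.of 1 = PresentedGroup.of 0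
      calc ((PresentedGroup.of (rels := P4rels) 0)⁻¹ * PresentedGroup.of 1)⁻¹
            * PresentedGroup.of 1
          = (PresentedGroup.of 1)⁻¹
            * (PresentedGroup.of (rels := P4rels) 0 * PresentedGroup.of 1) := by group
        _ = (PresentedGroup.of 1)⁻¹
            * (PresentedGroup.of 1 * PresentedGroup.of (rels := P4rels) 0) := by
              rw [comm01.eq]
        _ = PresentedGroup.of 0 := by group
    · show Psi (inr t) = PresentedGroup.of 1
      rw [Psi_inr_t]
    · show Psi (inl (FreeGroup.of 1) * inr t) = PresentedGroup.of 2
      rw [_root_.map_mul, Psi_lift_inl, Psi_inr_t, psi_of]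
      show (PresentedGroup.of (rels := P4rels) 1)⁻¹ * PresentedGroup.of 2
          * PresentedGroup.of 1 = PresentedGroup.of 2
      have h12 : PresentedGroup.of (rels := P4rels) 2 * PresentedGroup.of 1
          = PresentedGroup.of 1 * PresentedGroup.of (rels := P4rels) 2 := comm12.eq.symm
      rw [mul_assoc, h12, ← mul_assoc, inv_mul_cancel, one_mul]
    · show Psi (inl (FreeGroup.of 2 * FreeGroup.of 1) * inr t) = PresentedGroup.of 3
      rw [_root_.map_mul, Psi_lift_inl, Psi_inr_t, _root_.map_mul, psi_of, psi_of]
      set C := PresentedGroup.of (rels := P4rels) 2 with hC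
      set B := PresentedGroup.of (rels := P4rels) 1 with hB
      set D := PresentedGroup.of (rels := P4rels) 3 with hD
      show C⁻¹ * D * (B⁻¹ * C) * B = D
      have h12 : C * B⁻¹ = B⁻¹ * C := comm12.inv_left.eq.symm
      have h23 : D * C = C * D := comm23.eq.symm
      calc C⁻¹ * D * (B⁻¹ * C) * B
          = C⁻¹ * D * (C * B⁻¹) * B := by rw [h12]
        _ = C⁻¹ * (D * C) * (B⁻¹ * B) := by group
        _ = C⁻¹ * (C * D) * (B⁻¹ * B) := by rw [h23]
        _ = D := by group
  intro x
  have := DFunLike.congr_fun key x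
  simpa using this

lemma Phi_injective : Function.Injective Phi :=
  Function.LeftInverse.injective Psi_Phi

lemma Sinv0 : (S⁻¹ : MulAut F3) (FreeGroup.of 0) = FreeGroup.of 0 := by
  rw [Sinv_apply]; simp [Sb]

lemma Sinv1 : (S⁻¹ : MulAut F3) (FreeGroup.of 1) = FreeGroup.of 1 := by
  rw [Sinv_apply]; simp [Sb]

lemma Sinv2 : (S⁻¹ : MulAut F3) (FreeGroup.of 2)
    = FreeGroup.of 1 * FreeGroup.of 2 * (FreeGroup.of 1)⁻¹ := by
  rw [Sinv_apply]; simp [Sb]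

lemma key_div1 (u : F3) : (inl u * inr t : GG)⁻¹ * inr t = inl (S⁻¹ u⁻¹) := by
  have h := key_div u 1
  rw [_root_.map_one, one_mul, mul_one] at h
  exact h

lemma key_div2 (v : F3) : (inr t : GG)⁻¹ * (inl v * inr t) = inl (S⁻¹ v) := by
  have h := key_div 1 v
  simp only [_root_.map_one, one_mul, inv_one] at h
  exact h

lemma Phi_psi : ∀ u : F3, Phi (psi u) = inl u := by
  have key : Phi.comp psi = (inl : F3 →* GG) := by
    apply FreeGroup.ext_hom
    intro i
    simp only [MonoidHom.comp_apply, psi_of, _root_.map_mul, _root_.map_inv]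
    fin_cases i
    · show (Phi (PresentedGroup.of 0))⁻¹ * Phi (PresentedGroup.of 1) = inl (FreeGroup.of 0)
      rw [Phi_of, Phi_of]
      show (inl ((FreeGroup.of 0)⁻¹) * inr t : GG)⁻¹ * inr t = inl (FreeGroup.of 0)
      rw [key_div1, inv_inv, Sinv0]
    · show (Phi (PresentedGroup.of 1))⁻¹ * Phi (PresentedGroup.of 2) = inl (FreeGroup.of 1)
      rw [Phi_of, Phi_of]
      show (inr t : GG)⁻¹ * (inl (FreeGroup.of 1) * inr t) = inl (FreeGroup.of 1)
      rw [key_div2, Sinv1]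
    · show (Phi (PresentedGroup.of 2))⁻¹ * Phi (PresentedGroup.of 3) = inl (FreeGroup.of 2)
      rw [Phi_of, Phi_of]
      show (inl (FreeGroup.of 1) * inr t : GG)⁻¹
          * (inl (FreeGroup.of 2 * FreeGroup.of 1) * inr t) = inl (FreeGroup.of 2)
      rw [key_div]
      congr 1
      have harg : ((FreeGroup.of 1 : F3)⁻¹ * (FreeGroup.of 2 * FreeGroup.of 1))
          = Sf (FreeGroup.of 2) := by
        simp [Sf]
        group
      rw [harg]
      exact S.symm_apply_apply (FreeGroup.of 2)
  intro u
  exact DFunLike.congr_fun key u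

lemma mem_range_psi {g : AP4} (hdeg : (Phi g).right = 1) : ∃ u : F3, g = psi u := by
  refine ⟨(Phi g).left, Phi_injective ?_⟩
  rw [Phi_psi]
  conv_lhs => rw [← inl_left_mul_inr_right (Phi g)]
  rw [hdeg, _root_.map_one, mul_one]

lemma commute_inl_extract {k : GG} {v : F3} (h : Commute k (inl v)) :
    k.left * (S ^ (Multiplicative.toAdd k.right)) v = v * k.left := by
  have hl := congrArg SemidirectProduct.left h.eq
  rw [SemidirectProduct.mul_left, SemidirectProduct.mul_left] at hl
  rw [SemidirectProduct.left_inl, SemidirectProduct.right_inl] at hl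
  simpa [theta] using hl


end AP4Aux

open AP4Aux SemidirectProduct in
/-- A homomorphism `φ : A(P₄) → G` is injective if and only if the elements
`φ(α⁻¹β)`, `φ(β⁻¹γ)`, `φ(γ⁻¹δ)` freely generate a free subgroup of rank 3 in `G`. -/
theorem AP4_hom_injective_iff {G : Type*} [Group G] (φ : AP4 →* G) :
    Function.Injective φ ↔
      Function.Injective
        (FreeGroup.lift (fun i : Fin 3 =>
          φ ((PresentedGroup.of (i.castSucc) : AP4)⁻¹ * PresentedGroup.of i.succ))) := by
  have hlift : (FreeGroup.lift (fun i : Fin 3 =>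
      φ ((PresentedGroup.of (i.castSucc) : AP4)⁻¹ * PresentedGroup.of i.succ)))
      = φ.comp psi := by
    apply FreeGroup.ext_hom
    intro i
    rw [MonoidHom.comp_apply, psi_of, FreeGroup.lift_apply_of]
  rw [hlift]
  have hpsi_inj : Function.Injective psi := by
    intro x y hxy
    have := congrArg Phi hxy
    rw [Phi_psi, Phi_psi] at this
    exact inl_injective this
  constructor
  · intro h
    rw [MonoidHom.coe_comp]
    exact h.comp hpsi_inj
  · intro h
    rw [injective_iff_map_eq_one]
    intro g hg
    -- Step 1: `g` commutes with everything in the image of `psi`.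
    have hcomm : ∀ v : F3, g * psi v = psi v * g := by
      intro v
      have hc : φ (g⁻¹ * (psi v)⁻¹ * g * psi v) = 1 := by
        rw [map_mul, map_mul, map_mul, map_inv, map_inv, hg]
        group
      have hdeg : (Phi (g⁻¹ * (psi v)⁻¹ * g * psi v)).right = 1 := by
        rw [map_mul, map_mul, map_mul, map_inv, map_inv, Phi_psi]
        simp [mul_right, inv_right, right_inl]
      obtain ⟨u, hu⟩ := mem_range_psi hdeg
      have hu1 : u = 1 := h (show (φ.comp psi) u = (φ.comp psi) 1 by
        rw [map_one, MonoidHom.comp_apply, ← hu]; exact hc)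
      rw [hu1, map_one] at hu
      calc g * psi v = (psi v * g) * (g⁻¹ * (psi v)⁻¹ * g * psi v) := by group
        _ = psi v * g := by rw [hu, mul_one]
    -- Step 2: transfer to the semidirect product.
    have hK : ∀ i : Fin 3, Commute (Phi g) (inl (FreeGroup.of i)) := by
      intro i
      have hcom : Commute g (psi (FreeGroup.of i)) := hcomm (FreeGroup.of i)
      have := hcom.map Phi
      rwa [Phi_psi] at this
    have e0 := commute_inl_extract (hK 0)
    have e1 := commute_inl_extract (hK 1)
    have e2 := commute_inl_extract (hK 2)
    rw [fix_zpow S0] at e0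
    rw [fix_zpow S1] at e1
    have hw : (Phi g).left = 1 := eq_one_of_commute01 e0 e1
    rw [hw, one_mul, mul_one, S_zpow_two] at e2
    have hcmn : Commute ((FreeGroup.of 1 : F3) ^ (Multiplicative.toAdd (Phi g).right))
        (FreeGroup.of 2) := by
      show (FreeGroup.of 1 : F3) ^ (Multiplicative.toAdd (Phi g).right) * FreeGroup.of 2
        = FreeGroup.of 2 * (FreeGroup.of 1 : F3) ^ (Multiplicative.toAdd (Phi g).right)
      conv_lhs => rw [← e2]
      group
    have hn0 : Multiplicative.toAdd (Phi g).right = 0 := zpow_of1_commute hcmn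
    have hright : (Phi g).right = 1 := by
      rw [← ofAdd_toAdd (Phi g).right, hn0]
      rfl
    apply Phi_injective
    rw [map_one, ← inl_left_mul_inr_right (Phi g), hw, hright, map_one, map_one, mul_one]
end

section
/- In the right-angled Artin group A(P₄) = ⟨α, β, γ, δ ∣ αβ = βα, βγ = γβ, γδ = δγ⟩, the subgroup ⟨β, γ⟩ is free abelian of rank 2, and the following intersection identities hold: α⟨β,γ⟩α⁻¹ ∩ ⟨β,γ⟩ = ⟨β⟩, ⟨β,γ⟩ ∩ δ⁻¹⟨β,γ⟩δ = ⟨γ⟩, and α⟨β,γ⟩α⁻¹ ∩ δ⁻¹⟨β,γ⟩δ = {1}. -/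
open scoped commutatorElement

namespace AP4aux

/-- Translation by 1 on ℤ. -/
def t : Equiv.Perm ℤ := Equiv.addRight 1

/-- The transposition (0 1) on ℤ. -/
def s : Equiv.Perm ℤ := Equiv.swap 0 1

lemma t_zpow (n : ℤ) : ∀ x, (t ^ n) x = x + n := by
  induction n using Int.induction_on with
  | zero => intro x; simp
  | succ k ih =>
      intro x
      rw [zpow_add, zpow_one, Equiv.Perm.mul_apply, ih]
      simp [t]; ring
  | pred k ih =>
      intro x
      rw [sub_eq_add_neg, zpow_add, zpow_neg_one, Equiv.Perm.mul_apply, ih]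
      simp [t]; ring

lemma key (n : ℤ) (h : s * t ^ n = t ^ n * s) : n = 0 := by
  have h1 : (s * t ^ n) 1 = (t ^ n * s) 1 := by rw [h]
  rw [Equiv.Perm.mul_apply, Equiv.Perm.mul_apply, t_zpow] at h1
  have hs1 : s 1 = 0 := Equiv.swap_apply_right 0 1
  rw [hs1, t_zpow] at h1
  -- h1 : s (1 + n) = 0 + n
  rw [show s = Equiv.swap 0 1 from rfl, Equiv.swap_apply_def] at h1
  split_ifs at h1 <;> omega

lemma lift_check {G : Type*} [Group G] (g : Fin 4 → G)
    (h01 : g 0 * g 1 = g 1 * g 0) (h12 : g 1 * g 2 = g 2 * g 1)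
    (h23 : g 2 * g 3 = g 3 * g 2) :
    ∀ r ∈ P4rels, FreeGroup.lift g r = 1 := by
  intro r hr
  simp only [P4rels, Set.mem_insert_iff, Set.mem_singleton_iff] at hr
  rcases hr with rfl | rfl | rfl <;>
    rw [map_commutatorElement, FreeGroup.lift_apply_of, FreeGroup.lift_apply_of,
      commutatorElement_eq_one_iff_mul_comm] <;> assumption

/-- abelianization-type homomorphism detecting exponents of β and γ. -/
def φ : AP4 →* Multiplicative (ℤ × ℤ) :=
  PresentedGroup.toGroup
    (f := ![1, Multiplicative.ofAdd ((1 : ℤ), (0 : ℤ)), Multiplicative.ofAdd ((0 : ℤ), (1 : ℤ)), 1])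
    (lift_check _ (mul_comm _ _) (mul_comm _ _) (mul_comm _ _))

/-- homomorphism killing β, δ; sends α ↦ s, γ ↦ t. -/
def χ₁ : AP4 →* Equiv.Perm ℤ :=
  PresentedGroup.toGroup (f := ![s, 1, t, 1])
    (lift_check _ (by simp) (by simp) (by simp))

/-- homomorphism killing α, γ; sends β ↦ t, δ ↦ s. -/
def χ₂ : AP4 →* Equiv.Perm ℤ :=
  PresentedGroup.toGroup (f := ![1, t, 1, s])
    (lift_check _ (by simp) (by simp) (by simp))

end AP4aux

open AP4aux Subgroup in
/-- In `A(P₄) = ⟨α,β,γ,δ⟩`: the subgroup `⟨β,γ⟩` is free abelian of rank 2 (expressed by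
injectivity of `(m,n) ↦ β^m γ^n` on `ℤ²`), and
`α⟨β,γ⟩α⁻¹ ∩ ⟨β,γ⟩ = ⟨β⟩`, `⟨β,γ⟩ ∩ δ⁻¹⟨β,γ⟩δ = ⟨γ⟩`,
`α⟨β,γ⟩α⁻¹ ∩ δ⁻¹⟨β,γ⟩δ = {1}`. -/
theorem AP4_intersections :
    ∀ (a b c d : AP4), a = PresentedGroup.of 0 → b = PresentedGroup.of 1 →
      c = PresentedGroup.of 2 → d = PresentedGroup.of 3 →
      (Function.Injective fun p : ℤ × ℤ => b ^ p.1 * c ^ p.2) ∧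
      (Subgroup.closure {b, c}).map (MulAut.conj a).toMonoidHom ⊓ Subgroup.closure {b, c} =
        Subgroup.zpowers b ∧
      Subgroup.closure {b, c} ⊓ (Subgroup.closure {b, c}).map (MulAut.conj d⁻¹).toMonoidHom =
        Subgroup.zpowers c ∧
      (Subgroup.closure {b, c}).map (MulAut.conj a).toMonoidHom ⊓
        (Subgroup.closure {b, c}).map (MulAut.conj d⁻¹).toMonoidHom = ⊥ := by
  intro a b c d ha hb hc hd
  subst ha hb hc hd
  set a : AP4 := PresentedGroup.of 0 with ha
  set b : AP4 := PresentedGroup.of 1 with hb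
  set c : AP4 := PresentedGroup.of 2 with hc
  set d : AP4 := PresentedGroup.of 3 with hd
  -- the defining relations
  have rel : ∀ r ∈ P4rels, (PresentedGroup.mk P4rels r) = 1 := fun r hr =>
    (QuotientGroup.eq_one_iff _).mpr (Subgroup.subset_normalClosure hr)
  have hab : a * b = b * a := by
    have := rel _ (Or.inl rfl)
    rwa [map_commutatorElement, commutatorElement_eq_one_iff_mul_comm] at this
  have hbc : b * c = c * b := by
    have := rel _ (Or.inr (Or.inl rfl))
    rwa [map_commutatorElement, commutatorElement_eq_one_iff_mul_comm] at this
  have hcd : c * d = d * c := by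
    have := rel _ (Or.inr (Or.inr rfl))
    rwa [map_commutatorElement, commutatorElement_eq_one_iff_mul_comm] at this
  -- values of the auxiliary homomorphisms
  have φa : φ a = 1 := by simp [φ, ha, PresentedGroup.toGroup.of]
  have φb : φ b = Multiplicative.ofAdd ((1 : ℤ), (0 : ℤ)) := by
    simp [φ, hb, PresentedGroup.toGroup.of]
  have φc : φ c = Multiplicative.ofAdd ((0 : ℤ), (1 : ℤ)) := by
    simp [φ, hc, PresentedGroup.toGroup.of]
  have φd : φ d = 1 := by simp [φ, hd, PresentedGroup.toGroup.of]
  have χ₁a : χ₁ a = s := by simp [χ₁, ha, PresentedGroup.toGroup.of]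
  have χ₁b : χ₁ b = 1 := by simp [χ₁, hb, PresentedGroup.toGroup.of]
  have χ₁c : χ₁ c = t := by simp [χ₁, hc, PresentedGroup.toGroup.of]
  have χ₁d : χ₁ d = 1 := by simp [χ₁, hd, PresentedGroup.toGroup.of]
  have χ₂b : χ₂ b = t := by simp [χ₂, hb, PresentedGroup.toGroup.of]
  have χ₂d : χ₂ d = s := by simp [χ₂, hd, PresentedGroup.toGroup.of]
  -- exponent extraction in Multiplicative (ℤ × ℤ)
  have ofAdd_eq : ∀ m n p q : ℤ,
      (Multiplicative.ofAdd ((1 : ℤ), (0 : ℤ))) ^ m *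
          (Multiplicative.ofAdd ((0 : ℤ), (1 : ℤ))) ^ n =
        (Multiplicative.ofAdd ((1 : ℤ), (0 : ℤ))) ^ p *
          (Multiplicative.ofAdd ((0 : ℤ), (1 : ℤ))) ^ q → m = p ∧ n = q := by
    intro m n p q h
    have h' := congrArg Multiplicative.toAdd h
    simp only [toAdd_mul, toAdd_zpow, toAdd_ofAdd, Prod.smul_mk, smul_eq_mul,
      Prod.mk_add_mk, Prod.mk.injEq, mul_one, mul_zero, add_zero, zero_add] at h'
    exact ⟨h'.1, h'.2⟩
  have inj2 : ∀ m n p q : ℤ, b ^ m * c ^ n = b ^ p * c ^ q → m = p ∧ n = q := by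
    intro m n p q h
    have h' := congrArg φ h
    simp only [map_mul, map_zpow, φb, φc] at h'
    exact ofAdd_eq _ _ _ _ h'
  -- claim 1
  have claim1 : Function.Injective fun p : ℤ × ℤ => b ^ p.1 * c ^ p.2 := by
    rintro ⟨m, n⟩ ⟨p, q⟩ h
    have h' : b ^ m * c ^ n = b ^ p * c ^ q := h
    obtain ⟨h1, h2⟩ := inj2 m n p q h'
    simp [h1, h2]
  -- elements of closure {b, c} are of the form b^m * c^n
  have hCbc : Commute b c := hbc
  have mem_bc : ∀ x ∈ Subgroup.closure ({b, c} : Set AP4), ∃ m n : ℤ, x = b ^ m * c ^ n := by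
    intro x hx
    induction hx using Subgroup.closure_induction with
    | mem y hy =>
        rcases hy with rfl | rfl
        · exact ⟨1, 0, by simp⟩
        · exact ⟨0, 1, by simp⟩
    | one => exact ⟨0, 0, by simp⟩
    | mul y z _ _ hy hz =>
        obtain ⟨m, n, rfl⟩ := hy
        obtain ⟨p, q, rfl⟩ := hz
        refine ⟨m + p, n + q, ?_⟩
        have hcomm : c ^ n * b ^ p = b ^ p * c ^ n := ((hCbc.symm).zpow_zpow n p).eq
        calc b ^ m * c ^ n * (b ^ p * c ^ q)
            = b ^ m * (c ^ n * b ^ p) * c ^ q := by group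
          _ = b ^ m * (b ^ p * c ^ n) * c ^ q := by rw [hcomm]
          _ = b ^ (m + p) * c ^ (n + q) := by group
    | inv y _ hy =>
        obtain ⟨m, n, rfl⟩ := hy
        refine ⟨-m, -n, ?_⟩
        have hcomm : c ^ (-n) * b ^ (-m) = b ^ (-m) * c ^ (-n) :=
          ((hCbc.symm).zpow_zpow (-n) (-m)).eq
        rw [mul_inv_rev, ← zpow_neg, ← zpow_neg, hcomm]
  have hb_mem : b ∈ Subgroup.closure ({b, c} : Set AP4) :=
    Subgroup.subset_closure (Or.inl rfl)
  have hc_mem : c ∈ Subgroup.closure ({b, c} : Set AP4) :=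
    Subgroup.subset_closure (Or.inr rfl)
  -- commutation with powers
  have haB : ∀ m : ℤ, a * b ^ m = b ^ m * a := fun m =>
    ((show Commute a b from hab).zpow_right m).eq
  have hdC : ∀ n : ℤ, d * c ^ n = c ^ n * d := fun n =>
    ((show Commute d c from hcd.symm).zpow_right n).eq
  refine ⟨claim1, ?_, ?_, ?_⟩
  · -- claim 2 : a ⟨b,c⟩ a⁻¹ ⊓ ⟨b,c⟩ = zpowers b
    apply le_antisymm
    · rintro x ⟨hx1, hx2⟩
      obtain ⟨y, hy, rfl⟩ := hx1
      obtain ⟨m, n, rfl⟩ := mem_bc y hy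
      obtain ⟨p, q, hpq⟩ := mem_bc _ hx2
      rw [MulEquiv.coe_toMonoidHom, MulAut.conj_apply] at hpq
      -- hpq : a * (b^m * c^n) * a⁻¹ = b^p * c^q
      have hφ : m = p ∧ n = q := by
        have h' := congrArg φ hpq
        simp only [map_mul, map_inv, map_zpow, φa, φb, φc, one_mul, mul_one, inv_one] at h'
        exact ofAdd_eq _ _ _ _ h'
      obtain ⟨rfl, rfl⟩ := hφ
      have e1 : a * c ^ n * a⁻¹ = c ^ n := by
        have e0 : b ^ m * (a * c ^ n * a⁻¹) = b ^ m * c ^ n := by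
          calc b ^ m * (a * c ^ n * a⁻¹)
              = (b ^ m * a) * c ^ n * a⁻¹ := by group
            _ = (a * b ^ m) * c ^ n * a⁻¹ := by rw [haB]
            _ = a * (b ^ m * c ^ n) * a⁻¹ := by group
            _ = b ^ m * c ^ n := hpq
        exact mul_left_cancel e0
      have h3 : a * c ^ n = c ^ n * a := by
        calc a * c ^ n = (a * c ^ n * a⁻¹) * a := by group
          _ = c ^ n * a := by rw [e1]
      have hn : n = 0 := by
        apply key
        have h4 := congrArg χ₁ h3
        rwa [map_mul, map_mul, map_zpow, χ₁a, χ₁c] at h4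
      subst hn
      have e2 : a * (b ^ m * c ^ (0 : ℤ)) * a⁻¹ = b ^ m := by
        simp only [zpow_zero, mul_one]
        rw [haB]; group
      rw [MulEquiv.coe_toMonoidHom, MulAut.conj_apply, e2]
      exact ⟨m, rfl⟩
    · rw [Subgroup.zpowers_le]
      refine ⟨⟨b, hb_mem, ?_⟩, hb_mem⟩
      rw [MulEquiv.coe_toMonoidHom, MulAut.conj_apply]
      calc a * b * a⁻¹ = (b * a) * a⁻¹ := by rw [hab]
        _ = b := by group
  · -- claim 3 : ⟨b,c⟩ ⊓ d⁻¹ ⟨b,c⟩ d = zpowers c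
    apply le_antisymm
    · rintro x ⟨hx1, hx2⟩
      obtain ⟨m, n, rfl⟩ := mem_bc _ hx1
      obtain ⟨y, hy, hy2⟩ := hx2
      obtain ⟨p, q, rfl⟩ := mem_bc y hy
      rw [MulEquiv.coe_toMonoidHom, MulAut.conj_apply, inv_inv] at hy2
      -- hy2 : d⁻¹ * (b^p*c^q) * d = b^m * c^n
      have h0 : d * (b ^ m * c ^ n) * d⁻¹ = b ^ p * c ^ q := by
        rw [← hy2]; group
      have hφ : m = p ∧ n = q := by
        have h' := congrArg φ h0
        simp only [map_mul, map_inv, map_zpow, φd, φb, φc, one_mul, mul_one, inv_one] at h'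
        exact ofAdd_eq _ _ _ _ h'
      obtain ⟨rfl, rfl⟩ := hφ
      have hdC' : d⁻¹ * c ^ n = c ^ n * d⁻¹ := by
        calc d⁻¹ * c ^ n = d⁻¹ * (c ^ n * d) * d⁻¹ := by group
          _ = d⁻¹ * (d * c ^ n) * d⁻¹ := by rw [hdC]
          _ = c ^ n * d⁻¹ := by group
      have e0 : (d * b ^ m * d⁻¹) * c ^ n = b ^ m * c ^ n := by
        calc (d * b ^ m * d⁻¹) * c ^ n
            = d * b ^ m * (d⁻¹ * c ^ n) := by group
          _ = d * b ^ m * (c ^ n * d⁻¹) := by rw [hdC']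
          _ = d * (b ^ m * c ^ n) * d⁻¹ := by group
          _ = b ^ m * c ^ n := h0
      have h2 : d * b ^ m * d⁻¹ = b ^ m := mul_right_cancel e0
      have h4 : d * b ^ m = b ^ m * d := by
        calc d * b ^ m = (d * b ^ m * d⁻¹) * d := by group
          _ = b ^ m * d := by rw [h2]
      have hm : m = 0 := by
        apply key
        have h5 := congrArg χ₂ h4
        rwa [map_mul, map_mul, map_zpow, χ₂b, χ₂d] at h5
      subst hm
      simp only [zpow_zero, one_mul]
      exact ⟨n, rfl⟩
    · rw [Subgroup.zpowers_le]
      refine ⟨hc_mem, ⟨c, hc_mem, ?_⟩⟩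
      rw [MulEquiv.coe_toMonoidHom, MulAut.conj_apply, inv_inv]
      calc d⁻¹ * c * d = d⁻¹ * (c * d) := by group
        _ = d⁻¹ * (d * c) := by rw [hcd]
        _ = c := by group
  · -- claim 4 : a ⟨b,c⟩ a⁻¹ ⊓ d⁻¹ ⟨b,c⟩ d = ⊥
    apply le_antisymm
    · rintro x ⟨hx1, hx2⟩
      obtain ⟨y, hy, rfl⟩ := hx1
      obtain ⟨m, n, rfl⟩ := mem_bc y hy
      obtain ⟨z, hz, hz2⟩ := hx2
      obtain ⟨p, q, rfl⟩ := mem_bc z hz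
      rw [MulEquiv.coe_toMonoidHom, MulAut.conj_apply, inv_inv,
        MulEquiv.coe_toMonoidHom, MulAut.conj_apply] at hz2
      -- hz2 : d⁻¹ * (b^p*c^q) * d = a * (b^m*c^n) * a⁻¹
      have h0 : d * (a * (b ^ m * c ^ n) * a⁻¹) * d⁻¹ = b ^ p * c ^ q := by
        rw [← hz2]; group
      have hφ : m = p ∧ n = q := by
        have h' := congrArg φ h0
        simp only [map_mul, map_inv, map_zpow, φa, φd, φb, φc, one_mul, mul_one,
          inv_one] at h'
        exact ofAdd_eq _ _ _ _ h'
      obtain ⟨rfl, rfl⟩ := hφ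
      have hχ1 : s * t ^ n * s⁻¹ = t ^ n := by
        have h' := congrArg χ₁ h0
        simp only [map_mul, map_inv, map_zpow, χ₁a, χ₁b, χ₁c, χ₁d, one_mul, mul_one,
          inv_one, one_zpow] at h'
        exact h'
      have hn : n = 0 := by
        apply key
        calc s * t ^ n = (s * t ^ n * s⁻¹) * s := by group
          _ = t ^ n * s := by rw [hχ1]
      subst hn
      have e2 : a * (b ^ m * c ^ (0 : ℤ)) * a⁻¹ = b ^ m := by
        simp only [zpow_zero, mul_one]
        rw [haB]; group
      have h1 : d * b ^ m * d⁻¹ = b ^ m := by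
        have h6 := h0
        rw [e2] at h6
        simpa using h6
      have hm : m = 0 := by
        apply key
        have h4 : d * b ^ m = b ^ m * d := by
          calc d * b ^ m = (d * b ^ m * d⁻¹) * d := by group
            _ = b ^ m * d := by rw [h1]
        have h5 := congrArg χ₂ h4
        rwa [map_mul, map_mul, map_zpow, χ₂b, χ₂d] at h5
      subst hm
      rw [MulEquiv.coe_toMonoidHom, MulAut.conj_apply]
      simp
    · exact bot_le
end

section
/- Let H be a free group and h₁, …, h_k ∈ H be non-trivial elements such that ⟨h_i⟩ ∩ ⟨h_j⟩ = {1} for all i < j. Then there exists r ∈ ℕ such that h₁^r, …, h_k^r freely generate a free subgroup of rank k in H. -/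
namespace FGPP
open List FreeGroup

variable {α : Type*} [DecidableEq α]

/-- Non-cancelling pair of letters. -/
def NC (a b : α × Bool) : Prop := ¬(a.1 = b.1 ∧ a.2 = !b.2)

/-- A word is reduced. -/
def Reduced (w : List (α × Bool)) : Prop := w.Chain' NC

theorem Reduced.reduce_eq {w : List (α × Bool)} (h : Reduced w) : reduce w = w := by
  induction w with
  | nil => rfl
  | cons x w ih =>
    have hw : Reduced w := h.tail
    rw [reduce.cons, ih hw]
    cases w with
    | nil => rfl
    | cons y t =>
      have : NC x y := (List.isChain_cons_cons.1 h).1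
      simp only [NC] at this
      simp [this]

theorem reduced_reduce (w : List (α × Bool)) : Reduced (reduce w) := by
  induction w with
  | nil => exact List.isChain_nil
  | cons x w ih =>
    rw [reduce.cons]
    cases hr : reduce w with
    | nil => exact List.isChain_singleton x
    | cons y t =>
      rw [hr] at ih
      show Reduced (if x.1 = y.1 ∧ x.2 = !y.2 then t else x :: y :: t)
      split_ifs with hc
      · exact ih.tail
      · exact List.isChain_cons_cons.2 ⟨hc, ih⟩

theorem reduced_iff {w : List (α × Bool)} : Reduced w ↔ reduce w = w :=
  ⟨Reduced.reduce_eq, fun h => h ▸ reduced_reduce w⟩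

theorem reduced_toWord (x : FreeGroup α) : Reduced x.toWord :=
  reduced_iff.2 (reduce_toWord x)

theorem Reduced.toWord_mk {w : List (α × Bool)} (h : Reduced w) :
    (FreeGroup.mk w).toWord = w := by
  rw [FreeGroup.toWord_mk, h.reduce_eq]

omit [DecidableEq α] in
theorem Reduced.infix {w v : List (α × Bool)} (h : Reduced w) (hv : v <:+: w) : Reduced v :=
  List.IsChain.infix h hv

theorem Reduced.invRev {w : List (α × Bool)} (h : Reduced w) : Reduced (invRev w) := by
  rw [reduced_iff] at h ⊢
  rw [FreeGroup.reduce_invRev, h]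

omit [DecidableEq α] in
theorem eq_flip_of_not_nc {x y : α × Bool} (h : ¬ NC x y) : y = (x.1, !x.2) := by
  simp only [NC, not_not] at h
  obtain ⟨h1, h2⟩ := h
  obtain ⟨a, b⟩ := x; obtain ⟨c, d⟩ := y
  simp_all

omit [DecidableEq α] in
theorem invRev_append' (l₁ l₂ : List (α × Bool)) :
    invRev (l₁ ++ l₂) = invRev l₂ ++ invRev l₁ := by
  simp [invRev]

omit [DecidableEq α] in
theorem invRev_singleton (x : α × Bool) : invRev [x] = [(x.1, !x.2)] := by
  simp [invRev]

omit [DecidableEq α] in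
theorem Reduced.tail' {x : α × Bool} {t : List (α × Bool)} (h : Reduced (x :: t)) : Reduced t :=
  List.IsChain.tail h

theorem reduce_append (s : List (α × Bool)) : ∀ t : List (α × Bool), Reduced s → Reduced t →
    ∃ s₁ d t₁, s = s₁ ++ d ∧ t = invRev d ++ t₁ ∧ reduce (s ++ t) = s₁ ++ t₁ := by
  induction s using List.reverseRecOn with
  | nil =>
    intro t _ ht
    exact ⟨[], [], t, rfl, by simp [invRev], by simpa using ht.reduce_eq⟩
  | append_singleton s' x ih =>
    intro t hs ht
    cases t with
    | nil =>
      exact ⟨s' ++ [x], [], [], by simp, by simp [invRev], by simpa using hs.reduce_eq⟩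
    | cons y t' =>
      by_cases hc : NC x y
      · refine ⟨s' ++ [x], [], y :: t', by simp, by simp [invRev], ?_⟩
        have hred : Reduced ((s' ++ [x]) ++ y :: t') := by
          refine List.isChain_append.2 ⟨hs, ht, ?_⟩
          intro a ha b hb
          simp only [List.getLast?_concat, Option.mem_some_iff] at ha
          simp only [List.head?_cons, Option.mem_some_iff] at hb
          subst ha; subst hb; exact hc
        exact hred.reduce_eq
      · have hy : y = (x.1, !x.2) := eq_flip_of_not_nc hc
        have hs' : Reduced s' := hs.infix ⟨[], [x], by simp⟩
        have ht' : Reduced t' := ht.tail'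
        obtain ⟨s₁, d, t₁, h1, h2, h3⟩ := ih t' hs' ht'
        refine ⟨s₁, d ++ [x], t₁, by rw [h1, List.append_assoc], ?_, ?_⟩
        · rw [invRev_append', invRev_singleton, hy, h2]; simp
        · have e1 : (s' ++ [x]) ++ y :: t' = s' ++ (x.1, x.2) :: (x.1, !x.2) :: t' := by
            rw [hy]; simp
          rw [e1, reduce.Step.eq Red.Step.not, h3]

/-! ### Word powers -/

def wpow (C : List (α × Bool)) : ℕ → List (α × Bool)
  | 0 => []
  | n+1 => C ++ wpow C n

omit [DecidableEq α] in
theorem wpow_length (C : List (α × Bool)) (n : ℕ) : (wpow C n).length = n * C.length := by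
  induction n with
  | zero => simp [wpow]
  | succ n ih => simp [wpow, ih]; ring

omit [DecidableEq α] in
theorem wpow_succ (C : List (α × Bool)) (n : ℕ) : wpow C (n + 1) = C ++ wpow C n := rfl

omit [DecidableEq α] in
theorem wpow_succ_right (C : List (α × Bool)) (n : ℕ) :
    wpow C (n + 1) = wpow C n ++ C := by
  induction n with
  | zero => simp [wpow_succ, wpow]
  | succ n ih =>
    have h2 : C ++ wpow C n = wpow C n ++ C := (wpow_succ C n).symm.trans ih
    calc wpow C (n + 1 + 1) = C ++ wpow C (n + 1) := rfl
      _ = C ++ (wpow C n ++ C) := by rw [ih]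
      _ = (C ++ wpow C n) ++ C := by rw [List.append_assoc]
      _ = (wpow C n ++ C) ++ C := by rw [h2]
      _ = wpow C (n + 1) ++ C := by rw [ih]

omit [DecidableEq α] in
theorem mk_wpow (C : List (α × Bool)) (n : ℕ) :
    FreeGroup.mk (wpow C n) = (FreeGroup.mk C) ^ n := by
  induction n with
  | zero => simp [wpow]; rfl
  | succ n ih => rw [wpow_succ, ← mul_mk, ih, ← pow_succ']

omit [DecidableEq α] in
theorem wpow_prefix (C : List (α × Bool)) {m n : ℕ} (h : m ≤ n) :
    wpow C m <+: wpow C n := by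
  induction n with
  | zero => interval_cases m; exact List.prefix_refl _
  | succ n ih =>
    rcases Nat.lt_or_ge m (n + 1) with hm | hm
    · rw [wpow_succ_right]; exact (ih (by omega)).trans (List.prefix_append _ _)
    · have : m = n + 1 := by omega
      subst this; exact List.prefix_refl _

omit [DecidableEq α] in
theorem invRev_wpow (C : List (α × Bool)) (n : ℕ) :
    invRev (wpow C n) = wpow (invRev C) n := by
  induction n with
  | zero => simp [wpow, invRev]
  | succ n ih => rw [wpow_succ, invRev_append', ih, wpow_succ_right]

omit [DecidableEq α] in
theorem head?_wpow {C : List (α × Bool)} (hC : C ≠ []) {n : ℕ} (hn : 0 < n) :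
    (wpow C n).head? = C.head? := by
  cases n with
  | zero => omega
  | succ m => rw [wpow_succ, List.head?_append_of_ne_nil _ hC]

omit [DecidableEq α] in
theorem getLast?_wpow {C : List (α × Bool)} (hC : C ≠ []) {n : ℕ} (hn : 0 < n) :
    (wpow C n).getLast? = C.getLast? := by
  cases n with
  | zero => omega
  | succ m =>
    rw [wpow_succ_right, List.getLast?_append]
    cases hl : C.getLast? with
    | none => exact absurd (List.getLast?_eq_none_iff.1 hl) hC
    | some a => rfl

omit [DecidableEq α] in
theorem wpow_ne_nil {C : List (α × Bool)} (hC : C ≠ []) {n : ℕ} (hn : 0 < n) :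
    wpow C n ≠ [] := by
  intro h
  have := wpow_length C n
  rw [h] at this
  simp only [List.length_nil] at this
  rcases C with _ | ⟨c, C⟩
  · exact hC rfl
  · simp at this; omega

/-- Cyclically reduced word. -/
def CycRed (C : List (α × Bool)) : Prop :=
  Reduced C ∧ C ≠ [] ∧ ∀ a ∈ C.getLast?, ∀ b ∈ C.head?, NC a b

omit [DecidableEq α] in
theorem CycRed.wpow_reduced {C : List (α × Bool)} (h : CycRed C) (n : ℕ) :
    Reduced (wpow C n) := by
  obtain ⟨hred, hne, hj⟩ := h
  induction n with
  | zero => exact List.isChain_nil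
  | succ n ih =>
    rw [wpow]
    refine List.isChain_append.2 ⟨hred, ih, ?_⟩
    intro a ha b hb
    rcases Nat.eq_zero_or_pos n with rfl | hn
    · simp [wpow] at hb
    · rw [head?_wpow hne hn] at hb
      exact hj a ha b hb

omit [DecidableEq α] in
theorem CycRed.invRev {C : List (α × Bool)} (h : CycRed C) : CycRed (FreeGroup.invRev C) := by
  classical
  obtain ⟨hred, hne, hj⟩ := h
  refine ⟨hred.invRev, ?_, ?_⟩
  · intro hnil
    exact hne (FreeGroup.invRev_injective (by simpa [FreeGroup.invRev_empty] using hnil))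
  · intro a ha b hb
    simp only [FreeGroup.invRev, List.getLast?_reverse, List.head?_reverse, List.head?_map,
      List.getLast?_map, Option.mem_def, Option.map_eq_some_iff] at ha hb
    obtain ⟨b₀, hb₀, rfl⟩ := ha
    obtain ⟨a₀, ha₀, rfl⟩ := hb
    intro ⟨e1, e2⟩
    refine hj a₀ ha₀ b₀ hb₀ ⟨e1.symm, ?_⟩
    revert e2
    cases a₀.2 <;> cases b₀.2 <;> simp

omit [DecidableEq α] in
theorem nc_self (x : α × Bool) : NC x x := by
  rintro ⟨-, h2⟩
  exact (Bool.eq_not_self x.2).elim (by simpa using h2)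

omit [DecidableEq α] in
theorem cyc_red_exists : ∀ (n : ℕ) (w : List (α × Bool)), w.length ≤ n → Reduced w → w ≠ [] →
    ∃ U C, w = U ++ C ++ invRev U ∧ CycRed C := by
  intro n
  induction n with
  | zero =>
    intro w hl _ hne
    rw [Nat.le_zero, List.length_eq_zero_iff] at hl
    exact absurd hl hne
  | succ n ih =>
    intro w hl hred hne
    by_cases hj : ∀ a ∈ w.getLast?, ∀ b ∈ w.head?, NC a b
    · exact ⟨[], w, by simp [invRev], hred, hne, hj⟩
    · push_neg at hj
      obtain ⟨a, ha, b, hb, hnc⟩ := hj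
      have hbval : b = (a.1, !a.2) := eq_flip_of_not_nc hnc
      rcases w with _ | ⟨b', t⟩
      · exact absurd rfl hne
      have hbeq : b' = b := by simpa using hb
      subst hbeq
      rcases List.eq_nil_or_concat t with rfl | ⟨L, a2, rfl⟩
      · -- w = [b], so a = b, but NC a a always holds
        have hba : b' = a := by simpa using ha
        subst hba
        exact absurd (nc_self _) hnc
      have haeq : a = a2 := by
        have : (b' :: (L ++ [a2])).getLast? = some a2 := by
          rw [show b' :: (L ++ [a2]) = (b' :: L) ++ [a2] by simp, List.getLast?_concat]
        rw [List.concat_eq_append, this] at ha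
        simpa using ha.symm
      rw [haeq] at hbval
      rcases L with _ | ⟨c, L'⟩
      · -- w = [b, a] with b = flip a : not reduced, contradiction
        exfalso
        have h2 : List.Chain' NC [b', a2] := by simpa [Reduced] using hred
        have : NC b' a2 := (List.isChain_cons_cons.1 h2).1
        rw [hbval] at this
        exact this ⟨rfl, rfl⟩
      · set L := c :: L' with hL
        have hLred : Reduced L := hred.infix ⟨[b'], [a2], by simp⟩
        have hLlen : L.length ≤ n := by
          simp only [List.concat_eq_append, List.length_cons, List.length_append] at hl
          simp only [hL, List.length_cons] at *
          omega
        obtain ⟨U, C, hUC, hC⟩ := ih L hLlen hLred (by simp [hL])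
        refine ⟨b' :: U, C, ?_, hC⟩
        have hflip : (b'.1, !b'.2) = a2 := by rw [hbval]; simp
        rw [List.concat_eq_append, hUC]
        show b' :: ((U ++ C ++ invRev U) ++ [a2]) = ([b'] ++ U) ++ C ++ invRev ([b'] ++ U)
        rw [invRev_append', invRev_singleton, hflip]
        simp

omit [DecidableEq α] in
theorem reduced_conj_wpow {U C : List (α × Bool)} (h1 : Reduced (U ++ C ++ invRev U))
    (hC : CycRed C) {n : ℕ} (hn : 0 < n) : Reduced (U ++ wpow C n ++ invRev U) := by
  obtain ⟨hCred, hCne, hCj⟩ := hC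
  obtain ⟨h12, hIU, hj2⟩ := List.isChain_append.1 h1
  obtain ⟨hU, -, hj1⟩ := List.isChain_append.1 h12
  have hwne : wpow C n ≠ [] := wpow_ne_nil hCne hn
  refine List.isChain_append.2 ⟨List.isChain_append.2 ⟨hU, CycRed.wpow_reduced ⟨hCred, hCne, hCj⟩ n, ?_⟩, hIU, ?_⟩
  · intro x hx y hy
    rw [head?_wpow hCne hn] at hy
    exact hj1 x hx y hy
  · intro x hx y hy
    refine hj2 x ?_ y hy
    rw [List.getLast?_append, getLast?_wpow hCne hn] at hx
    rw [List.getLast?_append]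
    exact hx

theorem toWord_pow {g : FreeGroup α} {U C : List (α × Bool)}
    (hg : g.toWord = U ++ C ++ invRev U) (hC : CycRed C) {n : ℕ} (hn : 0 < n) :
    (g ^ n).toWord = U ++ wpow C n ++ invRev U := by
  have hgmk : g = FreeGroup.mk U * FreeGroup.mk C * (FreeGroup.mk U)⁻¹ := by
    rw [inv_mk, mul_mk, mul_mk, ← hg, mk_toWord]
  have hpow : g ^ n = FreeGroup.mk (U ++ wpow C n ++ invRev U) := by
    rw [hgmk, conj_pow, ← mul_mk, ← mul_mk, mk_wpow, inv_mk]
  rw [hpow]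
  exact (reduced_conj_wpow (hg ▸ reduced_toWord g) hC hn).toWord_mk

/-! ### Rays -/

section Ray

variable [Inhabited (α × Bool)]

/-- The `n`-th letter of the infinite word `U C C C ⋯`. -/
def ray (U C : List (α × Bool)) (n : ℕ) : α × Bool :=
  (U ++ wpow C (n + 1)).getD n default

omit [DecidableEq α] in
omit [Inhabited (α × Bool)] in
theorem prefix_wpow_append {U C : List (α × Bool)} {m₁ m₂ : ℕ} (h : m₁ ≤ m₂) :
    U ++ wpow C m₁ <+: U ++ wpow C m₂ := by
  obtain ⟨t, ht⟩ := wpow_prefix C h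
  exact ⟨t, by rw [List.append_assoc, ht]⟩

omit [DecidableEq α] in
theorem ray_eq_getD {U C : List (α × Bool)} (hC : C ≠ []) {m n : ℕ}
    (h : n < U.length + m * C.length) :
    (U ++ wpow C m).getD n default = ray U C n := by
  have hCpos : 0 < C.length := List.length_pos_iff.2 hC
  have hlen : ∀ t : ℕ, (U ++ wpow C t).length = U.length + t * C.length := by
    intro t; rw [List.length_append, wpow_length]
  rcases Nat.le_total m (n + 1) with hm | hm
  · have hpre := prefix_wpow_append (U := U) (C := C) hm
    have h1 : n < (U ++ wpow C m).length := by rw [hlen]; omega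
    rw [List.getD_eq_getElem _ _ h1, ray,
      List.getD_eq_getElem _ _ (by rw [hlen]; nlinarith), hpre.getElem h1]
  · have hpre := prefix_wpow_append (U := U) (C := C) hm
    have h1 : n < (U ++ wpow C (n + 1)).length := by rw [hlen]; nlinarith
    rw [ray, List.getD_eq_getElem _ _ h1,
      List.getD_eq_getElem _ _ (by rw [hlen]; nlinarith), hpre.getElem h1]

omit [DecidableEq α] in
theorem ray_period {U C : List (α × Bool)} (hC : C ≠ []) {n : ℕ} (hn : U.length ≤ n) :
    ray U C (n + C.length) = ray U C n := by
  have hCpos : 0 < C.length := List.length_pos_iff.2 hC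
  have e1 : (U ++ wpow C (n + 2)).getD (n + C.length) default = ray U C (n + C.length) :=
    ray_eq_getD hC (by nlinarith)
  have e2 : (U ++ wpow C (n + 1)).getD n default = ray U C n :=
    ray_eq_getD hC (by nlinarith)
  rw [← e1, ← e2]
  have hsplit : U ++ wpow C (n + 2) = (U ++ C) ++ wpow C (n + 1) := by
    rw [wpow_succ (C := C) (n := n + 1), List.append_assoc]
  have h1 : n + C.length < (U ++ wpow C (n + 2)).length := by
    rw [List.length_append, wpow_length]; nlinarith
  have h2 : n < (U ++ wpow C (n + 1)).length := by
    rw [List.length_append, wpow_length]; nlinarith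
  rw [List.getD_eq_getElem _ _ h1, List.getD_eq_getElem _ _ h2]
  have h3 : n + C.length < ((U ++ C) ++ wpow C (n + 1)).length := by rw [← hsplit]; exact h1
  rw [List.getElem_of_eq hsplit]
  rw [List.getElem_append_right (by rw [List.length_append]; omega),
    List.getElem_append_right hn]
  congr 1
  rw [List.length_append]
  omega

omit [DecidableEq α] in
theorem ray_period_mul {U C : List (α × Bool)} (hC : C ≠ []) {n : ℕ} (hn : U.length ≤ n)
    (t : ℕ) : ray U C (n + t * C.length) = ray U C n := by
  induction t with
  | zero => simp
  | succ t ih =>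
    have : n + (t + 1) * C.length = (n + t * C.length) + C.length := by ring
    rw [this, ray_period hC (by omega), ih]

/-- The length-`n` prefix of the ray, as a word. -/
def rayList (U C : List (α × Bool)) (n : ℕ) : List (α × Bool) :=
  List.ofFn (fun i : Fin n => ray U C i)

omit [DecidableEq α] in
theorem rayList_eq {U C : List (α × Bool)} (hC : C ≠ []) {m n : ℕ}
    (h : U.length + m * C.length = n) : rayList U C n = U ++ wpow C m := by
  apply List.ext_getElem
  · rw [rayList]; rw [List.length_ofFn, List.length_append, wpow_length, h]
  · intro i h1 h2
    simp only [rayList] at h1 ⊢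
    rw [List.getElem_ofFn, ← List.getD_eq_getElem (U ++ wpow C m) default h2,
      ray_eq_getD hC]
    rw [List.length_append, wpow_length] at h2
    omega

omit [DecidableEq α] in
theorem rayList_add (U C : List (α × Bool)) (n d : ℕ) :
    rayList U C (n + d) = rayList U C n ++ List.ofFn (fun i : Fin d => ray U C (n + i)) := by
  simp only [rayList]
  rw [List.ofFn_add]
  rfl

end Ray

theorem conj_form {g : FreeGroup α} {U C : List (α × Bool)}
    (hg : g.toWord = U ++ C ++ invRev U) :
    g = FreeGroup.mk U * FreeGroup.mk C * (FreeGroup.mk U)⁻¹ := by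
  rw [inv_mk, mul_mk, mul_mk, ← hg, mk_toWord]

theorem commensurable_of_ray_eq [Inhabited (α × Bool)]
    {U₁ C₁ U₂ C₂ : List (α × Bool)} {g₁ g₂ : FreeGroup α}
    (h₁ : g₁.toWord = U₁ ++ C₁ ++ invRev U₁) (hC₁ : CycRed C₁)
    (h₂ : g₂.toWord = U₂ ++ C₂ ++ invRev U₂) (hC₂ : CycRed C₂)
    (hray : ray U₁ C₁ = ray U₂ C₂) :
    g₁ ^ C₂.length = g₂ ^ C₁.length := by
  have hne₁ : C₁ ≠ [] := hC₁.2.1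
  have hne₂ : C₂ ≠ [] := hC₂.2.1
  have hp₁ : 0 < C₁.length := List.length_pos_iff.2 hne₁
  have hp₂ : 0 < C₂.length := List.length_pos_iff.2 hne₂
  set ℓ₁ := C₁.length with hℓ₁
  set ℓ₂ := C₂.length with hℓ₂
  set z : ℕ → FreeGroup α := fun n => FreeGroup.mk (rayList U₁ C₁ n) with hz
  have hz2 : ∀ n, FreeGroup.mk (rayList U₂ C₂ n) = z n := by
    intro n; simp only [hz, rayList, hray]
  have key₁ : ∀ m, z (U₁.length + m * ℓ₁) = FreeGroup.mk U₁ * (FreeGroup.mk C₁) ^ m := by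
    intro m
    show FreeGroup.mk (rayList U₁ C₁ (U₁.length + m * ℓ₁)) = _
    rw [rayList_eq hne₁ (by rw [hℓ₁]), ← mul_mk, mk_wpow]
  have key₂ : ∀ m, z (U₂.length + m * ℓ₂) = FreeGroup.mk U₂ * (FreeGroup.mk C₂) ^ m := by
    intro m
    rw [← hz2, rayList_eq hne₂ (by rw [hℓ₂]), ← mul_mk, mk_wpow]
  set n₁ := U₁.length with hn₁
  set n₂ := U₂.length + U₁.length * ℓ₂ with hn₂
  set L := ℓ₁ * ℓ₂ with hL
  have hn₁₂ : n₁ ≤ n₂ := by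
    have : U₁.length ≤ U₁.length * ℓ₂ := Nat.le_mul_of_pos_right _ hp₂
    omega
  -- g₁ ^ ℓ₂ = z (n₁ + L) * (z n₁)⁻¹
  have e₁ : g₁ ^ ℓ₂ = z (n₁ + L) * (z n₁)⁻¹ := by
    have a0 : z n₁ = FreeGroup.mk U₁ * (FreeGroup.mk C₁) ^ 0 := by
      simpa using key₁ 0
    have a1 : z (n₁ + L) = FreeGroup.mk U₁ * (FreeGroup.mk C₁) ^ ℓ₂ := by
      have : n₁ + L = U₁.length + ℓ₂ * ℓ₁ := by rw [hn₁, hL]; ring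
      rw [this, key₁]
    rw [a0, a1, conj_form h₁, conj_pow]
    group
  -- g₂ ^ ℓ₁ = z (n₂ + L) * (z n₂)⁻¹
  have e₂ : g₂ ^ ℓ₁ = z (n₂ + L) * (z n₂)⁻¹ := by
    have a0 : z n₂ = FreeGroup.mk U₂ * (FreeGroup.mk C₂) ^ U₁.length := by
      rw [hn₂, key₂]
    have a1 : z (n₂ + L) = FreeGroup.mk U₂ * (FreeGroup.mk C₂) ^ (U₁.length + ℓ₁) := by
      have : n₂ + L = U₂.length + (U₁.length + ℓ₁) * ℓ₂ := by rw [hn₂, hL]; ring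
      rw [this, key₂]
    rw [a0, a1, conj_form h₂, conj_pow, pow_add]
    group
  -- the connecting segment
  have hseg : ∀ n d : ℕ, z (n + d) = z n * FreeGroup.mk (List.ofFn fun i : Fin d => ray U₁ C₁ (n + i)) := by
    intro n d
    rw [hz]
    simp only
    rw [rayList_add, ← mul_mk]
  have hper : (List.ofFn fun i : Fin (n₂ - n₁) => ray U₁ C₁ (n₁ + L + i)) =
      (List.ofFn fun i : Fin (n₂ - n₁) => ray U₁ C₁ (n₁ + i)) := by
    congr 1
    funext i
    have : n₁ + L + (i : ℕ) = (n₁ + i) + ℓ₂ * ℓ₁ := by rw [hL]; ring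
    rw [this, ray_period_mul hne₁ (by omega)]
  have d₂ : z n₂ = z n₁ * FreeGroup.mk (List.ofFn fun i : Fin (n₂ - n₁) => ray U₁ C₁ (n₁ + i)) := by
    have h' : n₂ = n₁ + (n₂ - n₁) := by omega
    conv_lhs => rw [h']
    exact hseg n₁ (n₂ - n₁)
  have d₃ : z (n₂ + L) =
      z (n₁ + L) * FreeGroup.mk (List.ofFn fun i : Fin (n₂ - n₁) => ray U₁ C₁ (n₁ + L + i)) := by
    have h' : n₂ + L = (n₁ + L) + (n₂ - n₁) := by omega
    conv_lhs => rw [h']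
    exact hseg (n₁ + L) (n₂ - n₁)
  rw [e₁, e₂, d₂, d₃, hper]
  group

theorem pow_ne_one {g : FreeGroup α} {U C : List (α × Bool)}
    (hg : g.toWord = U ++ C ++ invRev U) (hC : CycRed C) {n : ℕ} (hn : 0 < n) :
    g ^ n ≠ 1 := by
  intro hone
  have := toWord_pow hg hC hn
  rw [hone, toWord_one] at this
  have hlen := congrArg List.length this
  rw [List.length_nil, List.length_append, List.length_append, wpow_length] at hlen
  have := List.length_pos_iff.2 hC.2.1
  nlinarith

section RayHead

variable [Inhabited (α × Bool)]

omit [DecidableEq α] in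
theorem ray_head {U C : List (α × Bool)} (hC : C ≠ []) :
    ray U C U.length = C.head hC := by
  have hCpos : 0 < C.length := List.length_pos_iff.2 hC
  have h1 : U.length < (U ++ wpow C (U.length + 1)).length := by
    rw [List.length_append, wpow_length]; nlinarith
  rw [ray, List.getD_eq_getElem _ _ h1, List.getElem_append_right (Nat.le_refl _)]
  simp only [Nat.sub_self]
  rw [List.getElem_of_eq (show wpow C (U.length + 1) = C ++ wpow C U.length from rfl)]
  rw [List.getElem_append_left hCpos]
  simp [List.head_eq_getElem]

omit [DecidableEq α] [Inhabited (α × Bool)] in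
theorem invRev_ne_nil {C : List (α × Bool)} (hC : C ≠ []) : invRev C ≠ [] := by
  intro h
  exact hC (invRev_injective (by simpa [invRev_empty] using h))

omit [DecidableEq α] in
theorem head_invRev {C : List (α × Bool)} (hC : C ≠ []) :
    (invRev C).head (invRev_ne_nil hC) = ((C.getLast hC).1, !(C.getLast hC).2) := by
  simp only [invRev]
  rw [List.head_reverse, List.getLast_map]

omit [DecidableEq α] in
theorem ray_ne_flip {U C : List (α × Bool)} (hC : CycRed C) :
    ray U C ≠ ray U (invRev C) := by
  intro hEq
  have hne := hC.2.1
  have := congrFun hEq U.length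
  rw [ray_head hne, ray_head (invRev_ne_nil hne)] at this
  rw [head_invRev hne] at this
  refine hC.2.2 (C.getLast hne) ?_ (C.head hne) ?_ ?_
  · rw [List.getLast?_eq_getLast hne]; rfl
  · rw [List.head?_eq_head hne]; rfl
  · rw [this]
    exact ⟨rfl, by simp⟩

end RayHead

/-- The key cancellation step for the ping-pong argument. -/
theorem key_step {g : FreeGroup α} {U C : List (α × Bool)}
    (hg : g.toWord = U ++ C ++ invRev U) (hC : CycRed C) {M : ℕ} (hM : 0 < M) {v : FreeGroup α}
    (hv : ¬ (U ++ wpow (invRev C) M <+: v.toWord)) :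
    U ++ wpow C M <+: (g ^ (2 * M) * v).toWord := by
  have hCpos : 0 < C.length := List.length_pos_iff.2 hC.2.1
  set r := 2 * M with hr
  have hrpos : 0 < r := by omega
  set s := (g ^ r).toWord with hs
  have hsval : s = U ++ wpow C r ++ invRev U := toWord_pow hg hC hrpos
  set t := v.toWord with ht
  have hsred : Reduced s := reduced_toWord _
  have htred : Reduced t := reduced_toWord _
  obtain ⟨s₁, d, t₁, hd1, hd2, hd3⟩ := reduce_append s t hsred htred
  have htoword : (g ^ r * v).toWord = s₁ ++ t₁ := by
    rw [← mk_toWord (x := g ^ r), ← mk_toWord (x := v), ← hs, ← ht, mul_mk, toWord_mk, hd3]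
  -- invRev s
  have hinv : invRev s = U ++ wpow (invRev C) r ++ invRev U := by
    rw [hsval, invRev_append', invRev_append', invRev_invRev, invRev_wpow, List.append_assoc]
  -- bound on the cancelled part d
  have hdbound : d.length < U.length + M * C.length := by
    by_contra hbig
    push_neg at hbig
    apply hv
    -- invRev d is a prefix of t
    have hdp : invRev d <+: t := ⟨t₁, hd2.symm⟩
    -- invRev d is a prefix of invRev s
    have hds : invRev d <+: invRev s := by
      rw [hd1, invRev_append']
      exact ⟨invRev s₁, rfl⟩
    -- the target word is a prefix of invRev s
    have hQ : U ++ wpow (invRev C) M <+: invRev s := by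
      rw [hinv, List.append_assoc]
      exact (prefix_wpow_append (U := U) (C := invRev C) (m₂ := r) (by omega)).trans
        ⟨invRev U, by rw [List.append_assoc]⟩
    have hlen : (U ++ wpow (invRev C) M).length ≤ (invRev d).length := by
      rw [List.length_append, wpow_length, invRev_length, invRev_length]
      omega
    exact (List.prefix_of_prefix_length_le hQ hds hlen).trans hdp
  -- s₁ is long enough
  have hslen : s.length = 2 * U.length + r * C.length := by
    rw [hsval, List.length_append, List.length_append, wpow_length, invRev_length]
    ring
  have hs1len : U.length + M * C.length ≤ s₁.length := by
    have hsum : s.length = s₁.length + d.length := by rw [hd1, List.length_append]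
    have hrc : r * C.length = 2 * (M * C.length) := by rw [hr]; ring
    rw [hslen, hrc] at hsum
    omega
  -- the target prefix
  have hP : U ++ wpow C M <+: s := by
    rw [hsval]
    exact (prefix_wpow_append (U := U) (C := C) (m₂ := r) (by omega)).trans ⟨invRev U, rfl⟩
  have hs1p : s₁ <+: s := ⟨d, hd1.symm⟩
  have : U ++ wpow C M <+: s₁ := by
    refine List.prefix_of_prefix_length_le hP hs1p ?_
    rw [List.length_append, wpow_length]
    omega
  rw [htoword]
  exact this.trans ⟨t₁, rfl⟩

/-! ### Main theorem for free groups, `k ≥ 2` -/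

theorem main_free {α : Type u} [DecidableEq α] {k : ℕ} (hk : 2 ≤ k) (h : Fin k → FreeGroup α)
    (hne : ∀ i, h i ≠ 1)
    (hint : ∀ i j : Fin k, i ≠ j → ∀ x : FreeGroup α,
      x ∈ Subgroup.zpowers (h i) → x ∈ Subgroup.zpowers (h j) → x = 1) :
    ∃ r : ℕ, 0 < r ∧ Function.Injective (FreeGroup.lift fun i => h i ^ r) := by
  haveI : Nontrivial (Fin k) := Fin.nontrivial_iff_two_le.2 hk
  -- a default letter
  have hw0 : (h ⟨0, by omega⟩).toWord ≠ [] := by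
    rw [ne_eq, toWord_eq_nil_iff]; exact hne _
  haveI : Inhabited (α × Bool) := ⟨(h ⟨0, by omega⟩).toWord.head hw0⟩
  -- cyclically reduced decompositions
  have hdata : ∀ i : Fin k, ∃ U C, (h i).toWord = U ++ C ++ invRev U ∧ CycRed C := fun i =>
    cyc_red_exists ((h i).toWord).length _ le_rfl (reduced_toWord _)
      (by rw [ne_eq, toWord_eq_nil_iff]; exact hne i)
  choose U C hUC hCR using hdata
  -- signed data, indexed by `Fin k × Bool`
  set gp : Fin k × Bool → FreeGroup α := fun p => if p.2 then h p.1 else (h p.1)⁻¹ with hgp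
  set Cp : Fin k × Bool → List (α × Bool) := fun p => if p.2 then C p.1 else invRev (C p.1)
    with hCp
  have hUCp : ∀ p : Fin k × Bool, (gp p).toWord = U p.1 ++ Cp p ++ invRev (U p.1) := by
    rintro ⟨i, (_|_)⟩
    · show ((h i)⁻¹).toWord = U i ++ invRev (C i) ++ invRev (U i)
      rw [toWord_inv, hUC, invRev_append', invRev_append', invRev_invRev, ← List.append_assoc]
    · exact hUC i
  have hCRp : ∀ p : Fin k × Bool, CycRed (Cp p) := by
    rintro ⟨i, (_|_)⟩
    · exact (hCR i).invRev
    · exact hCR i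
  have hCplen : ∀ p : Fin k × Bool, (Cp p).length = (C p.1).length := by
    rintro ⟨i, (_|_)⟩
    · exact invRev_length
    · rfl
  have hCppos : ∀ p : Fin k × Bool, 0 < (Cp p).length := fun p =>
    List.length_pos_iff.2 (hCRp p).2.1
  -- membership of powers
  have hmem : ∀ (p : Fin k × Bool) (n : ℕ), gp p ^ n ∈ Subgroup.zpowers (h p.1) := by
    rintro ⟨i, (_|_)⟩ n
    · exact ⟨-(n : ℤ), by simp [hgp, zpow_neg, zpow_natCast, inv_pow]⟩
    · exact ⟨(n : ℤ), by simp [hgp, zpow_natCast]⟩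
  -- distinct rays
  have hraysne : ∀ p q : Fin k × Bool, p ≠ q → ray (U p.1) (Cp p) ≠ ray (U q.1) (Cp q) := by
    rintro ⟨i, si⟩ ⟨j, sj⟩ hpq hEq
    by_cases hij : i = j
    · subst hij
      have hs : si ≠ sj := fun hs => hpq (by rw [hs])
      cases si <;> cases sj <;> simp_all
      · exact ray_ne_flip (hCR i) hEq.symm
      · exact ray_ne_flip (hCR i) hEq
    · -- commensurability contradiction
      have hcomm := commensurable_of_ray_eq (hUCp (i, si)) (hCRp (i, si))
        (hUCp (j, sj)) (hCRp (j, sj)) hEq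
      have hx1 : gp (i, si) ^ (Cp (j, sj)).length ≠ 1 :=
        pow_ne_one (hUCp (i, si)) (hCRp (i, si)) (hCppos (j, sj))
      refine hx1 (hint i j hij _ (hmem (i, si) _) ?_)
      rw [hcomm]
      exact hmem (j, sj) _
  -- difference indices
  have hdiff : ∀ p q : Fin k × Bool, ∃ n, p ≠ q →
      ray (U p.1) (Cp p) n ≠ ray (U q.1) (Cp q) n := by
    intro p q
    by_cases hpq : p = q
    · exact ⟨0, fun hc => absurd hpq hc⟩
    · obtain ⟨n, hn⟩ := Function.ne_iff.1 (hraysne p q hpq)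
      exact ⟨n, fun _ => hn⟩
  choose nf hnf using hdiff
  set M : ℕ := (Finset.univ.sup fun pq : (Fin k × Bool) × (Fin k × Bool) => nf pq.1 pq.2) + 1
    with hM
  have hMpos : 0 < M := Nat.succ_pos _
  have hnfM : ∀ p q : Fin k × Bool, nf p q < M := by
    intro p q
    have hle : nf p q ≤ Finset.univ.sup
        (fun pq : (Fin k × Bool) × (Fin k × Bool) => nf pq.1 pq.2) := by
      simpa using Finset.le_sup (f := fun pq : (Fin k × Bool) × (Fin k × Bool) => nf pq.1 pq.2)
        (Finset.mem_univ (p, q))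
    omega
  -- the prefix words
  set P : Fin k × Bool → List (α × Bool) := fun p => U p.1 ++ wpow (Cp p) M with hP
  have hPray : ∀ p, P p = rayList (U p.1) (Cp p) ((U p.1).length + M * (Cp p).length) :=
    fun p => (rayList_eq (hCRp p).2.1 rfl).symm
  have hPlen : ∀ p, M ≤ (P p).length := by
    intro p
    rw [hP]
    simp only [List.length_append, wpow_length]
    have := hCppos p
    nlinarith
  have hPget : ∀ p (n : ℕ) (hn : n < (P p).length), (P p)[n] = ray (U p.1) (Cp p) n := by
    intro p n hn
    have hn' : n < (rayList (U p.1) (Cp p) ((U p.1).length + M * (Cp p).length)).length := by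
      rw [← hPray]; exact hn
    rw [List.getElem_of_eq (hPray p) hn]
    simp only [rayList] at hn' ⊢
    rw [List.getElem_ofFn]
  -- incomparability of the prefix words
  have haux : ∀ p q : Fin k × Bool, p ≠ q → (P p).length ≤ (P q).length →
      ∀ l : List (α × Bool), P p <+: l → P q <+: l → False := by
    intro p q hpq hle l h1 h2
    have hpre : P p <+: P q := List.prefix_of_prefix_length_le h1 h2 hle
    have hn : nf p q < (P p).length := lt_of_lt_of_le (hnfM p q) (hPlen p)
    have := hpre.getElem hn
    rw [hPget p _ hn, hPget q _ (lt_of_lt_of_le hn hle)] at this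
    exact hnf p q hpq this
  have hincomp : ∀ p q : Fin k × Bool, p ≠ q →
      ∀ l : List (α × Bool), P p <+: l → P q <+: l → False := by
    intro p q hpq l h1 h2
    rcases le_total (P p).length (P q).length with hle | hle
    · exact haux p q hpq hle l h1 h2
    · exact haux q p hpq.symm hle l h2 h1
  -- P p is reduced
  have hPred : ∀ p, Reduced (P p) := by
    intro p
    have := reduced_conj_wpow (n := M) ((hUCp p) ▸ reduced_toWord (gp p)) (hCRp p) hMpos
    exact this.infix ⟨[], invRev (U p.1), by simp [hP]⟩
  -- ping-pong data
  set r : ℕ := 2 * M with hr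
  refine ⟨r, by omega, ?_⟩
  set X : ULift.{u} (Fin k) → Set (FreeGroup α) :=
    fun i => {w | P (i.down, true) <+: w.toWord} with hX
  set Y : ULift.{u} (Fin k) → Set (FreeGroup α) :=
    fun i => {w | P (i.down, false) <+: w.toWord} with hY
  set a : ULift.{u} (Fin k) → FreeGroup α := fun i => h i.down ^ r with ha
  have hdisj : ∀ (p q : Fin k × Bool), p ≠ q →
      Disjoint {w : FreeGroup α | P p <+: w.toWord} {w : FreeGroup α | P q <+: w.toWord} := by
    intro p q hpq
    rw [Set.disjoint_left]
    intro w hw1 hw2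
    exact hincomp p q hpq w.toWord hw1 hw2
  have hinj : Function.Injective (FreeGroup.lift a) := by
    apply FreeGroup.injective_lift_of_ping_pong a X Y
    · intro i
      refine ⟨FreeGroup.mk (P (i.down, true)), ?_⟩
      show P (i.down, true) <+: (FreeGroup.mk (P (i.down, true))).toWord
      rw [(hPred _).toWord_mk]
    · intro i j hij
      exact hdisj _ _ (fun hc => hij (by cases i; cases j; simpa using congrArg Prod.fst hc))
    · intro i j hij
      exact hdisj _ _ (fun hc => hij (by cases i; cases j; simpa using congrArg Prod.fst hc))
    · intro i j
      exact hdisj _ _ (fun hc => by simpa using congrArg Prod.snd hc)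
    · -- a i • (Y i)ᶜ ⊆ X i
      intro i w hw
      obtain ⟨v, hv, rfl⟩ := hw
      show P (i.down, true) <+: (a i * v).toWord
      have hv' : ¬ (U i.down ++ wpow (invRev (C i.down)) M <+: v.toWord) := hv
      have hval : a i = h i.down ^ (2 * M) := by rw [ha]
      rw [hval]
      exact key_step (hUC i.down) (hCR i.down) hMpos hv'
    · -- a⁻¹ i • (X i)ᶜ ⊆ Y i
      intro i w hw
      obtain ⟨v, hv, rfl⟩ := hw
      show P (i.down, false) <+: ((a⁻¹ i) * v).toWord
      have hv' : ¬ (U i.down ++ wpow (invRev (invRev (C i.down))) M <+: v.toWord) := by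
        rw [invRev_invRev]; exact hv
      have hkey := key_step (hUCp (i.down, false)) (hCRp (i.down, false)) hMpos hv'
      have hgpf : gp (i.down, false) = (h i.down)⁻¹ := rfl
      rw [hgpf] at hkey
      have hainv : (a⁻¹ i) = ((h i.down)⁻¹) ^ (2 * M) := by
        rw [Pi.inv_apply, ha, inv_pow]
      rw [hainv]
      exact hkey
  -- transfer the injectivity along `Fin k ≃ ULift (Fin k)`
  have hcomp : FreeGroup.lift (fun i : Fin k => h i ^ r) =
      (FreeGroup.lift a).comp (FreeGroup.freeGroupCongr Equiv.ulift.symm).toMonoidHom := by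
    apply FreeGroup.ext_hom
    intro i
    simp [ha]
  rw [hcomp]
  exact hinj.comp (FreeGroup.freeGroupCongr Equiv.ulift.symm).injective

/-! ### Nontrivial powers -/

theorem pow_ne_one' {g : FreeGroup α} (hg : g ≠ 1) {n : ℕ} (hn : 0 < n) : g ^ n ≠ 1 := by
  obtain ⟨U, C, hUC, hC⟩ := cyc_red_exists (g.toWord).length g.toWord le_rfl (reduced_toWord g)
    (by rwa [ne_eq, toWord_eq_nil_iff])
  exact pow_ne_one hUC hC hn

theorem zpow_ne_one {g : FreeGroup α} (hg : g ≠ 1) {n : ℤ} (hn : n ≠ 0) : g ^ n ≠ 1 := by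
  rcases n with m | m
  · rw [Int.ofNat_eq_coe, zpow_natCast]
    exact pow_ne_one' hg (Nat.pos_of_ne_zero (by simpa using hn))
  · rw [zpow_negSucc]
    intro hone
    rw [inv_eq_one] at hone
    exact pow_ne_one' hg (Nat.succ_pos m) hone

/-! ### The rank-one case -/

theorem case_one {H : Type*} [Group H] [IsFreeGroup H] (g : H) (hg : g ≠ 1) :
    Function.Injective ⇑(FreeGroup.lift (fun _ : Fin 1 => g)) := by
  classical
  set e : H ≃* FreeGroup (IsFreeGroup.Generators H) := IsFreeGroup.toFreeGroup H with he
  rw [injective_iff_map_eq_one]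
  intro x hx
  set σ : FreeGroup (Fin 1) →* Multiplicative ℤ :=
    FreeGroup.lift (fun _ => Multiplicative.ofAdd 1) with hσ
  have hform : ∀ y : FreeGroup (Fin 1), y = FreeGroup.of 0 ^ (Multiplicative.toAdd (σ y)) := by
    intro y
    refine FreeGroup.induction_on y ?_ ?_ ?_ ?_
    · simp
    · intro a
      have ha : a = 0 := Subsingleton.elim _ _
      subst ha
      show FreeGroup.of 0 = FreeGroup.of 0 ^ Multiplicative.toAdd (σ (FreeGroup.of 0))
      rw [hσ, FreeGroup.lift_apply_of]
      simp
    · intro a hy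
      show (FreeGroup.of a)⁻¹ = FreeGroup.of 0 ^ Multiplicative.toAdd (σ (FreeGroup.of a)⁻¹)
      rw [_root_.map_inv]
      conv_lhs => rw [hy]
      simp [zpow_neg]
    · intro w v hw hv
      show w * v = FreeGroup.of 0 ^ Multiplicative.toAdd (σ (w * v))
      rw [_root_.map_mul]
      conv_lhs => rw [hw, hv]
      rw [← zpow_add]
      simp
  have hxform := hform x
  rw [hxform] at hx ⊢
  rw [map_zpow, FreeGroup.lift_apply_of] at hx
  set n := Multiplicative.toAdd (σ x) with hn
  by_cases hn0 : n = 0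
  · rw [hn0, zpow_zero]
  · exfalso
    have heg : e g ≠ 1 := fun hc => hg (by
      have := congrArg e.symm hc
      simpa using this)
    have : e g ^ n = 1 := by
      rw [← map_zpow, hx, _root_.map_one]
    exact zpow_ne_one heg hn0 this

/-! ### The rank-zero case -/

theorem freegroup_fin_zero_eq_one (x : FreeGroup (Fin 0)) : x = 1 := by
  classical
  have hw : x.toWord = [] := by
    cases hx : x.toWord with
    | nil => rfl
    | cons a t => exact (Fin.elim0 a.1)
  exact toWord_eq_nil_iff.1 hw

end FGPP

/-- If `h₁, …, h_k` are non-trivial elements of a free group `H` whose cyclic subgroups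
pairwise intersect trivially, then there is `r ∈ ℕ` such that `h₁^r, …, h_k^r` freely
generate a free subgroup of rank `k`. -/
theorem free_group_large_powers {H : Type*} [Group H] [IsFreeGroup H]
    (k : ℕ) (h : Fin k → H) (hne : ∀ i, h i ≠ 1)
    (hint : ∀ i j : Fin k, i < j → Subgroup.zpowers (h i) ⊓ Subgroup.zpowers (h j) = ⊥) :
    ∃ r : ℕ, 0 < r ∧
      Function.Injective (FreeGroup.lift (fun i : Fin k => h i ^ r)) := by
  classical
  rcases Nat.lt_or_ge k 2 with hk | hk
  · interval_cases k
    · exact ⟨1, one_pos, fun x y _ => by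
        rw [FGPP.freegroup_fin_zero_eq_one x, FGPP.freegroup_fin_zero_eq_one y]⟩
    · refine ⟨1, one_pos, ?_⟩
      have hfun : (fun i : Fin 1 => h i ^ 1) = (fun _ : Fin 1 => h 0) := by
        funext i
        rw [Subsingleton.elim i 0, pow_one]
      rw [hfun]
      exact FGPP.case_one (h 0) (hne 0)
  · letI : DecidableEq (IsFreeGroup.Generators H) := Classical.decEq _
    set e : H ≃* FreeGroup (IsFreeGroup.Generators H) := IsFreeGroup.toFreeGroup H with he
    set h' : Fin k → FreeGroup (IsFreeGroup.Generators H) := fun i => e (h i) with hh'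
    have hne' : ∀ i, h' i ≠ 1 := by
      intro i hc
      refine hne i ?_
      have := congrArg (⇑e.symm) hc
      simpa [hh'] using this
    have hint' : ∀ i j : Fin k, i ≠ j → ∀ x, x ∈ Subgroup.zpowers (h' i) →
        x ∈ Subgroup.zpowers (h' j) → x = 1 := by
      intro i j hij x hxi hxj
      obtain ⟨m, hm⟩ := Subgroup.mem_zpowers_iff.1 hxi
      obtain ⟨m', hm'⟩ := Subgroup.mem_zpowers_iff.1 hxj
      have hmemi : e.symm x ∈ Subgroup.zpowers (h i) := Subgroup.mem_zpowers_iff.2 ⟨m, by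
        rw [← hm, hh']
        simp [← map_zpow]⟩
      have hmemj : e.symm x ∈ Subgroup.zpowers (h j) := Subgroup.mem_zpowers_iff.2 ⟨m', by
        rw [← hm', hh']
        simp [← map_zpow]⟩
      have hx1 : e.symm x = 1 := by
        rcases lt_or_gt_of_ne hij with hlt | hgt
        · exact Subgroup.mem_bot.1 ((hint i j hlt) ▸ Subgroup.mem_inf.2 ⟨hmemi, hmemj⟩)
        · exact Subgroup.mem_bot.1 ((hint j i hgt) ▸ Subgroup.mem_inf.2 ⟨hmemj, hmemi⟩)
      have := congrArg (⇑e) hx1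
      simpa using this
    obtain ⟨r, hr, hinj⟩ := FGPP.main_free hk h' hne' hint'
    refine ⟨r, hr, ?_⟩
    have hcomp : FreeGroup.lift (fun i : Fin k => h' i ^ r) =
        (e.toMonoidHom).comp (FreeGroup.lift fun i : Fin k => h i ^ r) := by
      apply FreeGroup.ext_hom
      intro i
      simp [hh']
    rw [hcomp, MonoidHom.coe_comp] at hinj
    exact hinj.of_comp
end

section
/- Let G be a group generated by subgroups G₁ and G₂, with H = G₁ ∩ G₂ a proper subgroup of both, and [G_i : H] ≥ 3 for some i. Suppose G acts on a set Ω and there exist disjoint non-empty subsets Ω₁, Ω₂ ⊆ Ω such that g_i·Ω_j ⊆ Ω_i for i ≠ j and all g_i ∈ G_i \ H, and h·Ω_i ⊆ Ω_i for i = 1, 2 and all h ∈ H. Then the natural homomorphism from the amalgamated free product G₁ *_H G₂ to G is an isomorphism. -/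
namespace PingPongAux

variable {G : Type*} [Group G]

/-- Alternating words: `Alt G₁ G₂ i j l` means `l` is a nonempty list of pairs `(b, g)`
with `g ∈ cond b G₁ G₂ \ (G₁ ⊓ G₂)`, consecutive letters on different sides,
first letter on side `i` and last on side `j`. -/
inductive Alt (G₁ G₂ : Subgroup G) : Bool → Bool → List (Bool × G) → Prop
  | single (b : Bool) (g : G) (hg : g ∈ cond b G₁ G₂) (hg' : g ∉ G₁ ⊓ G₂) :
      Alt G₁ G₂ b b [(b, g)]
  | cons (b : Bool) (g : G) (j : Bool) (l : List (Bool × G))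
      (hg : g ∈ cond b G₁ G₂) (hg' : g ∉ G₁ ⊓ G₂) (h : Alt G₁ G₂ (!b) j l) :
      Alt G₁ G₂ b j ((b, g) :: l)

variable {G₁ G₂ : Subgroup G}

theorem Alt.head_fst {i j b : Bool} {g : G} {l : List (Bool × G)}
    (h : Alt G₁ G₂ i j ((b, g) :: l)) : i = b := by
  cases h <;> rfl

theorem Alt.cons_inv {i j : Bool} {l : List (Bool × G)} (h : Alt G₁ G₂ i j l) :
    ∃ g l₂, l = (i, g) :: l₂ ∧ g ∈ cond i G₁ G₂ ∧ g ∉ G₁ ⊓ G₂ ∧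
      ((l₂ = [] ∧ j = i) ∨ Alt G₁ G₂ (!i) j l₂) := by
  cases h with
  | single b g hg hg' => exact ⟨g, [], rfl, hg, hg', Or.inl ⟨rfl, rfl⟩⟩
  | cons b g j l hg hg' h => exact ⟨g, l, rfl, hg, hg', Or.inr h⟩

theorem Alt.append_one {i j : Bool} {l : List (Bool × G)} (h : Alt G₁ G₂ i j l)
    {c : G} (hc : c ∈ cond (!j) G₁ G₂) (hc' : c ∉ G₁ ⊓ G₂) :
    Alt G₁ G₂ i (!j) (l ++ [(!j, c)]) := by
  induction h with
  | single b g hg hg' => exact .cons b g (!b) _ hg hg' (.single (!b) c hc hc')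
  | cons b g j l hg hg' h ih => exact .cons b g (!j) _ hg hg' (ih hc)

theorem Alt.rev {i j : Bool} {l : List (Bool × G)} (h : Alt G₁ G₂ i j l) :
    Alt G₁ G₂ j i ((l.map (fun p => (p.1, p.2⁻¹))).reverse) := by
  induction h with
  | single b g hg hg' =>
      simpa using Alt.single b g⁻¹ (inv_mem hg) (by simpa using hg')
  | cons b g j l hg hg' h ih =>
      have := ih.append_one (c := g⁻¹) (by simpa using inv_mem hg)
        (by simpa using hg')
      simpa using this

theorem rev_prod (l : List (Bool × G)) :
    (((l.map (fun p => (p.1, p.2⁻¹))).reverse).map Prod.snd).prod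
      = ((l.map Prod.snd).prod)⁻¹ := by
  induction l with
  | nil => simp
  | cons a l ih =>
      simp only [List.map_cons, List.reverse_cons, List.map_append, List.prod_append,
        List.prod_cons, List.prod_nil, List.map_map, List.map_reverse, mul_one, mul_inv_rev] at ih ⊢
      simp [ih]

theorem alt_of_list : ∀ l : List (Bool × G), l ≠ [] →
    l.Chain' (fun p q => p.1 ≠ q.1) →
    (∀ p ∈ l, p.2 ∈ cond p.1 G₁ G₂ ∧ p.2 ∉ G₁ ⊓ G₂) →
    ∃ i j, Alt G₁ G₂ i j l := by
  intro l
  induction l with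
  | nil => simp
  | cons a l ih =>
      intro _ hch hmem
      match l, hch with
      | [], _ =>
          exact ⟨a.1, a.1, Alt.single a.1 a.2 (hmem a (by simp)).1 (hmem a (by simp)).2⟩
      | b :: t, hch =>
          obtain ⟨i, j, halt⟩ := ih (by simp) (List.isChain_cons_cons.mp hch).2
            (fun p hp => hmem p (List.mem_cons_of_mem _ hp))
          have hib : i = b.1 := halt.head_fst
          have hne : a.1 ≠ b.1 := (List.isChain_cons_cons.mp hch).1
          have hi : i = !a.1 := by
            rw [hib]
            exact Bool.eq_not_of_ne (Ne.symm hne)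
          refine ⟨a.1, j, ?_⟩
          exact Alt.cons a.1 a.2 j (b :: t) (hmem a (by simp)).1 (hmem a (by simp)).2
            (hi ▸ halt)

section Action

variable {Ω : Type*} [MulAction G Ω] {Ω₁ Ω₂ : Set Ω}

theorem ping
    (hpp : ∀ b : Bool, ∀ g ∈ cond b G₁ G₂, g ∉ G₁ ⊓ G₂ →
      ∀ ω ∈ cond (!b) Ω₁ Ω₂, g • ω ∈ cond b Ω₁ Ω₂)
    {i j : Bool} {l : List (Bool × G)} (h : Alt G₁ G₂ i j l) :
    ∀ ω ∈ cond (!j) Ω₁ Ω₂, (l.map Prod.snd).prod • ω ∈ cond i Ω₁ Ω₂ := by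
  induction h with
  | single b g hg hg' =>
      intro ω hω
      simpa using hpp b g hg hg' ω hω
  | cons b g j l hg hg' h ih =>
      intro ω hω
      have := hpp b g hg hg' _ (ih ω hω)
      simpa [mul_smul] using this

theorem same_ne_one
    (hpp : ∀ b : Bool, ∀ g ∈ cond b G₁ G₂, g ∉ G₁ ⊓ G₂ →
      ∀ ω ∈ cond (!b) Ω₁ Ω₂, g • ω ∈ cond b Ω₁ Ω₂)
    (h1 : Ω₁.Nonempty) (h2 : Ω₂.Nonempty) (hd : Disjoint Ω₁ Ω₂)
    {i : Bool} {l : List (Bool × G)} (halt : Alt G₁ G₂ i i l) :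
    (l.map Prod.snd).prod ≠ 1 := by
  intro hone
  obtain ⟨ω, hω⟩ : (cond (!i) Ω₁ Ω₂).Nonempty := by cases i <;> assumption
  have := ping hpp halt ω hω
  rw [hone, one_smul] at this
  cases i with
  | true => exact Set.disjoint_left.mp hd this hω
  | false => exact Set.disjoint_left.mp hd hω this

theorem mixed_ne_one
    (hpp : ∀ b : Bool, ∀ g ∈ cond b G₁ G₂, g ∉ G₁ ⊓ G₂ →
      ∀ ω ∈ cond (!b) Ω₁ Ω₂, g • ω ∈ cond b Ω₁ Ω₂)
    (h1 : Ω₁.Nonempty) (h2 : Ω₂.Nonempty) (hd : Disjoint Ω₁ Ω₂)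
    {k : Bool}
    (hav : ∀ c ∈ cond k G₁ G₂, ∃ t ∈ cond k G₁ G₂, t ∉ G₁ ⊓ G₂ ∧ t * c ∉ G₁ ⊓ G₂)
    {l : List (Bool × G)} (halt : Alt G₁ G₂ k (!k) l) :
    (l.map Prod.snd).prod ≠ 1 := by
  intro hone
  obtain ⟨g, l₂, rfl, hg, hg', hrest⟩ := halt.cons_inv
  rcases hrest with ⟨rfl, hjk⟩ | h₂
  · exact (by simp at hjk : False)
  · obtain ⟨t, ht, ht', htg⟩ := hav g hg
    have hl₂ : Alt G₁ G₂ (!k) k (l₂ ++ [(k, t⁻¹)]) := by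
      have := h₂.append_one (c := t⁻¹) (by simpa using inv_mem ht)
        (by simpa using ht')
      simpa using this
    have hm : Alt G₁ G₂ k k ((k, t * g) :: (l₂ ++ [(k, t⁻¹)])) :=
      Alt.cons k (t * g) k _ (mul_mem ht hg) htg hl₂
    apply same_ne_one hpp h1 h2 hd hm
    have hprod : (l₂.map Prod.snd).prod = g⁻¹ := by
      have h0 : g * (l₂.map Prod.snd).prod = 1 := by simpa using hone
      exact eq_inv_of_mul_eq_one_right h0
    simp only [List.map_cons, List.map_append, List.prod_cons, List.prod_append,
      List.map_nil, List.prod_nil, hprod, mul_one]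
    group

end Action

/-- From the index condition, we can avoid any two left cosets. -/
theorem exists_avoid {K : Type*} [Group K] (N : Subgroup K)
    (hidx : 3 ≤ N.index ∨ N.index = 0) (a b : K) :
    ∃ s : K, a⁻¹ * s ∉ N ∧ b⁻¹ * s ∉ N := by
  by_contra hcon
  push_neg at hcon
  have hsub : (Set.univ : Set (K ⧸ N)) ⊆ {(a : K ⧸ N), (b : K ⧸ N)} := by
    rintro q -
    induction q using QuotientGroup.induction_on with
    | H s =>
      rcases Classical.em (a⁻¹ * s ∈ N) with hs | hs
      · exact Or.inl ((QuotientGroup.eq.mpr hs).symm)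
      · exact Or.inr ((QuotientGroup.eq.mpr (hcon s hs)).symm)
  have hfin2 : ({(a : K ⧸ N), (b : K ⧸ N)} : Set (K ⧸ N)).Finite :=
    (Set.finite_singleton _).insert _
  have hcard : Nat.card (K ⧸ N) ≤ 2 := by
    have h := Set.ncard_le_ncard hsub hfin2
    rw [Set.ncard_univ] at h
    exact h.trans ((Set.ncard_insert_le _ _).trans (by simp))
  have : Finite (K ⧸ N) := Set.finite_univ_iff.mp (hfin2.subset hsub)
  have hpos : 0 < Nat.card (K ⧸ N) := Nat.card_pos
  rw [Subgroup.index] at hidx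
  omega

theorem avoid_of_relindex {Gk : Subgroup G} (hle : G₁ ⊓ G₂ ≤ Gk)
    (hidx : 3 ≤ (G₁ ⊓ G₂).relIndex Gk ∨ (G₁ ⊓ G₂).relIndex Gk = 0) :
    ∀ c ∈ Gk, ∃ t ∈ Gk, t ∉ G₁ ⊓ G₂ ∧ t * c ∉ G₁ ⊓ G₂ := by
  intro c hc
  obtain ⟨s, hs1, hs2⟩ := exists_avoid ((G₁ ⊓ G₂).subgroupOf Gk) hidx 1 ⟨c, hc⟩
  refine ⟨(↑s)⁻¹, inv_mem s.2, ?_, ?_⟩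
  · intro h
    apply hs1
    rw [inv_one, one_mul, Subgroup.mem_subgroupOf]
    exact (inv_mem_iff).mp h
  · intro h
    apply hs2
    rw [Subgroup.mem_subgroupOf]
    have : ((↑s)⁻¹ * c)⁻¹ ∈ G₁ ⊓ G₂ := inv_mem h
    simpa [mul_inv_rev] using this

end PingPongAux

open PingPongAux in
set_option maxHeartbeats 1000000 in
/-- Ping-Pong Lemma, version 2 (amalgamated products): let `G` be generated by subgroups
`G₁` and `G₂` with `H = G₁ ⊓ G₂` proper in both and `[G_i : H] ≥ 3` for some `i`
(`relindex = 0` meaning infinite index). If `G` acts on `Ω` with disjoint non-empty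
subsets `Ω₁, Ω₂` such that elements of `G_i \ H` send `Ω_j` into `Ω_i` (`i ≠ j`) and `H`
preserves both, then the natural map `G₁ *_H G₂ → G` is an isomorphism. -/
theorem ping_pong_amalgamated {G Ω : Type*} [Group G] [MulAction G Ω]
    (G₁ G₂ : Subgroup G) (hgen : G₁ ⊔ G₂ = ⊤)
    (hp1 : G₁ ⊓ G₂ < G₁) (hp2 : G₁ ⊓ G₂ < G₂)
    (hidx : (3 ≤ (G₁ ⊓ G₂).relIndex G₁ ∨ (G₁ ⊓ G₂).relIndex G₁ = 0) ∨
            (3 ≤ (G₁ ⊓ G₂).relIndex G₂ ∨ (G₁ ⊓ G₂).relIndex G₂ = 0))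
    (Ω₁ Ω₂ : Set Ω) (h1 : Ω₁.Nonempty) (h2 : Ω₂.Nonempty) (hd : Disjoint Ω₁ Ω₂)
    (hpp1 : ∀ g ∈ G₁, g ∉ G₁ ⊓ G₂ → ∀ ω ∈ Ω₂, g • ω ∈ Ω₁)
    (hpp2 : ∀ g ∈ G₂, g ∉ G₁ ⊓ G₂ → ∀ ω ∈ Ω₁, g • ω ∈ Ω₂)
    (hh1 : ∀ g ∈ G₁ ⊓ G₂, ∀ ω ∈ Ω₁, g • ω ∈ Ω₁)
    (hh2 : ∀ g ∈ G₁ ⊓ G₂, ∀ ω ∈ Ω₂, g • ω ∈ Ω₂) :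
    Function.Bijective
      (Monoid.PushoutI.lift
        (φ := fun b : Bool =>
          (Subgroup.inclusion
            (show G₁ ⊓ G₂ ≤ cond b G₁ G₂ by cases b; exacts [inf_le_right, inf_le_left]) :
            ↥(G₁ ⊓ G₂) →* ↥(cond b G₁ G₂)))
        (fun b : Bool => (cond b G₁ G₂).subtype) ((G₁ ⊓ G₂).subtype)
        (fun b : Bool => by ext x; rfl)) := by
  classical
  set φ : ∀ b : Bool, ↥(G₁ ⊓ G₂) →* ↥(cond b G₁ G₂) := fun b : Bool =>
    (Subgroup.inclusion
      (show G₁ ⊓ G₂ ≤ cond b G₁ G₂ by cases b; exacts [inf_le_right, inf_le_left])) with hφ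
  set F := (Monoid.PushoutI.lift
        (φ := φ)
        (fun b : Bool => (cond b G₁ G₂).subtype) ((G₁ ⊓ G₂).subtype)
        (fun b : Bool => by ext x; rfl)) with hF
  have hFof : ∀ (b : Bool) (g : ↥(cond b G₁ G₂)),
      F (Monoid.PushoutI.of (φ := φ) b g) = (g : G) := by
    intro b g
    simp [hF]
  have hFbase : ∀ h : ↥(G₁ ⊓ G₂), F (Monoid.PushoutI.base φ h) = (h : G) := by
    intro h
    simp [hF]
  -- packaged ping-pong hypothesis
  have hpp : ∀ b : Bool, ∀ g ∈ cond b G₁ G₂, g ∉ G₁ ⊓ G₂ →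
      ∀ ω ∈ cond (!b) Ω₁ Ω₂, g • ω ∈ cond b Ω₁ Ω₂ := by
    intro b
    cases b
    · exact hpp2
    · exact hpp1
  -- every nonempty alternating word has product ≠ 1
  have key : ∀ {i j : Bool} {l : List (Bool × G)}, Alt G₁ G₂ i j l →
      (l.map Prod.snd).prod ≠ 1 := by
    obtain ⟨k, hk⟩ : ∃ k : Bool, 3 ≤ (G₁ ⊓ G₂).relIndex (cond k G₁ G₂) ∨
        (G₁ ⊓ G₂).relIndex (cond k G₁ G₂) = 0 := by
      rcases hidx with h | h
      · exact ⟨true, h⟩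
      · exact ⟨false, h⟩
    have hav : ∀ c ∈ cond k G₁ G₂, ∃ t ∈ cond k G₁ G₂,
        t ∉ G₁ ⊓ G₂ ∧ t * c ∉ G₁ ⊓ G₂ :=
      avoid_of_relindex (by cases k; exacts [inf_le_right, inf_le_left]) hk
    intro i j l halt
    by_cases hij : i = j
    · subst hij
      exact same_ne_one hpp h1 h2 hd halt
    · have hji : j = !i := by cases i <;> cases j <;> simp_all
      subst hji
      by_cases hik : i = k
      · subst hik
        exact mixed_ne_one hpp h1 h2 hd hav halt
      · have hik' : k = !i := by cases i <;> cases k <;> simp_all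
        intro hone
        have hrev : Alt G₁ G₂ (!i) i ((l.map (fun p => (p.1, p.2⁻¹))).reverse) := halt.rev
        have : Alt G₁ G₂ k (!k) ((l.map (fun p => (p.1, p.2⁻¹))).reverse) := by
          rw [hik']; simpa using hrev
        apply mixed_ne_one hpp h1 h2 hd hav this
        rw [rev_prod, hone, inv_one]
  constructor
  · -- injectivity
    rw [injective_iff_map_eq_one]
    intro x hx
    obtain ⟨d⟩ := Monoid.PushoutI.NormalWord.transversal_nonempty φ
      (fun b => Subgroup.inclusion_injective _)
    set w : Monoid.PushoutI.NormalWord d := Monoid.PushoutI.NormalWord.equiv x with hw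
    have hxw : w.prod = x := Monoid.PushoutI.NormalWord.equiv.symm_apply_apply x
    -- F of a word product
    have keyF : ∀ lw : List (Σ b : Bool, ↥(cond b G₁ G₂)),
        F (Monoid.PushoutI.ofCoprodI (φ := φ)
          ((lw.map fun p => Monoid.CoprodI.of p.2).prod))
          = (lw.map fun p => ((p.2 : G))).prod := by
      intro lw
      induction lw with
      | nil => simp
      | cons a t ih =>
          simp only [List.map_cons, List.prod_cons, map_mul,
            Monoid.PushoutI.ofCoprodI_of, ih]
          rw [hFof]
    have hFw : F w.prod = (w.head : G) * (w.toList.map fun p => ((p.2 : G))).prod := by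
      rw [Monoid.PushoutI.NormalWord.prod, map_mul, hFbase]
      congr 1
      exact keyF w.toList
    -- reducedness of the letters
    have hred : ∀ p ∈ w.toList, ((p.2 : G)) ∉ G₁ ⊓ G₂ := by
      intro p hp hmem
      have hset : p.2 ∈ d.set p.1 := w.normalized p.1 p.2 hp
      have hne1 : p.2 ≠ 1 := w.toWord.ne_one p hp
      have hrange : p.2 ∈ (φ p.1).range := by
        refine ⟨⟨(p.2 : G), hmem⟩, ?_⟩
        ext
        rfl
      have hself : (((d.compl p.1).equiv p.2).2 : ↥(cond p.1 G₁ G₂)) = p.2 :=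
        ((d.compl p.1).equiv_snd_eq_self_iff_mem (one_mem _)).mpr hset
      have hone : (((d.compl p.1).equiv p.2).2 : ↥(cond p.1 G₁ G₂)) = 1 :=
        ((d.compl p.1).coe_equiv_snd_eq_one_iff_mem (d.one_mem _)).mpr hrange
      exact hne1 (by rw [← hself, hone])
    rw [← hxw] at hx
    rw [hFw] at hx
    rcases hlist : w.toList with _ | ⟨a, t⟩
    · -- empty word
      rw [hlist] at hx
      simp only [List.map_nil, List.prod_nil, mul_one] at hx
      have hhead : w.head = 1 := by
        ext; exact hx
      rw [← hxw]
      rw [Monoid.PushoutI.NormalWord.prod, hhead]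
      have : w.toWord.prod = 1 := by
        rw [Monoid.CoprodI.Word.prod, hlist]
        simp
      rw [this]
      simp
    · -- nonempty word: contradiction
      exfalso
      set m : List (Bool × G) :=
        (a.1, (w.head : G) * (a.2 : G)) :: t.map (fun p => (p.1, ((p.2 : G)))) with hm
      have hmem : ∀ p ∈ m, p.2 ∈ cond p.1 G₁ G₂ ∧ p.2 ∉ G₁ ⊓ G₂ := by
        intro p hp
        rcases List.mem_cons.mp hp with rfl | hp'
        · have hle : ∀ b : Bool, G₁ ⊓ G₂ ≤ cond b G₁ G₂ := by
            intro b; cases b; exacts [inf_le_right, inf_le_left]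
          constructor
          · exact mul_mem (hle _ w.head.2) a.2.2
          · intro hcon
            apply hred a (by rw [hlist]; exact List.mem_cons_self)
            have : (w.head : G)⁻¹ * ((w.head : G) * (a.2 : G)) ∈ G₁ ⊓ G₂ :=
              mul_mem (inv_mem w.head.2) hcon
            simpa using this
        · obtain ⟨q, hq, rfl⟩ := List.mem_map.mp hp'
          exact ⟨q.2.2, hred q (by rw [hlist]; exact List.mem_cons_of_mem _ hq)⟩
      have hch : m.Chain' (fun p q => p.1 ≠ q.1) := by
        have horig : (a :: t).Chain' (fun p q : (Σ b : Bool, ↥(cond b G₁ G₂)) => p.1 ≠ q.1) := by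
          rw [← hlist]; exact w.toWord.chain_ne
        have h1' : List.Chain' Ne ((a :: t).map Sigma.fst) :=
          (List.isChain_map Sigma.fst).mpr horig
        have h2' : m.map Prod.fst = (a :: t).map Sigma.fst := by
          simp [hm, List.map_map, Function.comp]
        have := h2' ▸ h1'
        exact (List.isChain_map Prod.fst).mp this
      obtain ⟨i, j, halt⟩ := alt_of_list m (by simp [hm]) hch hmem
      apply key halt
      rw [hlist] at hx
      simpa [hm, List.prod_cons, mul_assoc, Function.comp_def] using hx
  · -- surjectivity
    rw [← MonoidHom.range_eq_top]
    rw [← top_le_iff, ← hgen]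
    refine sup_le ?_ ?_
    · intro g hg
      exact ⟨Monoid.PushoutI.of (φ := φ) true ⟨g, hg⟩, hFof true ⟨g, hg⟩⟩
    · intro g hg
      exact ⟨Monoid.PushoutI.of (φ := φ) false ⟨g, hg⟩, hFof false ⟨g, hg⟩⟩
end

section
/- Let G = ⟨F, t ∣ t f t⁻¹ = φ(f), f ∈ F⟩ be an ascending HNN-extension of F with respect to an injective endomorphism φ. Given h ∈ F and l ∈ ℕ with l ≥ 1, define the injective endomorphism ψ(f) = h·φˡ(f)·h⁻¹ of F, and let G̃ = ⟨F, s ∣ s f s⁻¹ = ψ(f), f ∈ F⟩. Let π: G → ℤ be the homomorphism with π(t) = 1 and π(F) = 0, let g = h·tˡ ∈ G, and let J = ⟨F, g⟩ ≤ G. Then J = π⁻¹(lℤ), and there is an isomorphism θ: G̃ → J restricting to the identity on F with θ(s) = g. -/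
namespace AscHNNAux

open HNNExtension Multiplicative

variable {F : Type*} [Group F] (φ : Monoid.End F)
  (e : (⊤ : Subgroup F) ≃* (φ : F →* F).range)

lemma t_mul (he : ∀ f : F, (e ⟨f, trivial⟩ : F) = φ f) (f : F) :
    (t : HNNExtension F ⊤ (φ : F →* F).range e) * of f = of (φ f) * t := by
  have h := t_mul_of (φ := e) (⟨f, trivial⟩ : (⊤ : Subgroup F))
  rwa [he] at h

lemma pow_mul_of (he : ∀ f : F, (e ⟨f, trivial⟩ : F) = φ f) (n : ℕ) (f : F) :
    (t : HNNExtension F ⊤ (φ : F →* F).range e) ^ n * of f = of ((φ ^ n) f) * t ^ n := by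
  induction n generalizing f with
  | zero => simp
  | succ n ih =>
    have h1 : (φ ^ (n + 1)) f = (φ ^ n) (φ f) := by
      rw [pow_succ]; rfl
    rw [h1, pow_succ, mul_assoc, t_mul φ e he, ← mul_assoc, ih (φ f), mul_assoc]

lemma of_mul_inv_pow (he : ∀ f : F, (e ⟨f, trivial⟩ : F) = φ f) (n : ℕ) (f : F) :
    (of f : HNNExtension F ⊤ (φ : F →* F).range e) * (t ^ n)⁻¹
      = (t ^ n)⁻¹ * of ((φ ^ n) f) := by
  have h := pow_mul_of φ e he n f
  calc (of f : HNNExtension F ⊤ (φ : F →* F).range e) * (t ^ n)⁻¹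
      = (t ^ n)⁻¹ * (t ^ n * of f) * (t ^ n)⁻¹ := by group
    _ = (t ^ n)⁻¹ * (of ((φ ^ n) f) * t ^ n) * (t ^ n)⁻¹ := by rw [h]
    _ = (t ^ n)⁻¹ * of ((φ ^ n) f) := by group

lemma nf (he : ∀ f : F, (e ⟨f, trivial⟩ : F) = φ f)
    (x : HNNExtension F ⊤ (φ : F →* F).range e) :
    ∃ (a b : ℕ) (f : F), x = ((t : HNNExtension F ⊤ (φ : F →* F).range e) ^ a)⁻¹ * of f * t ^ b := by
  induction x using HNNExtension.induction_on with
  | of f => exact ⟨0, 0, f, by simp⟩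
  | t => exact ⟨0, 1, 1, by simp⟩
  | inv x hx =>
    obtain ⟨a, b, f, rfl⟩ := hx
    exact ⟨b, a, f⁻¹, by rw [map_inv]; group⟩
  | mul x y hx hy =>
    obtain ⟨a, b, f, rfl⟩ := hx
    obtain ⟨c, d, f', rfl⟩ := hy
    rcases le_or_gt c b with hcb | hbc
    · obtain ⟨k, rfl⟩ : ∃ k, b = k + c := ⟨b - c, (Nat.sub_add_cancel hcb).symm⟩
      refine ⟨a, k + d, f * (φ ^ k) f', ?_⟩
      have hk := pow_mul_of φ e he k f'
      calc ((t ^ a)⁻¹ * of f * t ^ (k + c)) * ((t ^ c)⁻¹ * of f' * t ^ d)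
          = (t ^ a)⁻¹ * of f * (t ^ k * of f') * t ^ d := by rw [pow_add]; group
        _ = (t ^ a)⁻¹ * of f * (of ((φ ^ k) f') * t ^ k) * t ^ d := by rw [hk]
        _ = (t ^ a)⁻¹ * of (f * (φ ^ k) f') * t ^ (k + d) := by rw [map_mul, pow_add]; group
    · obtain ⟨k, rfl⟩ : ∃ k, c = k + b := ⟨c - b, (Nat.sub_add_cancel hbc.le).symm⟩
      refine ⟨k + a, d, (φ ^ k) f * f', ?_⟩
      have hk := of_mul_inv_pow φ e he k f
      calc ((t ^ a)⁻¹ * of f * t ^ b) * ((t ^ (k + b))⁻¹ * of f' * t ^ d)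
          = (t ^ a)⁻¹ * (of f * (t ^ k)⁻¹) * of f' * t ^ d := by rw [pow_add]; group
        _ = (t ^ a)⁻¹ * ((t ^ k)⁻¹ * of ((φ ^ k) f)) * of f' * t ^ d := by rw [hk]
        _ = (t ^ (k + a))⁻¹ * of ((φ ^ k) f * f') * t ^ d := by rw [map_mul, pow_add]; group

lemma mem_closure_of_t (x : HNNExtension F ⊤ (φ : F →* F).range e) :
    x ∈ Subgroup.closure
      (Set.range (of : F →* HNNExtension F ⊤ (φ : F →* F).range e) ∪ {t}) := by
  induction x using HNNExtension.induction_on with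
  | of f => exact Subgroup.subset_closure (Or.inl ⟨f, rfl⟩)
  | t => exact Subgroup.subset_closure (Or.inr rfl)
  | inv x hx => exact inv_mem hx
  | mul x y hx hy => exact mul_mem hx hy

end AscHNNAux

open Multiplicative

/-- Let `G = ⟨F, t ∣ t f t⁻¹ = φ(f)⟩` be the ascending HNN-extension of `F` w.r.t. an
injective endomorphism `φ` (realised as `HNNExtension F ⊤ φ.range e`).  Given `h ∈ F` and
`l ≥ 1`, let `ψ(f) = h·φˡ(f)·h⁻¹` and let `G̃ = ⟨F, s ∣ s f s⁻¹ = ψ(f)⟩` be the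
corresponding ascending HNN-extension.  Let `π : G → ℤ` be the homomorphism with
`π(t) = 1` and `π(F) = 0`, let `g = h·tˡ` and `J = ⟨F, g⟩ ≤ G`.  Then `J = π⁻¹(lℤ)`, and
there is an isomorphism `θ : G̃ ≅ J` restricting to the identity on `F` with `θ(s) = g`
(expressed as an injective homomorphism `θ : G̃ → G` with range `J`). -/
theorem ascending_hnn_change_of_letter {F : Type*} [Group F]
    (φ : Monoid.End F) (hφ : Function.Injective φ)
    (h : F) (l : ℕ) (hl : 1 ≤ l)
    (ψ : Monoid.End F) (hψ : ∀ f : F, ψ f = h * (φ ^ l) f * h⁻¹)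
    (e : (⊤ : Subgroup F) ≃* (φ : F →* F).range)
    (he : ∀ f : F, (e ⟨f, trivial⟩ : F) = φ f)
    (e' : (⊤ : Subgroup F) ≃* (ψ : F →* F).range)
    (he' : ∀ f : F, (e' ⟨f, trivial⟩ : F) = ψ f)
    (π : HNNExtension F ⊤ (φ : F →* F).range e →* Multiplicative ℤ)
    (hπt : π HNNExtension.t = Multiplicative.ofAdd 1)
    (hπF : ∀ f : F, π (HNNExtension.of f) = 1) :
    let G := HNNExtension F ⊤ (φ : F →* F).range e
    let G' := HNNExtension F ⊤ (ψ : F →* F).range e'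
    let g : G := HNNExtension.of h * HNNExtension.t ^ l
    let J : Subgroup G := Subgroup.closure (Set.range (HNNExtension.of : F →* G) ∪ {g})
    J = Subgroup.comap π (Subgroup.zpowers (Multiplicative.ofAdd (l : ℤ))) ∧
    ∃ θ : G' →* G, Function.Injective θ ∧ θ.range = J ∧
      (∀ f : F, θ (HNNExtension.of f) = HNNExtension.of f) ∧ θ HNNExtension.t = g := by
  intro G G' g J
  have pml := AscHNNAux.pow_mul_of φ e he
  have hnf := AscHNNAux.nf φ e he
  have hnf' := AscHNNAux.nf ψ e' he'
  -- π on powers of t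
  have hπtn : ∀ n : ℕ, π ((HNNExtension.t : G) ^ n) = ofAdd (n : ℤ) := by
    intro n
    rw [map_pow, hπt, ← ofAdd_nsmul, nsmul_eq_mul, mul_one]
  have hπg : π g = ofAdd (l : ℤ) := by
    show π (HNNExtension.of h * HNNExtension.t ^ l) = _
    rw [map_mul, hπF, hπtn, one_mul]
  -- commutation of g with of f
  have hgc : ∀ f : F, g * HNNExtension.of f = HNNExtension.of (ψ f) * g := by
    intro f
    show (HNNExtension.of h * HNNExtension.t ^ l) * HNNExtension.of f
        = HNNExtension.of (ψ f) * (HNNExtension.of h * HNNExtension.t ^ l)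
    calc (HNNExtension.of h * HNNExtension.t ^ l) * HNNExtension.of f
        = HNNExtension.of h * (HNNExtension.t ^ l * HNNExtension.of f) := by group
      _ = HNNExtension.of h * (HNNExtension.of ((φ ^ l) f) * HNNExtension.t ^ l) := by
          rw [pml l f]
      _ = HNNExtension.of (ψ f) * (HNNExtension.of h * HNNExtension.t ^ l) := by
          rw [hψ f, map_mul, map_mul, map_inv]; group
  -- powers of g
  have hg_mem : g ∈ J := Subgroup.subset_closure (Or.inr rfl)
  have hof_mem : ∀ f : F, HNNExtension.of f ∈ J := fun f =>
    Subgroup.subset_closure (Or.inl ⟨f, rfl⟩)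
  have hgp : ∀ n : ℕ, ∃ c : F, g ^ n = HNNExtension.of c * HNNExtension.t ^ (l * n) := by
    intro n
    induction n with
    | zero => exact ⟨1, by simp⟩
    | succ n ih =>
      obtain ⟨c, hc⟩ := ih
      refine ⟨h * (φ ^ l) c, ?_⟩
      calc g ^ (n + 1) = g * g ^ n := by rw [pow_succ']
        _ = HNNExtension.of h * (HNNExtension.t ^ l * HNNExtension.of c)
              * HNNExtension.t ^ (l * n) := by
            rw [hc]; show (HNNExtension.of h * HNNExtension.t ^ l) * _ = _; group
        _ = HNNExtension.of h * (HNNExtension.of ((φ ^ l) c) * HNNExtension.t ^ l)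
              * HNNExtension.t ^ (l * n) := by rw [pml]
        _ = HNNExtension.of (h * (φ ^ l) c) * HNNExtension.t ^ (l * (n + 1)) := by
            rw [map_mul, Nat.mul_succ, pow_add]; group
  have htl : (HNNExtension.t : G) ^ l ∈ J := by
    have heq : (HNNExtension.t : G) ^ l = (HNNExtension.of h)⁻¹ * g := by
      show _ = _ * (HNNExtension.of h * HNNExtension.t ^ l); group
    rw [heq]
    exact mul_mem (inv_mem (hof_mem h)) hg_mem
  have conj_mem : ∀ (n : ℕ) (f : F),
      ((HNNExtension.t : G) ^ (l * n))⁻¹ * HNNExtension.of f * HNNExtension.t ^ (l * n) ∈ J := by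
    intro n f
    obtain ⟨c, hc⟩ := hgp n
    have heq : ((HNNExtension.t : G) ^ (l * n))⁻¹ * HNNExtension.of f * HNNExtension.t ^ (l * n)
        = (g ^ n)⁻¹ * (HNNExtension.of c * HNNExtension.of f * (HNNExtension.of c)⁻¹) * g ^ n := by
      rw [hc]; group
    rw [heq]
    exact mul_mem (mul_mem (inv_mem (pow_mem hg_mem n))
      (mul_mem (mul_mem (hof_mem c) (hof_mem f)) (inv_mem (hof_mem c)))) (pow_mem hg_mem n)
  have conj_mem' : ∀ (a : ℕ) (f : F),
      ((HNNExtension.t : G) ^ a)⁻¹ * HNNExtension.of f * HNNExtension.t ^ a ∈ J := by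
    intro a f
    have hla : a ≤ l * a := Nat.le_mul_of_pos_left a (by omega)
    have hma : (l * a - a) + a = l * a := Nat.sub_add_cancel hla
    set m := l * a - a with hm
    have hp := pml m f
    have key : ((HNNExtension.t : G) ^ a)⁻¹ * HNNExtension.of f * HNNExtension.t ^ a
        = ((HNNExtension.t : G) ^ (l * a))⁻¹ * HNNExtension.of ((φ ^ m) f)
            * HNNExtension.t ^ (l * a) := by
      calc ((HNNExtension.t : G) ^ a)⁻¹ * HNNExtension.of f * HNNExtension.t ^ a
          = (HNNExtension.t ^ a)⁻¹ * (HNNExtension.t ^ m)⁻¹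
              * (HNNExtension.t ^ m * HNNExtension.of f) * HNNExtension.t ^ a := by group
        _ = (HNNExtension.t ^ a)⁻¹ * (HNNExtension.t ^ m)⁻¹
              * (HNNExtension.of ((φ ^ m) f) * HNNExtension.t ^ m) * HNNExtension.t ^ a := by
            rw [hp]
        _ = ((HNNExtension.t : G) ^ (m + a))⁻¹ * HNNExtension.of ((φ ^ m) f)
              * HNNExtension.t ^ (m + a) := by rw [pow_add]; group
        _ = _ := by rw [hma]
    rw [key]
    exact conj_mem a _
  -- Part 1
  have part1 : J = Subgroup.comap π (Subgroup.zpowers (ofAdd (l : ℤ))) := by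
    apply le_antisymm
    · rw [Subgroup.closure_le]
      rintro x (⟨f, rfl⟩ | rfl)
      · exact Subgroup.mem_comap.2 (by rw [hπF]; exact one_mem _)
      · exact Subgroup.mem_comap.2 (by rw [hπg]; exact Subgroup.mem_zpowers _)
    · intro x hx
      obtain ⟨a, b, f, rfl⟩ := hnf x
      obtain ⟨k, hk⟩ := Subgroup.mem_zpowers_iff.mp (Subgroup.mem_comap.mp hx)
      have hπx : π (((HNNExtension.t : G) ^ a)⁻¹ * HNNExtension.of f * HNNExtension.t ^ b)
          = ofAdd ((b : ℤ) - a) := by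
        rw [map_mul, map_mul, map_inv, hπF, hπtn, hπtn, mul_one, ← ofAdd_neg, ← ofAdd_add]
        congr 1; ring
      rw [hπx, ← ofAdd_zsmul, smul_eq_mul] at hk
      have hba : (b : ℤ) - a = k * l := (ofAdd.injective hk).symm
      have ht1 : (HNNExtension.t : G) ^ a * (HNNExtension.t : G) ^ ((b : ℤ) - a)
          = HNNExtension.t ^ b := by
        rw [← zpow_natCast (HNNExtension.t : G) a, ← zpow_natCast (HNNExtension.t : G) b,
          ← zpow_add]
        congr 1; ring
      have hx_eq : ((HNNExtension.t : G) ^ a)⁻¹ * HNNExtension.of f * HNNExtension.t ^ b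
          = (((HNNExtension.t : G) ^ a)⁻¹ * HNNExtension.of f * HNNExtension.t ^ a)
              * (HNNExtension.t : G) ^ ((b : ℤ) - a) := by
        rw [mul_assoc (((HNNExtension.t : G) ^ a)⁻¹ * HNNExtension.of f)
          ((HNNExtension.t : G) ^ a), ht1]
      rw [hx_eq]
      refine mul_mem (conj_mem' a f) ?_
      rw [hba, mul_comm k (l : ℤ), zpow_mul, zpow_natCast]
      exact zpow_mem htl k
  -- Part 2
  have hg_comm' : ∀ a : (⊤ : Subgroup F),
      g * HNNExtension.of (a : F) = HNNExtension.of ((e' a : F)) * g := by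
    intro a
    have h1 : (e' a : F) = ψ (a : F) := he' (a : F)
    rw [h1]
    exact hgc _
  refine ⟨part1, HNNExtension.lift (HNNExtension.of : F →* G) g hg_comm', ?_, ?_, ?_, ?_⟩
  · -- injectivity
    rw [injective_iff_map_eq_one]
    intro x hx
    set θ := HNNExtension.lift (HNNExtension.of : F →* G) g hg_comm' with hθ
    obtain ⟨a, b, f, rfl⟩ := hnf' x
    have hθx : θ (((HNNExtension.t : G') ^ a)⁻¹ * HNNExtension.of f * HNNExtension.t ^ b)
        = (g ^ a)⁻¹ * HNNExtension.of f * g ^ b := by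
      rw [map_mul, map_mul, map_inv, map_pow, map_pow, HNNExtension.lift_t,
        HNNExtension.lift_of]
    rw [hθx] at hx
    have hπ1 : π ((g ^ a)⁻¹ * HNNExtension.of f * g ^ b)
        = ofAdd ((l : ℤ) * b - l * a) := by
      rw [map_mul, map_mul, map_inv, map_pow, map_pow, hπF, hπg, mul_one,
        ← ofAdd_nsmul, ← ofAdd_nsmul, ← ofAdd_neg, ← ofAdd_add]
      congr 1
      push_cast [nsmul_eq_mul]
      ring
    rw [hx, map_one] at hπ1
    have hzero : (l : ℤ) * b - l * a = 0 := by
      have := ofAdd.injective hπ1.symm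
      simpa using this
    have hab : a = b := by
      have hl0 : (l : ℤ) ≠ 0 := by positivity
      have h2 : (l : ℤ) * b = l * a := by linarith
      have h3 : (b : ℤ) = a := mul_left_cancel₀ hl0 h2
      exact_mod_cast h3.symm
    subst hab
    have hof : HNNExtension.of f = (1 : G) := by
      calc HNNExtension.of f
          = g ^ a * ((g ^ a)⁻¹ * HNNExtension.of f * g ^ a) * (g ^ a)⁻¹ := by group
        _ = g ^ a * 1 * (g ^ a)⁻¹ := by rw [hx]
        _ = 1 := by group
    have hf : f = 1 := HNNExtension.of_injective (φ := e)
      (show (HNNExtension.of f : G) = HNNExtension.of 1 by rw [map_one]; exact hof)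
    subst hf
    rw [map_one]
    group
  · -- range
    set θ' := HNNExtension.lift (HNNExtension.of : F →* G) g hg_comm' with hθ'
    have htop : (⊤ : Subgroup G')
        = Subgroup.closure (Set.range (HNNExtension.of : F →* G') ∪ {HNNExtension.t}) :=
      le_antisymm (fun x _ => AscHNNAux.mem_closure_of_t ψ e' x) le_top
    have hset : θ' '' (Set.range (HNNExtension.of : F →* G') ∪ {HNNExtension.t})
        = Set.range (HNNExtension.of : F →* G) ∪ {g} := by
      rw [Set.image_union, Set.image_singleton, HNNExtension.lift_t]
      congr 1
      ext y
      simp only [Set.mem_image, Set.mem_range]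
      constructor
      · rintro ⟨_, ⟨f, rfl⟩, rfl⟩
        exact ⟨f, (HNNExtension.lift_of (HNNExtension.of : F →* G) g hg_comm' f).symm⟩
      · rintro ⟨f, rfl⟩
        exact ⟨HNNExtension.of f, ⟨f, rfl⟩, HNNExtension.lift_of _ _ _ f⟩
    calc θ'.range = Subgroup.map θ' ⊤ := MonoidHom.range_eq_map θ'
      _ = Subgroup.map θ'
            (Subgroup.closure (Set.range (HNNExtension.of : F →* G') ∪ {HNNExtension.t})) :=
          congrArg _ htop
      _ = Subgroup.closure
            (θ' '' (Set.range (HNNExtension.of : F →* G') ∪ {HNNExtension.t})) :=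
          MonoidHom.map_closure _ _
      _ = J := by rw [hset]
  · exact fun f => HNNExtension.lift_of _ _ _ f
  · exact HNNExtension.lift_t _ _ _
end

section
/- Let G be a group acting on a tree T such that all edge stabilizers are free groups, and let g, h ∈ G be commuting elliptic elements such that the subgroup ⟨g, h⟩ is not cyclic and is abelian of rank 2 (e.g., ⟨g,h⟩ ≅ ℤ²). Then Fix(g) ∩ Fix(h) is non-empty and consists of a single vertex of T. -/
private lemma list_map_eq_self {α : Type*} {f : α → α} :
    ∀ {l : List α}, l.map f = l → ∀ x ∈ l, f x = x := by
  intro l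
  induction l with
  | nil => simp
  | cons a t ih =>
    intro hmap x hx
    simp only [List.map_cons, List.cons.injEq] at hmap
    rcases List.mem_cons.mp hx with rfl | hx
    · exact hmap.1
    · exact ih hmap.2 x hx

/-- Any vertex on a path between two fixed points of `g` is fixed by `g`. -/
private lemma fix_path {V G : Type*} [Group G] [MulAction G V]
    {T : SimpleGraph V} (hT : T.IsTree)
    (hadj : ∀ (g : G) (u v : V), T.Adj u v → T.Adj (g • u) (g • v))
    (g : G) {u v : V} (hu : g • u = u) (hv : g • v = v)
    {p : T.Walk u v} (hp : p.IsPath) : ∀ x ∈ p.support, g • x = x := by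
  let φ : T →g T := ⟨fun x => g • x, fun hxy => hadj g _ _ hxy⟩
  have hinj : Function.Injective φ := MulAction.injective g
  have hq : ((p.map φ).copy hu hv).IsPath := by
    rw [SimpleGraph.Walk.isPath_copy]
    exact SimpleGraph.Walk.map_isPath_of_injective hinj hp
  have heq : (p.map φ).copy hu hv = p := (hT.existsUnique_path u v).unique hq hp
  have hsup : p.support.map (fun x => g • x) = p.support := by
    conv_rhs => rw [← heq]
    rw [SimpleGraph.Walk.support_copy, SimpleGraph.Walk.support_map]
    rfl
  exact list_map_eq_self hsup

/-- In a free group in which all elements commute, everything is a power of one element. -/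
private lemma free_comm_exists_gen {L : Type*} [Group L] [IsFreeGroup L]
    (hc : ∀ x y : L, x * y = y * x) : ∃ z : L, ∀ a : L, ∃ n : ℤ, z ^ n = a := by
  classical
  have hsub : Subsingleton (IsFreeGroup.Generators L) := by
    constructor
    intro x y
    by_contra hxy
    set f : IsFreeGroup.Generators L → Equiv.Perm (Fin 3) :=
      fun s => if s = x then Equiv.swap 0 1 else Equiv.swap 0 2 with hf
    have key := congrArg (IsFreeGroup.lift f) (hc (IsFreeGroup.of x) (IsFreeGroup.of y))
    simp only [map_mul, IsFreeGroup.lift_of] at key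
    rw [hf] at key
    simp only [if_pos rfl, if_neg (Ne.symm hxy)] at key
    exact absurd key (by decide)
  -- closure of range of `of` is everything
  have htop : Subgroup.closure (Set.range (IsFreeGroup.of : IsFreeGroup.Generators L → L)) = ⊤ := by
    have h1 : (IsFreeGroup.of : IsFreeGroup.Generators L → L)
        = (IsFreeGroup.mulEquiv L) ∘ FreeGroup.of := rfl
    rw [h1, Set.range_comp]
    have h2 := MonoidHom.map_closure (IsFreeGroup.mulEquiv L).toMonoidHom
      (Set.range (FreeGroup.of : IsFreeGroup.Generators L → FreeGroup (IsFreeGroup.Generators L)))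
    simp only [MulEquiv.coe_toMonoidHom] at h2
    rw [← h2, FreeGroup.closure_range_of]
    exact Subgroup.map_top_of_surjective _ (IsFreeGroup.mulEquiv L).surjective
  rcases isEmpty_or_nonempty (IsFreeGroup.Generators L) with he | hne
  · refine ⟨1, fun a => ⟨0, ?_⟩⟩
    have : Set.range (IsFreeGroup.of : IsFreeGroup.Generators L → L) = ∅ :=
      Set.range_eq_empty _
    rw [this, Subgroup.closure_empty] at htop
    have : a ∈ (⊥ : Subgroup L) := htop ▸ Subgroup.mem_top a
    simpa using this.symm
  · obtain ⟨x₀⟩ := hne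
    refine ⟨IsFreeGroup.of x₀, fun a => ?_⟩
    have hle : Subgroup.closure (Set.range (IsFreeGroup.of : IsFreeGroup.Generators L → L))
        ≤ Subgroup.zpowers (IsFreeGroup.of x₀) := by
      rw [Subgroup.closure_le]
      rintro _ ⟨x, rfl⟩
      have : x = x₀ := Subsingleton.elim x x₀
      rw [this]
      exact Subgroup.mem_zpowers _
    have : a ∈ Subgroup.zpowers (IsFreeGroup.of x₀) := hle (htop ▸ Subgroup.mem_top a)
    exact this.imp fun n hn => hn

/-- Let a group `G` act on a tree `T` (by graph automorphisms, without edge inversions)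
with free edge stabilizers.  If `g, h ∈ G` are commuting elliptic elements generating a
non-cyclic free abelian subgroup of rank 2 (expressed by injectivity of
`(m, n) ↦ g^m h^n` on `ℤ²`), then `Fix(g) ∩ Fix(h)` consists of exactly one vertex. -/
theorem commuting_elliptics_unique_common_fixed_point {V G : Type*} [Group G] [MulAction G V]
    (T : SimpleGraph V) (hT : T.IsTree)
    (hadj : ∀ (g : G) (u v : V), T.Adj u v → T.Adj (g • u) (g • v))
    (hnoinv : ∀ (g : G) (u v : V), T.Adj u v → ¬(g • u = v ∧ g • v = u))
    (hfree : ∀ u v : V, T.Adj u v →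
      IsFreeGroup ↥(MulAction.stabilizer G u ⊓ MulAction.stabilizer G v))
    (g h : G) (hcomm : g * h = h * g)
    (hg : ∃ v : V, g • v = v) (hh : ∃ v : V, h • v = v)
    (hrank2 : Function.Injective fun p : ℤ × ℤ => g ^ p.1 * h ^ p.2) :
    ∃! v : V, g • v = v ∧ h • v = v := by
  classical
  -- Step 1: no edge is fixed by both `g` and `h`.
  have key : ∀ a c : V, T.Adj a c → g • a = a → g • c = c → h • a = a → h • c = c → False := by
    intro a c hac hga hgc hha hhc
    haveI : IsFreeGroup ↥(MulAction.stabilizer G a ⊓ MulAction.stabilizer G c) := hfree a c hac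
    set K := MulAction.stabilizer G a ⊓ MulAction.stabilizer G c with hKdef
    have hgK : g ∈ K := ⟨hga, hgc⟩
    have hhK : h ∈ K := ⟨hha, hhc⟩
    set a' : K := ⟨g, hgK⟩ with ha'
    set b' : K := ⟨h, hhK⟩ with hb'
    have hab : a' * b' = b' * a' := Subtype.ext hcomm
    set H := Subgroup.closure ({a', b'} : Set K) with hHdef
    have hcommH : ∀ x y : H, x * y = y * x := by
      have hcomm' : ∀ x ∈ ({a', b'} : Set K), ∀ y ∈ ({a', b'} : Set K), x * y = y * x := by
        intro x hx y hy
        rcases Set.mem_insert_iff.mp hx with rfl | hx <;>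
          rcases Set.mem_insert_iff.mp hy with rfl | hy
        · rfl
        · rw [Set.mem_singleton_iff.mp hy]; exact hab
        · rw [Set.mem_singleton_iff.mp hx]; exact hab.symm
        · rw [Set.mem_singleton_iff.mp hx, Set.mem_singleton_iff.mp hy]
      letI := Subgroup.closureCommGroupOfComm hcomm'
      exact fun x y => mul_comm x y
    obtain ⟨z, hz⟩ := free_comm_exists_gen hcommH
    have haH : a' ∈ H := Subgroup.subset_closure (Set.mem_insert _ _)
    have hbH : b' ∈ H := Subgroup.subset_closure (Set.mem_insert_of_mem _ rfl)
    obtain ⟨n, hn⟩ := hz ⟨a', haH⟩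
    obtain ⟨m, hm⟩ := hz ⟨b', hbH⟩
    set ζ : G := ((z : K) : G) with hζ
    have hgz : ζ ^ n = g := by
      have := congrArg (fun x : H => ((x : K) : G)) hn
      simpa using this
    have hhz : ζ ^ m = h := by
      have := congrArg (fun x : H => ((x : K) : G)) hm
      simpa using this
    have heq : (fun p : ℤ × ℤ => g ^ p.1 * h ^ p.2) (m, -n)
        = (fun p : ℤ × ℤ => g ^ p.1 * h ^ p.2) (0, 0) := by
      simp only [← hgz, ← hhz, ← zpow_mul]
      rw [← zpow_add, ← zpow_add]
      ring_nf
    have := hrank2 heq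
    have hm0 : m = 0 := congrArg Prod.fst this
    have hn0 : n = 0 := by
      have := congrArg Prod.snd this
      simpa using this
    have hg1 : g = 1 := by rw [← hgz, hn0, zpow_zero]
    have hh1 : h = 1 := by rw [← hhz, hm0, zpow_zero]
    have heq2 : (fun p : ℤ × ℤ => g ^ p.1 * h ^ p.2) (1, 0)
        = (fun p : ℤ × ℤ => g ^ p.1 * h ^ p.2) (0, 0) := by
      simp [hg1, hh1]
    have := hrank2 heq2
    simpa using congrArg Prod.fst this
  -- Step 2: uniqueness of a common fixed point.
  have uniq : ∀ a b : V, g • a = a → h • a = a → g • b = b → h • b = b → a = b := by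
    intro a b hga hha hgb hhb
    by_contra hne
    obtain ⟨p, hp, -⟩ := hT.existsUnique_path a b
    cases p with
    | nil => exact hne rfl
    | @cons _ c _ hac q =>
      have hc_mem : c ∈ (SimpleGraph.Walk.cons hac q).support := by
        rw [SimpleGraph.Walk.support_cons]
        exact List.mem_cons_of_mem _ q.start_mem_support
      have hgc := fix_path hT hadj g hga hgb hp c hc_mem
      have hhc := fix_path hT hadj h hha hhb hp c hc_mem
      exact key a c hac hga hgc hha hhc
  -- Step 3: existence.
  obtain ⟨u, hgu⟩ := hg
  obtain ⟨v, hhv⟩ := hh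
  set D := {n : ℕ | ∃ (w : V) (p : T.Walk w v), g • w = w ∧ p.IsPath ∧ p.length = n} with hD
  have hDne : D.Nonempty := by
    obtain ⟨q⟩ := hT.isConnected u v
    exact ⟨q.bypass.length, u, q.bypass, hgu, q.bypass_isPath, rfl⟩
  obtain ⟨w, p, hgw, hp, hlen⟩ := Nat.sInf_mem hDne
  have hmin : ∀ y : V, g • y = y → ∀ r : T.Walk y v, r.IsPath → sInf D ≤ r.length :=
    fun y hy r hr => Nat.sInf_le ⟨y, r, hy, hr, rfl⟩
  have hhw : h • w = w := by
    by_contra hhw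
    have hghw : g • (h • w) = h • w := by
      rw [smul_smul, hcomm, mul_smul, hgw]
    let φ : T →g T := ⟨fun x => h • x, fun hxy => hadj h _ _ hxy⟩
    have hφinj : Function.Injective φ := MulAction.injective h
    set q : T.Walk (h • w) v := (p.map φ).copy rfl hhv with hqdef
    have hq : q.IsPath := by
      rw [hqdef, SimpleGraph.Walk.isPath_copy]
      exact SimpleGraph.Walk.map_isPath_of_injective hφinj hp
    have hqlen : q.length = sInf D := by
      rw [hqdef, SimpleGraph.Walk.length_copy, SimpleGraph.Walk.length_map, hlen]
    -- any g-fixed vertex on p is w; any g-fixed vertex on q is h • w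
    have hxp : ∀ x, x ∈ p.support → g • x = x → x = w := by
      intro x hx hgx
      by_contra hxw
      have hdrop := hp.dropUntil hx
      have hle := hmin x hgx _ hdrop
      have hsplit := congrArg SimpleGraph.Walk.length (p.take_spec hx)
      rw [SimpleGraph.Walk.length_append] at hsplit
      have htpos : 0 < (p.takeUntil x hx).length :=
        Nat.pos_of_ne_zero fun h0 =>
          hxw (SimpleGraph.Walk.eq_of_length_eq_zero h0).symm
      omega
    have hxq : ∀ x, x ∈ q.support → g • x = x → x = h • w := by
      intro x hx hgx
      by_contra hxw
      have hdrop := hq.dropUntil hx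
      have hle := hmin x hgx _ hdrop
      have hsplit := congrArg SimpleGraph.Walk.length (q.take_spec hx)
      rw [SimpleGraph.Walk.length_append] at hsplit
      have htpos : 0 < (q.takeUntil x hx).length :=
        Nat.pos_of_ne_zero fun h0 =>
          hxw (SimpleGraph.Walk.eq_of_length_eq_zero h0).symm
      omega
    -- the path from w to h • w
    set r := (p.append q.reverse).bypass with hrdef
    have hr : r.IsPath := SimpleGraph.Walk.bypass_isPath _
    have hrfix : ∀ x ∈ r.support, g • x = x := fix_path hT hadj g hgw hghw hr
    have hrsub : ∀ x ∈ r.support, x = w ∨ x = h • w := by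
      intro x hx
      have hmem := SimpleGraph.Walk.support_bypass_subset _ hx
      rw [SimpleGraph.Walk.support_append] at hmem
      rcases List.mem_append.mp hmem with h1 | h2
      · exact Or.inl (hxp x h1 (hrfix x hx))
      · rw [SimpleGraph.Walk.support_reverse] at h2
        exact Or.inr (hxq x (List.mem_reverse.mp (List.mem_of_mem_tail h2)) (hrfix x hx))
    have hrsub' : r.support ⊆ [w, h • w] := by
      intro x hx
      rcases hrsub x hx with rfl | rfl <;> simp
    have hlen2 : r.support.length ≤ 2 :=
      (hr.support_nodup.subperm hrsub').length_le
    have hrlen1 : r.length = 1 := by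
      have h1 := r.length_support
      have hpos : r.length ≠ 0 := fun h0 =>
        hhw ((SimpleGraph.Walk.eq_of_length_eq_zero h0).symm)
      omega
    have hadjw : T.Adj w (h • w) := SimpleGraph.Walk.adj_of_length_eq_one hrlen1
    have hwq : w ∉ q.support := fun hmem => hhw ((hxq w hmem hgw).symm)
    have hcons : (SimpleGraph.Walk.cons hadjw q).IsPath := hq.cons hwq
    have heq := (hT.existsUnique_path w v).unique hcons hp
    have := congrArg SimpleGraph.Walk.length heq
    rw [SimpleGraph.Walk.length_cons, hqlen, hlen] at this
    omega
  exact ⟨w, ⟨hgw, hhw⟩, fun y hy => uniq y w hy.1 hy.2 hgw hhw⟩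
end

section
/- Let A be a group and n ≥ 1. Then the n-fold free power A * A * ⋯ * A (free product of n copies of A) embeds into the free product A * ℤ; concretely, if f generates the ℤ factor, then the subgroups A, fAf⁻¹, f²Af⁻², …, f^{n−1}Af^{−(n−1)} of A * ⟨f⟩ generate their free product. -/
open Monoid

section Aux

variable (A : Type*) [Group A]

private def upHom : Monoid.CoprodI (fun _ : ℤ => A) →* Monoid.CoprodI (fun _ : ℤ => A) :=
  Monoid.CoprodI.lift fun j => Monoid.CoprodI.of (M := fun _ : ℤ => A) (i := j + 1)

private def downHom : Monoid.CoprodI (fun _ : ℤ => A) →* Monoid.CoprodI (fun _ : ℤ => A) :=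
  Monoid.CoprodI.lift fun j => Monoid.CoprodI.of (M := fun _ : ℤ => A) (i := j - 1)

private def shiftAut : MulAut (Monoid.CoprodI (fun _ : ℤ => A)) :=
  MonoidHom.toMulEquiv (upHom A) (downHom A)
    (by ext j a; simp [upHom, downHom])
    (by ext j a; simp [upHom, downHom])

private lemma shift_of (j : ℤ) (a : A) :
    shiftAut A (Monoid.CoprodI.of (i := j) a)
      = Monoid.CoprodI.of (M := fun _ : ℤ => A) (i := j + 1) a := by
  change upHom A (Monoid.CoprodI.of (i := j) a) = _
  simp [upHom]

private def actZ : Multiplicative ℤ →* MulAut (Monoid.CoprodI (fun _ : ℤ => A)) :=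
  zpowersHom _ (shiftAut A)

private lemma shiftAut_pow (i : ℕ) (a : A) :
    (shiftAut A ^ i) (Monoid.CoprodI.of (i := (0 : ℤ)) a)
      = Monoid.CoprodI.of (M := fun _ : ℤ => A) (i := (i : ℤ)) a := by
  induction i with
  | zero => simp
  | succ k ih =>
    rw [pow_succ', MulAut.mul_apply, ih, shift_of]


end Aux

/-- For any group `A` and `n ≥ 1`, the `n`-fold free power `A * ⋯ * A` embeds into
`A * ℤ`: with `f` the generator of the `ℤ` factor, the natural homomorphism from the free
product of `n` copies of `A` sending the `i`-th copy to `f^i A f^{-i}` is injective. -/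
theorem free_power_embeds_in_coprod_with_Z (A : Type*) [Group A] (n : ℕ) (hn : 1 ≤ n) :
    Function.Injective
      (Monoid.CoprodI.lift (fun i : Fin n =>
        (MulAut.conj
            ((Monoid.Coprod.inr (Multiplicative.ofAdd (1 : ℤ)) :
              Monoid.Coprod A (Multiplicative ℤ)) ^ (i : ℕ))).toMonoidHom.comp
          Monoid.Coprod.inl) :
        Monoid.CoprodI (fun _ : Fin n => A) →* Monoid.Coprod A (Multiplicative ℤ)) := by
  set N := Monoid.CoprodI (fun _ : ℤ => A)
  set φ : Monoid.Coprod A (Multiplicative ℤ) →* (N ⋊[actZ A] Multiplicative ℤ) :=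
    Monoid.Coprod.lift
      (SemidirectProduct.inl.comp (Monoid.CoprodI.of (M := fun _ : ℤ => A) (i := (0 : ℤ))))
      SemidirectProduct.inr with hφ
  set ψ : Monoid.CoprodI (fun _ : Fin n => A) →* N :=
    Monoid.CoprodI.lift fun i =>
      Monoid.CoprodI.of (M := fun _ : ℤ => A) (i := ((i : ℕ) : ℤ)) with hψ
  -- retraction shows ψ is injective
  have hψinj : Function.Injective ψ := by
    set r : N →* Monoid.CoprodI (fun _ : Fin n => A) :=
      Monoid.CoprodI.lift fun j =>
        if h : 0 ≤ j ∧ j < n then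
          Monoid.CoprodI.of (M := fun _ : Fin n => A) (i := (⟨j.toNat, by omega⟩ : Fin n))
        else 1 with hr
    have : Function.LeftInverse r ψ := by
      intro x
      induction x using Monoid.CoprodI.induction_on with
      | one => simp
      | of i a =>
        rw [hψ, Monoid.CoprodI.lift_of, hr, Monoid.CoprodI.lift_of]
        have h : 0 ≤ ((i : ℕ) : ℤ) ∧ ((i : ℕ) : ℤ) < n := by
          constructor <;> [positivity; exact_mod_cast i.isLt]
        rw [dif_pos h]
      | mul x y hx hy => simp [map_mul, hx, hy]
    exact this.injective
  -- key computation
  have key : ∀ (i : Fin n) (a : A),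
      φ ((Monoid.Coprod.inr (Multiplicative.ofAdd (1 : ℤ)) :
            Monoid.Coprod A (Multiplicative ℤ)) ^ (i : ℕ) * Monoid.Coprod.inl a *
          ((Monoid.Coprod.inr (Multiplicative.ofAdd (1 : ℤ)) :
            Monoid.Coprod A (Multiplicative ℤ)) ^ (i : ℕ))⁻¹)
        = SemidirectProduct.inl (ψ (Monoid.CoprodI.of (i := i) a)) := by
    intro i a
    have hg : φ ((Monoid.Coprod.inr (Multiplicative.ofAdd (1 : ℤ)) :
          Monoid.Coprod A (Multiplicative ℤ)) ^ (i : ℕ))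
        = SemidirectProduct.inr (Multiplicative.ofAdd ((i : ℕ) : ℤ)) := by
      rw [map_pow, hφ, Monoid.Coprod.lift_apply_inr, ← map_pow]
      congr 1
      rw [← ofAdd_nsmul]
      norm_num
    rw [map_mul, map_mul, map_inv, hg, hφ, Monoid.Coprod.lift_apply_inl,
      MonoidHom.comp_apply, ← map_inv, ← SemidirectProduct.inl_aut]
    rw [hψ, Monoid.CoprodI.lift_of]
    congr 1
    have hact : actZ A (Multiplicative.ofAdd ((i : ℕ) : ℤ)) = shiftAut A ^ (i : ℕ) := by
      show shiftAut A ^ ((((i : ℕ) : ℤ)) : ℤ) = _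
      rw [zpow_natCast]
    rw [hact]
    exact shiftAut_pow A (i : ℕ) a
  intro x y hxy
  apply hψinj
  apply SemidirectProduct.inl_injective (φ := actZ A)
  have hcomp : ∀ z : Monoid.CoprodI (fun _ : Fin n => A),
      φ ((Monoid.CoprodI.lift (fun i : Fin n =>
        (MulAut.conj
            ((Monoid.Coprod.inr (Multiplicative.ofAdd (1 : ℤ)) :
              Monoid.Coprod A (Multiplicative ℤ)) ^ (i : ℕ))).toMonoidHom.comp
          Monoid.Coprod.inl)) z) = SemidirectProduct.inl (ψ z) := by
    intro z
    induction z using Monoid.CoprodI.induction_on with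
    | one => simp
    | of i a =>
      rw [Monoid.CoprodI.lift_of]
      exact key i a
    | mul p q hp hq => rw [map_mul, map_mul, map_mul, hp, hq, map_mul]
  rw [← hcomp, ← hcomp, hxy]
end

section
/- Let Γ be a graph, G a group, and ψ: A(Γ) → G a group homomorphism that is injective on the monoid A(Γ)⁺ of positive words of the right-angled Artin group A(Γ). Let U, V, W ⊆ V(Γ) be subsets each spanning a complete subgraph of Γ, and let x, y ∈ A(Γ)⁺. Then ψ is injective on the union x⟨U⟩x⁻¹ ∪ ⟨V⟩ ∪ y⁻¹⟨W⟩y ⊆ A(Γ). -/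
open scoped commutatorElement
/-- The defining relators of the right-angled Artin group `A(Γ)` of a simple graph `Γ`:
commutators of pairs of adjacent vertices. -/
def raagRels {ι : Type*} (Γ : SimpleGraph ι) : Set (FreeGroup ι) :=
  {r | ∃ u v : ι, Γ.Adj u v ∧ r = ⁅FreeGroup.of u, FreeGroup.of v⁆}

section Aux

variable {H K : Type*} [Group H] [Group K]

private lemma comm_of_closure {S : Set H} (hS : ∀ p ∈ S, ∀ q ∈ S, p * q = q * p) :
    ∀ p ∈ Submonoid.closure S, ∀ q ∈ Submonoid.closure S, p * q = q * p := by
  intro p hp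
  induction hp using Submonoid.closure_induction with
  | mem a ha =>
    intro q hq
    induction hq using Submonoid.closure_induction with
    | mem b hb => exact hS a ha b hb
    | one => simp
    | mul b c _ _ ihb ihc => rw [← mul_assoc, ihb, mul_assoc, ihc, ← mul_assoc]
  | one => intro q hq; simp
  | mul a b _ _ iha ihb =>
    intro q hq
    rw [mul_assoc, ihb q hq, ← mul_assoc, iha q hq, mul_assoc]

private lemma rep_of_mem_closure {S : Set H} (hS : ∀ p ∈ S, ∀ q ∈ S, p * q = q * p)
    {g : H} (hg : g ∈ Subgroup.closure S) :
    ∃ a b, a ∈ Submonoid.closure S ∧ b ∈ Submonoid.closure S ∧ g = a * b⁻¹ := by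
  induction hg using Subgroup.closure_induction with
  | mem s hs => exact ⟨s, 1, Submonoid.subset_closure hs, one_mem _, by simp⟩
  | one => exact ⟨1, 1, one_mem _, one_mem _, by simp⟩
  | mul p q hp hq ihp ihq =>
    obtain ⟨a, b, ha, hb, rfl⟩ := ihp
    obtain ⟨c, d, hc, hd, rfl⟩ := ihq
    refine ⟨a * c, b * d, mul_mem ha hc, mul_mem hb hd, ?_⟩
    have hbc : Commute b⁻¹ c := (Commute.inv_left (comm_of_closure hS b hb c hc))
    have hbd : Commute b⁻¹ d⁻¹ :=
      (Commute.inv_left (Commute.inv_right (comm_of_closure hS b hb d hd)))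
    calc a * b⁻¹ * (c * d⁻¹) = a * (b⁻¹ * c) * d⁻¹ := by group
      _ = a * (c * b⁻¹) * d⁻¹ := by rw [hbc.eq]
      _ = a * c * (b⁻¹ * d⁻¹) := by group
      _ = a * c * (d⁻¹ * b⁻¹) := by rw [hbd.eq]
      _ = a * c * (b * d)⁻¹ := by rw [mul_inv_rev]
  | inv p hp ihp =>
    obtain ⟨a, b, ha, hb, rfl⟩ := ihp
    exact ⟨b, a, hb, ha, by group⟩

/-- The key cancellation lemma: if `ψ` is injective on a submonoid `M` and
`s, t, a, b, c, d ∈ M` with `c d = d c`, then `ψ (s a b⁻¹ s⁻¹) = ψ (t⁻¹ c d⁻¹ t)`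
forces equality of the arguments. -/
private lemma key {ψ : H →* K} {M : Submonoid H}
    (hψ : Set.InjOn ψ (M : Set H))
    {s t a b c d : H} (hs : s ∈ M) (ht : t ∈ M) (ha : a ∈ M) (hb : b ∈ M)
    (hc : c ∈ M) (hd : d ∈ M) (hcd : c * d = d * c)
    (h : ψ (s * (a * b⁻¹) * s⁻¹) = ψ (t⁻¹ * (c * d⁻¹) * t)) :
    s * (a * b⁻¹) * s⁻¹ = t⁻¹ * (c * d⁻¹) * t := by
  have hcdK : ψ c * ψ d = ψ d * ψ c := by rw [← map_mul, ← map_mul, hcd]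
  have hG : ψ d * ψ c * (ψ d)⁻¹ = ψ c := by
    rw [show ψ d * ψ c = ψ c * ψ d from hcdK.symm]; group
  simp only [map_mul, map_inv] at h
  have e1 : ψ (d * (t * s * a)) = ψ (c * (t * s * b)) := by
    simp only [map_mul]
    calc ψ d * (ψ t * ψ s * ψ a)
        = ψ d * ψ t * (ψ s * (ψ a * (ψ b)⁻¹) * (ψ s)⁻¹) * (ψ s * ψ b) := by group
      _ = ψ d * ψ t * ((ψ t)⁻¹ * (ψ c * (ψ d)⁻¹) * ψ t) * (ψ s * ψ b) := by rw [h]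
      _ = ψ d * ψ c * (ψ d)⁻¹ * (ψ t * (ψ s * ψ b)) := by group
      _ = ψ c * (ψ t * (ψ s * ψ b)) := by rw [hG]
      _ = ψ c * (ψ t * ψ s * ψ b) := by group
  have hmem1 : d * (t * s * a) ∈ M := mul_mem hd (mul_mem (mul_mem ht hs) ha)
  have hmem2 : c * (t * s * b) ∈ M := mul_mem hc (mul_mem (mul_mem ht hs) hb)
  have E : d * (t * s * a) = c * (t * s * b) := hψ hmem1 hmem2 e1
  have hdc : d⁻¹ * c = c * d⁻¹ := by
    have : Commute c d := hcd
    exact this.inv_right.eq.symm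
  calc s * (a * b⁻¹) * s⁻¹
      = t⁻¹ * (d⁻¹ * (d * (t * s * a)) * b⁻¹) * s⁻¹ := by group
    _ = t⁻¹ * (d⁻¹ * (c * (t * s * b)) * b⁻¹) * s⁻¹ := by rw [E]
    _ = t⁻¹ * (d⁻¹ * c) * t := by group
    _ = t⁻¹ * (c * d⁻¹) * t := by rw [hdc]

end Aux

/-- Let `ψ : A(Γ) → G` be a homomorphism injective on the monoid `A(Γ)⁺` of positive
words.  If `U, V, W ⊆ V(Γ)` span complete subgraphs and `x, y ∈ A(Γ)⁺`, then `ψ` is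
injective on `x⟨U⟩x⁻¹ ∪ ⟨V⟩ ∪ y⁻¹⟨W⟩y`. -/
theorem raag_injective_on_union {ι G : Type*} [Group G] (Γ : SimpleGraph ι)
    (ψ : PresentedGroup (raagRels Γ) →* G)
    (hψ : Set.InjOn ψ
      (Submonoid.closure (Set.range (PresentedGroup.of : ι → PresentedGroup (raagRels Γ))) : Set (PresentedGroup (raagRels Γ))))
    (U V W : Set ι)
    (hU : ∀ u ∈ U, ∀ v ∈ U, u ≠ v → Γ.Adj u v)
    (hV : ∀ u ∈ V, ∀ v ∈ V, u ≠ v → Γ.Adj u v)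
    (hW : ∀ u ∈ W, ∀ v ∈ W, u ≠ v → Γ.Adj u v)
    (x y : PresentedGroup (raagRels Γ))
    (hx : x ∈ Submonoid.closure (Set.range (PresentedGroup.of : ι → PresentedGroup (raagRels Γ))))
    (hy : y ∈ Submonoid.closure (Set.range (PresentedGroup.of : ι → PresentedGroup (raagRels Γ)))) :
    Set.InjOn ψ
      ((fun g => x * g * x⁻¹) '' (Subgroup.closure ((PresentedGroup.of : ι → PresentedGroup (raagRels Γ)) '' U) : Set (PresentedGroup (raagRels Γ))) ∪
        (Subgroup.closure ((PresentedGroup.of : ι → PresentedGroup (raagRels Γ)) '' V) : Set (PresentedGroup (raagRels Γ))) ∪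
        (fun g => y⁻¹ * g * y) '' (Subgroup.closure ((PresentedGroup.of : ι → PresentedGroup (raagRels Γ)) '' W) : Set (PresentedGroup (raagRels Γ)))) := by
  set M : Submonoid (PresentedGroup (raagRels Γ)) :=
    Submonoid.closure (Set.range (PresentedGroup.of : ι → PresentedGroup (raagRels Γ))) with hM
  -- generators of a complete subgraph pairwise commute
  have hgencomm : ∀ (T : Set ι), (∀ u ∈ T, ∀ v ∈ T, u ≠ v → Γ.Adj u v) →
      ∀ p ∈ (PresentedGroup.of : ι → PresentedGroup (raagRels Γ)) '' T,
      ∀ q ∈ (PresentedGroup.of : ι → PresentedGroup (raagRels Γ)) '' T, p * q = q * p := by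
    rintro T hT p ⟨u, hu, rfl⟩ q ⟨v, hv, rfl⟩
    rcases eq_or_ne u v with rfl | huv
    · rfl
    · have hadj : Γ.Adj u v := hT u hu v hv huv
      have hrel : ⁅FreeGroup.of u, FreeGroup.of v⁆ ∈ raagRels Γ := ⟨u, v, hadj, rfl⟩
      have h1 : ⁅(PresentedGroup.of u : PresentedGroup (raagRels Γ)), PresentedGroup.of v⁆ = (1 : PresentedGroup (raagRels Γ)) := by
        have : (PresentedGroup.mk (raagRels Γ)) ⁅FreeGroup.of u, FreeGroup.of v⁆ = 1 :=
          (QuotientGroup.eq_one_iff _).mpr (Subgroup.subset_normalClosure hrel)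
        rwa [map_commutatorElement] at this
      exact (commutatorElement_eq_one_iff_commute.mp h1).eq
  -- representation of elements of ⟨T⟩ as a * b⁻¹ with a, b positive and commuting
  have rep : ∀ (T : Set ι), (∀ u ∈ T, ∀ v ∈ T, u ≠ v → Γ.Adj u v) →
      ∀ g ∈ Subgroup.closure ((PresentedGroup.of : ι → PresentedGroup (raagRels Γ)) '' T),
      ∃ a b, a ∈ M ∧ b ∈ M ∧ a * b = b * a ∧ g = a * b⁻¹ := by
    intro T hT g hg
    obtain ⟨a, b, ha, hb, rfl⟩ := rep_of_mem_closure (hgencomm T hT) hg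
    have hle : Submonoid.closure ((PresentedGroup.of : ι → PresentedGroup (raagRels Γ)) '' T) ≤ M :=
      Submonoid.closure_mono (Set.image_subset_range _ _)
    exact ⟨a, b, hle ha, hle hb, comm_of_closure (hgencomm T hT) a ha b hb, rfl⟩
  intro g₁ hg₁ g₂ hg₂ heq
  -- convert membership in the union into a normal form
  have toRep : ∀ g, g ∈
      ((fun g => x * g * x⁻¹) '' (Subgroup.closure ((PresentedGroup.of : ι → PresentedGroup (raagRels Γ)) '' U) : Set (PresentedGroup (raagRels Γ))) ∪
        (Subgroup.closure ((PresentedGroup.of : ι → PresentedGroup (raagRels Γ)) '' V) : Set (PresentedGroup (raagRels Γ))) ∪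
        (fun g => y⁻¹ * g * y) '' (Subgroup.closure ((PresentedGroup.of : ι → PresentedGroup (raagRels Γ)) '' W) : Set (PresentedGroup (raagRels Γ)))) →
      ∃ a b, a ∈ M ∧ b ∈ M ∧ a * b = b * a ∧
        (g = x * (a * b⁻¹) * x⁻¹ ∨ g = a * b⁻¹ ∨ g = y⁻¹ * (a * b⁻¹) * y) := by
    rintro g ((⟨h0, hh0, rfl⟩ | hg) | ⟨h0, hh0, rfl⟩)
    · obtain ⟨a, b, ha, hb, hab, rfl⟩ := rep U hU h0 hh0
      exact ⟨a, b, ha, hb, hab, Or.inl rfl⟩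
    · obtain ⟨a, b, ha, hb, hab, rfl⟩ := rep V hV g hg
      exact ⟨a, b, ha, hb, hab, Or.inr (Or.inl rfl)⟩
    · obtain ⟨a, b, ha, hb, hab, rfl⟩ := rep W hW h0 hh0
      exact ⟨a, b, ha, hb, hab, Or.inr (Or.inr rfl)⟩
  obtain ⟨a, b, ha, hb, hab, hg1⟩ := toRep g₁ hg₁
  obtain ⟨c, d, hc, hd, hcd, hg2⟩ := toRep g₂ hg₂
  have h1M : (1 : PresentedGroup (raagRels Γ)) ∈ M := one_mem M
  -- a helper for the "same conjugator" cases
  have plain : ∀ a b c d : PresentedGroup (raagRels Γ), a ∈ M → b ∈ M → c ∈ M → d ∈ M →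
      c * d = d * c → ψ (a * b⁻¹) = ψ (c * d⁻¹) → a * b⁻¹ = c * d⁻¹ := by
    intro a b c d ha hb hc hd hcd h
    have := key hψ h1M h1M ha hb hc hd hcd (by simpa using h)
    simpa using this
  rcases hg1 with rfl | rfl | rfl <;> rcases hg2 with rfl | rfl | rfl
  · -- both x-conjugates
    have h' : ψ (a * b⁻¹) = ψ (c * d⁻¹) := by
      simp only [map_mul, map_inv] at heq
      have := mul_left_cancel (mul_right_cancel heq)
      simpa only [map_mul, map_inv] using this
    rw [plain a b c d ha hb hc hd hcd h']
  · -- x-conjugate vs plain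
    have := key hψ hx h1M ha hb hc hd hcd (by simpa using heq)
    simpa using this
  · -- x-conjugate vs y⁻¹-conjugate
    exact key hψ hx hy ha hb hc hd hcd heq
  · -- plain vs x-conjugate
    have := key hψ hx h1M hc hd ha hb hab (by simpa using heq.symm)
    simp only [inv_one, one_mul, mul_one] at this
    exact this.symm
  · -- both plain
    exact plain a b c d ha hb hc hd hcd heq
  · -- plain vs y⁻¹-conjugate
    have := key hψ h1M hy ha hb hc hd hcd (by simpa using heq)
    simpa using this
  · -- y⁻¹-conjugate vs x-conjugate
    exact (key hψ hx hy hc hd ha hb hab heq.symm).symm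
  · -- y⁻¹-conjugate vs plain
    have := key hψ h1M hy hc hd ha hb hab (by simpa using heq.symm)
    have := this.symm
    simpa using this
  · -- both y⁻¹-conjugates
    have h' : ψ (a * b⁻¹) = ψ (c * d⁻¹) := by
      simp only [map_mul, map_inv] at heq
      have := mul_left_cancel (mul_right_cancel heq)
      simpa only [map_mul, map_inv] using this
    rw [plain a b c d ha hb hc hd hcd h']
end
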